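/- arXiv:0905.1624 — 11 statements merged into one kernel-verified Lean document; each statement's English description precedes it below -/
import Mathlib

section
/- Let G be a group and let X be a finite subset of G that is closed under conjugation by elements of G, such that every element of X has finite order. Then the subgroup generated by X is finite. -/
/-- Gather all occurrences of `x` in a word over `X` at the front,
conjugating the remaining letters (which stay inside `X`). -/
lemma dicman_gather {G : Type*} [Group G] [DecidableEq G] (X : Set G)
    (hconj : ∀ g : G, ∀ x ∈ X, g⁻¹ * x * g ∈ X) (x : G) :
    ∀ l : List G, (∀ a ∈ l, a ∈ X) →
      ∃ l' : List G, (∀ a ∈ l', a ∈ X) ∧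
        l'.length + l.count x = l.length ∧ l.prod = x ^ l.count x * l'.prod := by
  intro l
  induction l with
  | nil => intro _; exact ⟨[], by simp, by simp, by simp⟩
  | cons a t ih =>
    intro hmem
    obtain ⟨l', hl'X, hlen, hprod⟩ := ih (fun b hb => hmem b (List.mem_cons_of_mem _ hb))
    by_cases hax : a = x
    · subst hax
      refine ⟨l', hl'X, ?_, ?_⟩
      · rw [List.count_cons_self, List.length_cons]
        omega
      · rw [List.prod_cons, hprod, List.count_cons_self, pow_succ', mul_assoc]
    · set c := t.count x with hc
      have hcount : (a :: t).count x = c := by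
        rw [List.count_cons_of_ne hax]
      have haX : a ∈ X := hmem a List.mem_cons_self
      have hb : (x ^ c)⁻¹ * a * x ^ c ∈ X := hconj (x ^ c) a haX
      refine ⟨((x ^ c)⁻¹ * a * x ^ c) :: l', ?_, ?_, ?_⟩
      · intro b hbmem
        rcases List.mem_cons.mp hbmem with h | h
        · exact h ▸ hb
        · exact hl'X b h
      · simp only [List.length_cons, hcount]
        omega
      · rw [List.prod_cons, hprod, List.prod_cons, hcount]
        group

/-- Any word over `X` can be shortened to length at most
`∑ x ∈ X, (orderOf x - 1)` without changing the product. -/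
lemma dicman_shorten {G : Type*} [Group G] [DecidableEq G] (X : Set G) (hfin : X.Finite)
    (hconj : ∀ g : G, ∀ x ∈ X, g⁻¹ * x * g ∈ X)
    (hord : ∀ x ∈ X, IsOfFinOrder x) :
    ∀ l : List G, (∀ a ∈ l, a ∈ X) →
      ∃ l' : List G, (∀ a ∈ l', a ∈ X) ∧
        l'.length ≤ ∑ x ∈ hfin.toFinset, (orderOf x - 1) ∧ l'.prod = l.prod := by
  classical
  set N := ∑ x ∈ hfin.toFinset, (orderOf x - 1) with hN
  have main : ∀ n : ℕ, ∀ l : List G, l.length ≤ n → (∀ a ∈ l, a ∈ X) →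
      ∃ l' : List G, (∀ a ∈ l', a ∈ X) ∧
        l'.length ≤ N ∧ l'.prod = l.prod := by
    intro n
    induction n with
    | zero =>
      intro l hl hlX
      exact ⟨l, hlX, by omega, rfl⟩
    | succ n ih =>
      intro l hl hlX
      by_cases hlen : l.length ≤ N
      · exact ⟨l, hlX, hlen, rfl⟩
      · push_neg at hlen
        -- pigeonhole: some x ∈ X appears at least orderOf x times
        have hsub : l.toFinset ⊆ hfin.toFinset := by
          intro a ha
          simp only [Set.Finite.mem_toFinset]
          exact hlX a (List.mem_toFinset.mp ha)
        have hlength : l.length = ∑ x ∈ hfin.toFinset, l.count x := by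
          rw [← List.sum_toFinset_count_eq_length]
          exact Finset.sum_subset hsub (fun b _ hb =>
            List.count_eq_zero.mpr (fun h => hb (List.mem_toFinset.mpr h)))
        have hex : ∃ x ∈ hfin.toFinset, orderOf x ≤ l.count x := by
          by_contra hcon
          push_neg at hcon
          have : l.length ≤ N := by
            rw [hlength, hN]
            exact Finset.sum_le_sum (fun x hx => by
              have := hcon x hx; omega)
          omega
        obtain ⟨x, hxF, hxc⟩ := hex
        have hxX : x ∈ X := (Set.Finite.mem_toFinset hfin).mp hxF
        have hordx : 0 < orderOf x := (hord x hxX).orderOf_pos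
        obtain ⟨l', hl'X, hl'len, hl'prod⟩ := dicman_gather X hconj x l hlX
        set c := l.count x with hc
        -- replace x ^ c by x ^ (c % orderOf x)
        set r := c % orderOf x with hr
        have hxpow : x ^ c = x ^ r := (pow_mod_orderOf x c).symm ▸ rfl
        have hrlt : r < c := lt_of_lt_of_le (Nat.mod_lt _ hordx) hxc
        set m : List G := List.replicate r x ++ l' with hm
        have hmX : ∀ a ∈ m, a ∈ X := by
          intro a ha
          rcases List.mem_append.mp ha with h | h
          · rw [List.eq_of_mem_replicate h]; exact hxX
          · exact hl'X a h
        have hmlen : m.length < l.length := by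
          simp only [hm, List.length_append, List.length_replicate]
          omega
        have hmprod : m.prod = l.prod := by
          rw [hm, List.prod_append, List.prod_replicate, hl'prod, hxpow]
        obtain ⟨l'', h1, h2, h3⟩ := ih m (by omega) hmX
        exact ⟨l'', h1, h2, h3.trans hmprod⟩
  exact fun l => main l.length l le_rfl

/-- Dicman's lemma: a finite conjugation-closed set of torsion elements
generates a finite subgroup. -/
theorem dicman {G : Type*} [Group G] (X : Set G) (hfin : X.Finite)
    (hconj : ∀ g : G, ∀ x ∈ X, g⁻¹ * x * g ∈ X)
    (hord : ∀ x ∈ X, IsOfFinOrder x) :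
    ((Subgroup.closure X : Subgroup G) : Set G).Finite := by
  classical
  -- Step 1: the subgroup closure coincides with the monoid closure.
  have hinv : X⁻¹ ⊆ (Submonoid.closure X : Set G) := by
    intro a ha
    rw [Set.mem_inv] at ha
    have haX : a⁻¹ ∈ X := ha
    have hmem : a⁻¹ ∈ Submonoid.closure X := Submonoid.subset_closure haX
    have hpos : 0 < orderOf a⁻¹ := (hord _ haX).orderOf_pos
    have : a = (a⁻¹) ^ (orderOf a⁻¹ - 1) := by
      have h1 : (a⁻¹) ^ (orderOf a⁻¹) = 1 := pow_orderOf_eq_one _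
      have h2 : (a⁻¹) ^ (orderOf a⁻¹ - 1) * a⁻¹ = 1 := by
        rw [← pow_succ, Nat.sub_add_cancel hpos, h1]
      calc a = 1 * a := (one_mul a).symm
        _ = ((a⁻¹) ^ (orderOf a⁻¹ - 1) * a⁻¹) * a := by rw [h2]
        _ = (a⁻¹) ^ (orderOf a⁻¹ - 1) := by rw [mul_assoc, inv_mul_cancel, mul_one]
    rw [this]
    exact pow_mem hmem _
  have hset : ((Subgroup.closure X : Subgroup G) : Set G)
      = (Submonoid.closure X : Set G) := by
    have h1 : (Subgroup.closure X).toSubmonoid = Submonoid.closure (X ∪ X⁻¹) :=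
      Subgroup.closure_toSubmonoid X
    have h2 : Submonoid.closure (X ∪ X⁻¹) = Submonoid.closure X := by
      refine le_antisymm ?_ (Submonoid.closure_mono (Set.subset_union_left))
      rw [Submonoid.closure_le]
      exact Set.union_subset Submonoid.subset_closure hinv
    have : ((Subgroup.closure X : Subgroup G) : Set G)
        = ((Subgroup.closure X).toSubmonoid : Set G) := rfl
    rw [this, h1, h2]
  rw [hset]
  -- Step 2: the monoid closure is covered by products of bounded-length words.
  set N := ∑ x ∈ hfin.toFinset, (orderOf x - 1) with hN
  have : Finite X := hfin.to_subtype
  have hfinlists : {l : List X | l.length ≤ N}.Finite := List.finite_length_le X N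
  have himage : (Submonoid.closure X : Set G) ⊆
      (fun l : List X => (l.map Subtype.val).prod) '' {l : List X | l.length ≤ N} := by
    intro g hg
    obtain ⟨l, hlX, hlprod⟩ := Submonoid.exists_list_of_mem_closure hg
    obtain ⟨l', hl'X, hl'len, hl'prod⟩ := dicman_shorten X hfin hconj hord l hlX
    refine ⟨l'.attach.map (fun a => ⟨a.1, hl'X a.1 a.2⟩), by simpa using hl'len, ?_⟩
    simp only [List.map_map]
    have : (l'.attach.map ((fun a : X => (a : G)) ∘ fun a => (⟨a.1, hl'X a.1 a.2⟩ : X)))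
        = l' := by
      simp [Function.comp]
    rw [this, hl'prod, hlprod]
  exact (hfinlists.image _).subset himage
end

section
/- Let G be a group and x ∈ G. Then x lies in some finite normal subgroup of G if and only if x has finite order and the centralizer of x in G has finite index in G. -/
def ResiduallyFinite (G : Type*) [Group G] : Prop :=
  sInf {N : Subgroup G | N.Normal ∧ N.FiniteIndex} = ⊥

def JustInfinite (G : Type*) [Group G] : Prop :=
  Infinite G ∧ ResiduallyFinite G ∧
    ∀ N : Subgroup G, N.Normal → N ≠ ⊥ → N.FiniteIndex

def FinRadical (G : Type*) [Group G] : Set G :=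
  { x | ∃ N : Subgroup G, N.Normal ∧ (N : Set G).Finite ∧ x ∈ N }

def VirtuallyAbelian (G : Type*) [Group G] : Prop :=
  ∃ H : Subgroup G, H.FiniteIndex ∧ ∀ a b : H, a * b = b * a

def conjugatesSet (G : Type*) [Group G] (B : Subgroup G) : Set (Subgroup G) :=
  { C | ∃ g : G, B.map (MulAut.conj g).toMonoidHom = C }

def IsBasal (G : Type*) [Group G] (B : Subgroup G) : Prop :=
  B ≠ ⊥ ∧ (conjugatesSet G B).Finite ∧
  (∀ C ∈ conjugatesSet G B, ∀ D ∈ conjugatesSet G B, C ≠ D →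
      C ⊓ D = ⊥ ∧ ∀ x ∈ C, ∀ y ∈ D, Commute x y) ∧
  iSupIndep (fun C : conjugatesSet G B => (C : Subgroup G)) ∧
  (⨆ C ∈ conjugatesSet G B, C) = Subgroup.normalClosure (B : Set G)

open Subgroup MulAction
open scoped commutatorElement

-- auxiliary: commutator unchanged by central factors
theorem commElt_mul_center {H : Type*} [Group H] {z : H} (hz : z ∈ Subgroup.center H)
    (a b : H) : ⁅a * z, b⁆ = ⁅a, b⁆ := by
  have hc : ∀ w : H, z * w = w * z := fun w => (Subgroup.mem_center_iff.mp hz w).symm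
  simp only [commutatorElement_def, mul_inv_rev]
  rw [mul_assoc a z b, hc b]
  group

theorem commElt_center_right {H : Type*} [Group H] {z : H} (hz : z ∈ Subgroup.center H)
    (a b : H) : ⁅a, b * z⁆ = ⁅a, b⁆ := by
  have hc : ∀ w : H, z * w = w * z := fun w => (Subgroup.mem_center_iff.mp hz w).symm
  simp only [commutatorElement_def, mul_inv_rev]
  rw [show a * (b * z) * a⁻¹ * (z⁻¹ * b⁻¹) = a * b * (z * a⁻¹) * (z⁻¹ * b⁻¹) from by group,
    hc a⁻¹]
  group

theorem finite_commutatorSet_of_center {H : Type*} [Group H]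
    [(Subgroup.center H).FiniteIndex] : Finite (commutatorSet H) := by
  have : Finite (H ⧸ Subgroup.center H) := inferInstance
  have hsub : commutatorSet H ⊆ Set.range (fun p : (H ⧸ Subgroup.center H) × (H ⧸ Subgroup.center H) =>
      ⁅p.1.out, p.2.out⁆) := by
    rintro g ⟨a, b, rfl⟩
    refine ⟨(QuotientGroup.mk a, QuotientGroup.mk b), ?_⟩
    have ha : (QuotientGroup.mk a : H ⧸ Subgroup.center H).out⁻¹ * a ∈ Subgroup.center H := by
      rw [← QuotientGroup.eq]
      simp [Quotient.out_eq]
    have hb : (QuotientGroup.mk b : H ⧸ Subgroup.center H).out⁻¹ * b ∈ Subgroup.center H := by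
      rw [← QuotientGroup.eq]
      simp [Quotient.out_eq]
    set a' := (QuotientGroup.mk a : H ⧸ Subgroup.center H).out
    set b' := (QuotientGroup.mk b : H ⧸ Subgroup.center H).out
    have h1 : a = a' * (a'⁻¹ * a) := by group
    have h2 : b = b' * (b'⁻¹ * b) := by group
    dsimp only
    conv_rhs => rw [h1, h2]
    rw [commElt_mul_center ha, commElt_center_right hb]
  exact (Set.finite_range _).subset hsub |>.to_subtype

theorem mem_finRadical_iff' {G : Type*} [Group G] (x : G) :
    (∃ N : Subgroup G, N.Normal ∧ (N : Set G).Finite ∧ x ∈ N) ↔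
      IsOfFinOrder x ∧ (Subgroup.centralizer {x}).FiniteIndex := by
  have hidx : (Subgroup.centralizer {x}).index = (orbit (ConjAct G) x).ncard := by
    rw [Subgroup.centralizer_eq_comap_stabilizer]
    exact (Subgroup.index_comap_of_surjective _ ConjAct.toConjAct.surjective).trans
      (MulAction.index_stabilizer _ _)
  constructor
  · rintro ⟨N, hN, hfin, hxN⟩
    haveI : Finite N := hfin.to_subtype
    constructor
    · have := isTorsion_of_finite (G := N) ⟨x, hxN⟩
      exact N.subtype.isOfFinOrder this
    · constructor
      rw [hidx]
      have horb : orbit (ConjAct G) x ⊆ (N : Set G) := by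
        rintro s ⟨g, rfl⟩
        show (g • x) ∈ (N : Set G)
        rw [ConjAct.smul_def]
        exact hN.conj_mem x hxN (ConjAct.ofConjAct g)
      have hfin' : (orbit (ConjAct G) x).Finite := hfin.subset horb
      exact ((Set.ncard_pos hfin').mpr ⟨x, mem_orbit_self x⟩).ne'
  · rintro ⟨hx, hc⟩
    -- the conjugacy class of x is finite
    have hSfin : (orbit (ConjAct G) x).Finite := by
      rw [← Set.not_infinite]
      intro h
      exact hc.index_ne_zero (by rw [hidx, h.ncard])
    set S : Set G := orbit (ConjAct G) x with hS
    -- S is the set of conjugates of x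
    have hSconj : S = Group.conjugatesOfSet {x} := by
      ext y
      simp only [hS, ConjAct.mem_orbit_conjAct, Group.mem_conjugatesOfSet_iff,
        Set.mem_singleton_iff]
      constructor
      · exact fun h => ⟨x, rfl, h.symm⟩
      · rintro ⟨a, rfl, h⟩; exact h.symm
    set N : Subgroup G := Subgroup.closure S with hNdef
    have hNnc : N = Subgroup.normalClosure {x} := by rw [hNdef, hSconj]; rfl
    haveI hNnormal : N.Normal := hNnc ▸ Subgroup.normalClosure_normal
    have hxS : x ∈ S := mem_orbit_self x
    have hxN : x ∈ N := Subgroup.subset_closure hxS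
    -- every element of S has finite order
    have hStor : ∀ s ∈ S, IsOfFinOrder s := by
      rintro s ⟨g, rfl⟩
      show IsOfFinOrder (g • x)
      rw [ConjAct.smul_def]
      exact ((MulAut.conj (ConjAct.ofConjAct g)).toMonoidHom).isOfFinOrder hx
    -- the normal core of the centralizer centralizes N
    have hcore : ∀ c ∈ (Subgroup.centralizer {x}).normalCore, ∀ n ∈ N, c * n = n * c := by
      intro c hcmem n hn
      have hcS : ∀ s ∈ S, c * s = s * c := by
        rintro s ⟨g, rfl⟩
        show c * (g • x) = (g • x) * c
        rw [ConjAct.smul_def]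
        set g' : G := ConjAct.ofConjAct g
        have h1 : g'⁻¹ * c * g' ∈ Subgroup.centralizer {x} := by
          have := hcmem g'⁻¹
          simpa using this
        have h2 : x * (g'⁻¹ * c * g') = (g'⁻¹ * c * g') * x :=
          Subgroup.mem_centralizer_iff.mp h1 x rfl
        calc c * (g' * x * g'⁻¹) = g' * ((g'⁻¹ * c * g') * x) * g'⁻¹ := by group
          _ = g' * (x * (g'⁻¹ * c * g')) * g'⁻¹ := by rw [h2]
          _ = (g' * x * g'⁻¹) * c := by group
      -- n lies in the centralizer of c
      have : N ≤ Subgroup.centralizer {c} := by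
        rw [hNdef]
        apply Subgroup.closure_le _ |>.mpr
        intro s hs
        exact Subgroup.mem_centralizer_iff.mpr (by rintro y rfl; exact hcS s hs)
      exact Subgroup.mem_centralizer_iff.mp (this hn) c rfl
    -- N is finitely generated
    haveI hNfg : Group.FG N := (Group.fg_iff_subgroup_fg N).mpr ⟨hSfin.toFinset, by
      rw [Set.Finite.coe_toFinset]⟩
    -- the center of N has finite index
    haveI : ((Subgroup.centralizer {x}).normalCore.subgroupOf N).FiniteIndex :=
      Subgroup.instFiniteIndex_subgroupOf _ _
    haveI hZfi : (Subgroup.center N).FiniteIndex := by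
      refine Subgroup.finiteIndex_of_le (H := (Subgroup.centralizer {x}).normalCore.subgroupOf N) ?_
      rintro ⟨n, hnN⟩ hn
      rw [Subgroup.mem_subgroupOf] at hn
      rw [Subgroup.mem_center_iff]
      rintro ⟨m, hmN⟩
      exact Subtype.ext (hcore n hn m hmN).symm
    haveI : Finite (commutatorSet N) := finite_commutatorSet_of_center
    haveI : Finite (commutator N) := inferInstance
    -- the abelianization of N is torsion
    have habtor : ∀ n : N, IsOfFinOrder (Abelianization.of n) := by
      intro n
      have hmem : n ∈ Subgroup.closure (((↑) : Subgroup.closure S → G) ⁻¹' S) := by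
        rw [Subgroup.closure_closure_coe_preimage]; trivial
      refine Subgroup.closure_induction (fun m hm => ?_) ?_ (fun a b _ _ ha hb => ?_)
        (fun a _ ha => ?_) hmem
      · exact Abelianization.of.isOfFinOrder (Submonoid.isOfFinOrder_coe.mp (hStor _ hm))
      · rw [map_one]; exact IsOfFinOrder.one
      · rw [map_mul]; exact ha.mul hb
      · rw [map_inv]; exact ha.inv
    have htor : Monoid.IsTorsion (Abelianization N) := by
      intro a
      obtain ⟨n, rfl⟩ := QuotientGroup.mk_surjective (a : N ⧸ commutator N)
      exact habtor n
    haveI : Group.FG (Abelianization N) := QuotientGroup.fg (commutator N)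
    haveI : Finite (Abelianization N) := CommGroup.finite_of_fg_torsion _ htor
    haveI : Finite (N ⧸ commutator N) := ‹Finite (Abelianization N)›
    haveI : Finite N := by
      have e : (N : Type _) ≃ (N ⧸ commutator N) × (commutator N) :=
        Subgroup.groupEquivQuotientProdSubgroup
      exact Finite.of_equiv _ e.symm
    exact ⟨N, hNnormal, Set.finite_coe_iff.mp inferInstance, hxN⟩

/-- An element lies in some finite normal subgroup iff it has finite order
and its centralizer has finite index. -/
theorem mem_finRadical_iff {G : Type*} [Group G] (x : G) :
    x ∈ FinRadical G ↔
      IsOfFinOrder x ∧ (Subgroup.centralizer {x}).FiniteIndex := mem_finRadical_iff' x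
end

section
/- Let G be a residually finite group with trivial finite radical, and let H be a finite-index subgroup of G. If H is just infinite, then G is just infinite. -/
/-- If G is residually finite with trivial finite radical and has a just
infinite subgroup of finite index, then G is just infinite. -/
theorem justInfinite_of_finiteIndex_justInfinite {G : Type*} [Group G]
    (hrf : ResiduallyFinite G) (hfr : FinRadical G = {1})
    (H : Subgroup G) (hH : H.FiniteIndex) (hji : JustInfinite H) :
    JustInfinite G := by
  obtain ⟨hinf, _, hnorm⟩ := hji
  refine ⟨Infinite.of_injective (Subtype.val : H → G) Subtype.val_injective, hrf, ?_⟩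
  intro N hN hNbot
  haveI := hN
  haveI := hH
  by_cases hb : N.subgroupOf H = ⊥
  · -- N ∩ H = ⊥, so N injects into G ⧸ H, hence N is finite
    exfalso
    have hinj : Function.Injective (fun n : N => ((n : G) : G ⧸ H)) := by
      intro a b hab
      have hin : (a : G)⁻¹ * (b : G) ∈ H := by
        rwa [QuotientGroup.eq] at hab
      have hNmem : (a : G)⁻¹ * (b : G) ∈ N := N.mul_mem (N.inv_mem a.2) b.2
      have hmem : (⟨(a : G)⁻¹ * (b : G), hin⟩ : H) ∈ N.subgroupOf H := hNmem
      rw [hb, Subgroup.mem_bot] at hmem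
      have h1 : (a : G)⁻¹ * (b : G) = 1 := by
        simpa using congrArg Subtype.val hmem
      ext
      exact (inv_mul_eq_one.mp h1)
    haveI : Finite (G ⧸ H) := H.finite_quotient_of_finiteIndex
    haveI : Finite N := Finite.of_injective _ hinj
    have hfin : (N : Set G).Finite := (N : Set G).toFinite
    -- N ⊆ FinRadical G = {1}
    apply hNbot
    ext x
    simp only [Subgroup.mem_bot]
    constructor
    · intro hx
      have : x ∈ FinRadical G := ⟨N, hN, hfin, hx⟩
      rwa [hfr] at this
    · rintro rfl; exact N.one_mem
  · have hfi : (N.subgroupOf H).FiniteIndex := hnorm _ (hN.subgroupOf H) hb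
    have h1 : (N ⊓ H).relIndex H = (N.subgroupOf H).index := by
      rw [Subgroup.relIndex, Subgroup.inf_subgroupOf_right]
    have h2 : (N ⊓ H).relIndex H * H.index = (N ⊓ H).index :=
      Subgroup.relIndex_mul_index inf_le_right
    have hne : (N ⊓ H).index ≠ 0 := by
      rw [← h2, h1]
      exact mul_ne_zero hfi.index_ne_zero hH.index_ne_zero
    have hdvd : N.index ∣ (N ⊓ H).index := Subgroup.index_dvd_of_le inf_le_left
    exact ⟨fun h => hne (by simpa [h] using Nat.eq_zero_of_zero_dvd (h ▸ hdvd))⟩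
end

section
/- Let G be a residually finite group with trivial finite radical, and let H be a finite-index subgroup of G. If every finite-index subgroup of H is just infinite, then every finite-index subgroup of G is just infinite. -/
open Subgroup
open scoped commutatorElement

private lemma residuallyFinite_iff' {G : Type*} [Group G] :
    ResiduallyFinite G ↔ ∀ x : G, x ≠ 1 → ∃ N : Subgroup G, N.Normal ∧ N.FiniteIndex ∧ x ∉ N := by
  unfold ResiduallyFinite
  rw [eq_bot_iff]
  constructor
  · intro h x hx
    by_contra hc
    push_neg at hc
    apply hx
    have hxm : x ∈ sInf {N : Subgroup G | N.Normal ∧ N.FiniteIndex} := by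
      rw [Subgroup.mem_sInf]; intro N hN; exact hc N hN.1 hN.2
    simpa using h hxm
  · intro h x hx
    simp only [Subgroup.mem_bot]
    by_contra hx1
    obtain ⟨N, hN1, hN2, hN3⟩ := h x hx1
    exact hN3 (Subgroup.mem_sInf.mp hx N ⟨hN1, hN2⟩)

private lemma residuallyFinite_congr {G G' : Type*} [Group G] [Group G'] (e : G ≃* G')
    (h : ResiduallyFinite G) : ResiduallyFinite G' := by
  rw [residuallyFinite_iff'] at h ⊢
  intro x hx
  have hx' : e.symm x ≠ 1 := by
    intro h1
    apply hx
    have := congrArg e h1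
    simpa using this
  obtain ⟨N, h1, h2, h3⟩ := h (e.symm x) hx'
  refine ⟨N.comap e.symm.toMonoidHom, h1.comap _, ?_, ?_⟩
  · constructor
    rw [Subgroup.index_comap_of_surjective _ e.symm.surjective]
    exact h2.index_ne_zero
  · simpa [Subgroup.mem_comap] using h3

private lemma justInfinite_congr {G G' : Type*} [Group G] [Group G'] (e : G ≃* G')
    (h : JustInfinite G) : JustInfinite G' := by
  obtain ⟨h1, h2, h3⟩ := h
  refine ⟨e.toEquiv.infinite_iff.mp h1, residuallyFinite_congr e h2, ?_⟩
  intro N hN hNbot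
  have hN' : (N.comap e.toMonoidHom).Normal := hN.comap _
  have hbot : N.comap e.toMonoidHom ≠ ⊥ := by
    intro hc
    apply hNbot
    rw [eq_bot_iff]
    intro x hx
    have hmem : e.symm x ∈ N.comap e.toMonoidHom := by
      simp only [Subgroup.mem_comap]
      simpa using hx
    rw [hc, Subgroup.mem_bot] at hmem
    have : x = 1 := by
      have := congrArg e hmem
      simpa using this
    simpa [Subgroup.mem_bot] using this
  have hfi := h3 _ hN' hbot
  constructor
  rw [← Subgroup.index_comap_of_surjective (H := N) (f := e.toMonoidHom) e.surjective]
  exact hfi.index_ne_zero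

private lemma commutator_eq_of_central {G : Type*} [Group G] (a b z1 z2 : G)
    (hz1 : ∀ g, z1 * g = g * z1) (hz2 : ∀ g, z2 * g = g * z2) :
    ⁅a * z1, b * z2⁆ = ⁅a, b⁆ := by
  simp only [commutatorElement_def]
  calc a * z1 * (b * z2) * (a * z1)⁻¹ * (b * z2)⁻¹
      = a * (z1 * (b * z2)) * (z1⁻¹ * (a⁻¹ * (z2⁻¹ * b⁻¹))) := by group
    _ = a * ((b * z2) * z1) * (z1⁻¹ * (a⁻¹ * (z2⁻¹ * b⁻¹))) := by rw [hz1]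
    _ = a * b * (z2 * (a⁻¹ * (z2⁻¹ * b⁻¹))) := by group
    _ = a * b * ((a⁻¹ * (z2⁻¹ * b⁻¹)) * z2) := by rw [hz2]
    _ = a * b * a⁻¹ * (z2⁻¹ * (b⁻¹ * z2)) := by group
    _ = a * b * a⁻¹ * (z2⁻¹ * (z2 * b⁻¹)) := by rw [← hz2]
    _ = a * b * a⁻¹ * b⁻¹ := by group

set_option maxHeartbeats 1000000 in
private lemma dietzmann_finite {G : Type*} [Group G] (E : Subgroup G) (hEn : E.Normal)
    (hEfi : E.FiniteIndex) (x : G) (hx : IsOfFinOrder x)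
    (hcomm : ∀ g : G, ∀ e ∈ E, Commute (g * x * g⁻¹) e) :
    Finite (Subgroup.normalClosure {x} : Subgroup G) := by
  classical
  haveI := hEn
  haveI := hEfi
  set S : Set G := Group.conjugatesOfSet ({x} : Set G) with hS
  -- every element of S is a conjugate of x
  have hSconj : ∀ a ∈ S, ∃ g : G, g * x * g⁻¹ = a := by
    intro a ha
    rw [hS, Group.mem_conjugatesOfSet_iff] at ha
    obtain ⟨b, hb, hab⟩ := ha
    rw [Set.mem_singleton_iff] at hb
    subst hb
    exact isConj_iff.mp hab
  -- x commutes with E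
  have hxE : ∀ e ∈ E, Commute x e := by
    intro e he
    have := hcomm 1 e he
    simpa using this
  -- S is finite
  have hconst : ∀ (g e : G), e ∈ E → (g * e) * x * (g * e)⁻¹ = g * x * g⁻¹ := by
    intro g e he
    have h1 : e * x * e⁻¹ = x := by
      have := (hxE e he).symm.eq
      rw [this, mul_assoc, mul_inv_cancel, mul_one]
    calc (g * e) * x * (g * e)⁻¹ = g * (e * x * e⁻¹) * g⁻¹ := by group
      _ = g * x * g⁻¹ := by rw [h1]
  have hSfin : S.Finite := by
    apply Set.Finite.subset (Set.finite_range
      (fun q : G ⧸ E => Quotient.out q * x * (Quotient.out q)⁻¹))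
    intro a ha
    obtain ⟨g, hg⟩ := hSconj a ha
    refine ⟨QuotientGroup.mk g, ?_⟩
    have hmk : (QuotientGroup.mk (Quotient.out (QuotientGroup.mk g : G ⧸ E)) : G ⧸ E)
        = QuotientGroup.mk g := Quotient.out_eq _
    have he : g⁻¹ * Quotient.out (QuotientGroup.mk g : G ⧸ E) ∈ E :=
      QuotientGroup.eq.mp hmk.symm
    have hout : Quotient.out (QuotientGroup.mk g : G ⧸ E)
        = g * (g⁻¹ * Quotient.out (QuotientGroup.mk g : G ⧸ E)) := by group
    simp only []
    rw [hout, hconst g _ he, hg]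
  set W : Subgroup G := Subgroup.normalClosure {x} with hW
  have hWc : W = Subgroup.closure S := rfl
  -- the preimage of S in W generates W and is finite
  have hT : Subgroup.closure (((↑) : ↥W → G) ⁻¹' S) = ⊤ :=
    Subgroup.closure_closure_coe_preimage
  have hTfin : ((((↑) : W → G)) ⁻¹' S).Finite :=
    Set.Finite.preimage Subtype.coe_injective.injOn hSfin
  -- E ∩ W is central in W
  have hcent : E.subgroupOf W ≤ Subgroup.center W := by
    intro z hz
    rw [Subgroup.mem_subgroupOf] at hz
    rw [Subgroup.mem_center_iff]
    intro w
    have hWle : W ≤ Subgroup.centralizer {(z : G)} := by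
      refine hWc.le.trans ((Subgroup.closure_le _).mpr ?_)
      intro s hs
      rw [SetLike.mem_coe, Subgroup.mem_centralizer_iff]
      intro h hh
      rw [Set.mem_singleton_iff] at hh
      subst hh
      obtain ⟨g, hg⟩ := hSconj s hs
      rw [← hg]
      exact ((hcomm g _ hz).symm).eq
    have hmem := hWle w.2
    rw [Subgroup.mem_centralizer_iff] at hmem
    have heq : (z : G) * (w : G) = (w : G) * (z : G) := hmem _ rfl
    ext
    simpa using heq.symm
  have hZfi : (E.subgroupOf W).FiniteIndex := by
    constructor
    intro h0
    have hdvd : E.relIndex W ∣ E.index := Subgroup.relIndex_dvd_index_of_normal E W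
    have hz0 : E.relIndex W = 0 := h0
    rw [hz0] at hdvd
    exact hEfi.index_ne_zero (Nat.eq_zero_of_zero_dvd hdvd)
  haveI := hZfi
  haveI hcfi : (Subgroup.center W).FiniteIndex := Subgroup.finiteIndex_of_le hcent
  haveI : Finite (W ⧸ Subgroup.center W) := Subgroup.finite_quotient_of_finiteIndex
  -- commutatorSet W is finite
  haveI hcsfin : Finite (commutatorSet W) := by
    have hsub : commutatorSet W ⊆ Set.range
        (fun p : (W ⧸ Subgroup.center W) × (W ⧸ Subgroup.center W) =>
          ⁅Quotient.out p.1, Quotient.out p.2⁆) := by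
      rintro c ⟨a, b, rfl⟩
      refine ⟨(QuotientGroup.mk a, QuotientGroup.mk b), ?_⟩
      have hma : (QuotientGroup.mk (Quotient.out (QuotientGroup.mk a : W ⧸ Subgroup.center W))
          : W ⧸ Subgroup.center W) = QuotientGroup.mk a := Quotient.out_eq _
      have hmb : (QuotientGroup.mk (Quotient.out (QuotientGroup.mk b : W ⧸ Subgroup.center W))
          : W ⧸ Subgroup.center W) = QuotientGroup.mk b := Quotient.out_eq _
      have hza : a⁻¹ * Quotient.out (QuotientGroup.mk a : W ⧸ Subgroup.center W)
          ∈ Subgroup.center W := QuotientGroup.eq.mp hma.symm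
      have hzb : b⁻¹ * Quotient.out (QuotientGroup.mk b : W ⧸ Subgroup.center W)
          ∈ Subgroup.center W := QuotientGroup.eq.mp hmb.symm
      have ha' : Quotient.out (QuotientGroup.mk a : W ⧸ Subgroup.center W)
          = a * (a⁻¹ * Quotient.out (QuotientGroup.mk a : W ⧸ Subgroup.center W)) := by group
      have hb' : Quotient.out (QuotientGroup.mk b : W ⧸ Subgroup.center W)
          = b * (b⁻¹ * Quotient.out (QuotientGroup.mk b : W ⧸ Subgroup.center W)) := by group
      show ⁅Quotient.out (QuotientGroup.mk a : W ⧸ Subgroup.center W),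
          Quotient.out (QuotientGroup.mk b : W ⧸ Subgroup.center W)⁆ = ⁅a, b⁆
      rw [ha', hb']
      exact commutator_eq_of_central a b _ _
        (fun g => (Subgroup.mem_center_iff.mp hza g).symm)
        (fun g => (Subgroup.mem_center_iff.mp hzb g).symm)
    exact (Set.Finite.subset (Set.finite_range _) hsub).to_subtype
  -- Schur: the commutator subgroup of W is finite
  haveI hcommfin : Finite (_root_.commutator W) := inferInstance
  -- W is finitely generated
  haveI hfg : Group.FG W := Group.fg_iff.mpr ⟨_, hT, hTfin⟩
  -- generators are torsion
  have htor : ∀ t : W, (t : G) ∈ S → IsOfFinOrder t := by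
    intro t ht
    obtain ⟨g, hg⟩ := hSconj _ ht
    have h1 : IsOfFinOrder ((t : G)) := by
      rw [← hg]
      have h2 := ((MulAut.conj g).toMonoidHom : G →* G).isOfFinOrder hx
      simpa using h2
    exact Submonoid.isOfFinOrder_coe.mp h1
  -- the abelianization of W is torsion
  have hsurj : Function.Surjective (Abelianization.of : W →* Abelianization W) := by
    intro q
    exact Quotient.inductionOn q (fun g => ⟨g, rfl⟩)
  haveI hfgAb : Group.FG (Abelianization W) := Group.fg_of_surjective hsurj
  have htorAb : Monoid.IsTorsion (Abelianization W) := by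
    have hgen : Subgroup.closure ((Abelianization.of : W →* Abelianization W) ''
        (((↑) : W → G) ⁻¹' S)) = ⊤ := by
      rw [← MonoidHom.map_closure, hT, ← MonoidHom.range_eq_map]
      exact MonoidHom.range_eq_top_of_surjective _ hsurj
    have htop : CommGroup.torsion (Abelianization W) = ⊤ := by
      rw [eq_top_iff, ← hgen]
      apply (Subgroup.closure_le _).mpr
      rintro y ⟨t, ht, rfl⟩
      rw [SetLike.mem_coe, CommGroup.mem_torsion]
      exact (Abelianization.of : W →* Abelianization W).isOfFinOrder (htor t ht)
    intro q
    rw [← CommGroup.mem_torsion, htop]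
    trivial
  have hAbfin : Finite (Abelianization W) := CommGroup.finite_of_fg_torsion _ htorAb
  haveI : Finite (W ⧸ _root_.commutator W) := hAbfin
  exact Finite.of_equiv _ (Subgroup.groupEquivQuotientProdSubgroup (s := _root_.commutator W)).symm

/-- If G is residually finite with trivial finite radical and has a
hereditarily just infinite subgroup of finite index, then G is
hereditarily just infinite. -/
theorem hereditarilyJustInfinite_of_finiteIndex {G : Type*} [Group G]
    (hrf : ResiduallyFinite G) (hfr : FinRadical G = {1})
    (H : Subgroup G) (hH : H.FiniteIndex)
    (hhji : ∀ K : Subgroup H, K.FiniteIndex → JustInfinite K) :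
    ∀ K : Subgroup G, K.FiniteIndex → JustInfinite K := by
  intro K hK
  classical
  haveI := hH
  haveI := hK
  set C : Subgroup G := H.normalCore with hC
  haveI hCn : C.Normal := H.normalCore_normal
  haveI hCfi : C.FiniteIndex := H.finiteIndex_normalCore
  have hCH : C ≤ H := H.normalCore_le
  set M : Subgroup G := K ⊓ C with hM
  have hMK : M ≤ K := inf_le_left
  have hMH : M ≤ H := le_trans inf_le_right hCH
  haveI hMfi : M.FiniteIndex := inferInstance
  have hMHfi : (M.subgroupOf H).FiniteIndex := by
    constructor
    intro h0
    apply hMfi.index_ne_zero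
    rw [← Subgroup.relIndex_mul_index hMH]
    have h1 : M.relIndex H = 0 := h0
    rw [h1, zero_mul]
  have hJIM : JustInfinite M :=
    justInfinite_congr (Subgroup.subgroupOfEquivOfLe hMH) (hhji _ hMHfi)
  set KM : Subgroup K := M.subgroupOf K with hKM
  have hKMeq : KM = C.subgroupOf K := by
    rw [hKM]
    ext y
    simp only [Subgroup.mem_subgroupOf, hM, Subgroup.mem_inf]
    exact ⟨fun h => h.2, fun h => ⟨y.2, h⟩⟩
  haveI hKMn : KM.Normal := by
    rw [hKMeq]
    exact Subgroup.normal_subgroupOf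
  haveI hKMfi : KM.FiniteIndex := by
    constructor
    intro h0
    apply hMfi.index_ne_zero
    rw [← Subgroup.relIndex_mul_index hMK]
    have h1 : M.relIndex K = 0 := h0
    rw [h1, zero_mul]
  have hJIKM : JustInfinite KM :=
    justInfinite_congr (Subgroup.subgroupOfEquivOfLe hMK).symm hJIM
  refine ⟨?_, ?_, ?_⟩
  · -- K is infinite
    haveI := hJIM.1
    exact Infinite.of_injective (Subgroup.inclusion hMK) (Subgroup.inclusion_injective hMK)
  · -- K is residually finite
    rw [residuallyFinite_iff']
    intro y hy
    have hy' : (y : G) ≠ 1 := by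
      intro h1
      exact hy (Subtype.ext h1)
    obtain ⟨N, hN1, hN2, hN3⟩ := residuallyFinite_iff'.mp hrf (y : G) hy'
    haveI := hN1
    refine ⟨N.subgroupOf K, Subgroup.normal_subgroupOf, ?_, ?_⟩
    · constructor
      intro h0
      apply hN2.index_ne_zero
      have hdvd : N.relIndex K ∣ N.index := Subgroup.relIndex_dvd_index_of_normal N K
      have h1 : N.relIndex K = 0 := h0
      rw [h1] at hdvd
      exact Nat.eq_zero_of_zero_dvd hdvd
    · rw [Subgroup.mem_subgroupOf]
      exact hN3
  · -- every nontrivial normal subgroup of K has finite index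
    intro N hNn hNbot
    haveI := hNn
    by_cases hcase : N ⊓ KM = ⊥
    · -- N intersects KM trivially: contradiction with FinRadical G = {1}
      exfalso
      have hinj : Function.Injective ((QuotientGroup.mk' KM).comp N.subtype) := by
        rw [← MonoidHom.ker_eq_bot_iff, eq_bot_iff]
        intro y hy
        have h1 : (y : ↥K) ∈ KM := by
          rwa [MonoidHom.mem_ker, MonoidHom.comp_apply, QuotientGroup.mk'_apply,
            QuotientGroup.eq_one_iff] at hy
        have h2 : (y : ↥K) ∈ N ⊓ KM := ⟨y.2, h1⟩
        rw [hcase, Subgroup.mem_bot] at h2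
        rw [Subgroup.mem_bot]
        exact Subtype.ext h2
      haveI : Finite (K ⧸ KM) := Subgroup.finite_quotient_of_finiteIndex
      haveI hNfin : Finite N := Finite.of_injective _ hinj
      obtain ⟨⟨n, hnN⟩, hn1⟩ := Subgroup.ne_bot_iff_exists_ne_one.mp hNbot
      set xg : G := (n : G) with hxg
      have hx1 : xg ≠ 1 := by
        intro h1
        apply hn1
        have hn0 : n = 1 := Subtype.ext h1
        exact Subtype.ext (by simp [hn0])
      have hcommK : ∀ a ∈ N, ∀ b ∈ KM, Commute a b := fun a ha b hb =>
        Subgroup.commute_of_normal_of_disjoint N KM hNn hKMn (disjoint_iff.mpr hcase) a b ha hb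
      set E : Subgroup G := K.normalCore ⊓ C with hE
      haveI hEn : E.Normal := by
        rw [hE]
        haveI := K.normalCore_normal
        infer_instance
      haveI hEfi : E.FiniteIndex := by
        rw [hE]
        haveI := K.finiteIndex_normalCore
        infer_instance
      have hEK : E ≤ K := le_trans inf_le_left K.normalCore_le
      have hEM : E ≤ M := le_inf hEK inf_le_right
      have hxE : ∀ e ∈ E, Commute xg e := by
        intro e he
        have heK : e ∈ K := hEK he
        have heKM : (⟨e, heK⟩ : ↥K) ∈ KM := by
          rw [hKM, Subgroup.mem_subgroupOf]
          exact hEM he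
        have hc := hcommK n hnN ⟨e, heK⟩ heKM
        have h2 := congrArg (Subtype.val) hc
        exact h2
      have hconj : ∀ g : G, ∀ e ∈ E, Commute (g * xg * g⁻¹) e := by
        intro g e he
        have he' : g⁻¹ * e * g ∈ E := by
          have h1 := hEn.conj_mem e he g⁻¹
          simpa using h1
        have hc := (hxE _ he').map (MulAut.conj g).toMonoidHom
        have h2 : (MulAut.conj g).toMonoidHom (g⁻¹ * e * g) = e := by
          simp [MulAut.conj_apply]
          group
        have h3 : (MulAut.conj g).toMonoidHom xg = g * xg * g⁻¹ := by
          simp [MulAut.conj_apply]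
        rwa [h2, h3] at hc
      have hord : IsOfFinOrder xg := by
        have h1 : IsOfFinOrder (⟨n, hnN⟩ : ↥N) := isTorsion_of_finite _
        have h2 := (K.subtype.comp N.subtype).isOfFinOrder h1
        simpa using h2
      have hWfin : Finite (Subgroup.normalClosure {xg} : Subgroup G) :=
        dietzmann_finite E hEn hEfi xg hord hconj
      have hxFR : xg ∈ FinRadical G := by
        refine ⟨Subgroup.normalClosure {xg}, Subgroup.normalClosure_normal, ?_, ?_⟩
        · exact Set.finite_coe_iff.mp hWfin
        · exact Subgroup.subset_normalClosure (Set.mem_singleton xg)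
      rw [hfr, Set.mem_singleton_iff] at hxFR
      exact hx1 hxFR
    · -- N meets KM nontrivially: use just-infiniteness of KM
      have hQn : (N.subgroupOf KM).Normal := Subgroup.normal_subgroupOf
      have hQbot : N.subgroupOf KM ≠ ⊥ := by
        obtain ⟨⟨y, hyNK⟩, hy1⟩ := Subgroup.ne_bot_iff_exists_ne_one.mp hcase
        intro hQ
        have h1 : (⟨y, hyNK.2⟩ : ↥KM) ∈ N.subgroupOf KM := by
          rw [Subgroup.mem_subgroupOf]
          exact hyNK.1
        rw [hQ, Subgroup.mem_bot] at h1
        apply hy1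
        exact Subtype.ext (by simpa using congrArg Subtype.val h1)
      have hQfi := hJIKM.2.2 _ hQn hQbot
      have h1 : (N ⊓ KM).subgroupOf KM = N.subgroupOf KM := by
        ext y
        simp only [Subgroup.mem_subgroupOf, Subgroup.mem_inf]
        exact ⟨fun h => h.1, fun h => ⟨h, y.2⟩⟩
      constructor
      intro h0
      have hdvd : N.index ∣ (N ⊓ KM).index := Subgroup.index_dvd_of_le inf_le_left
      rw [h0] at hdvd
      have h2 : (N ⊓ KM).index = 0 := Nat.eq_zero_of_zero_dvd hdvd
      have h3 := Subgroup.relIndex_mul_index (inf_le_right : N ⊓ KM ≤ KM)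
      rw [h2] at h3
      rcases Nat.mul_eq_zero.mp h3 with h4 | h4
      · apply hQfi.index_ne_zero
        have h5 : ((N ⊓ KM).subgroupOf KM).index = 0 := h4
        rw [h1] at h5
        exact h5
      · exact hKMfi.index_ne_zero h4
end

section
/- Let G be a just infinite group, and let H ≤ G be a just infinite subgroup of finite index. Then every subgroup K of G containing H is just infinite. -/
open Subgroup Pointwise
open scoped commutatorElement

section JIHelpers

variable {G : Type*} [Group G]

private lemma JI.centralizer_normal {M : Subgroup G} (hM : M.Normal) :
    (centralizer (M : Set G)).Normal := by
  constructor
  intro c hc g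
  rw [mem_centralizer_iff] at hc ⊢
  intro m hm
  have hm' : g⁻¹ * m * g ∈ M := by
    have := hM.conj_mem m hm g⁻¹
    simpa using this
  have h := hc _ hm'
  have h2 := congrArg (fun x => g * x * g⁻¹) h
  simpa [mul_assoc] using h2

private lemma JI.finite_of_subgroup (L : Subgroup G)
    (h : L.FiniteIndex) (hfin : Finite L) : Finite G := by
  haveI := h
  exact Finite.of_equiv ((G ⧸ L) × L) Subgroup.groupEquivQuotientProdSubgroup.symm

private lemma JI.conj_central (p c : G) (hc : ∀ x, c * x = x * c) :
    ∀ x : G, (p * c) * x * (p * c)⁻¹ = p * x * p⁻¹ := by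
  intro x
  have hcx : c * x * c⁻¹ = x := by rw [hc x, mul_inv_cancel_right]
  calc (p * c) * x * (p * c)⁻¹ = p * (c * x * c⁻¹) * p⁻¹ := by
        rw [mul_inv_rev]; simp only [mul_assoc]
    _ = p * x * p⁻¹ := by rw [hcx]

private lemma JI.commutator_central_right (p q c : G) (hc : ∀ x, c * x = x * c) :
    ⁅p * c, q⁆ = ⁅p, q⁆ := by
  rw [commutatorElement_def, commutatorElement_def, JI.conj_central p c hc q]

private lemma JI.commutator_central (a b z w : G)
    (hz : ∀ x, z * x = x * z) (hw : ∀ x, w * x = x * w) : ⁅a * z, b * w⁆ = ⁅a, b⁆ := by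
  rw [JI.commutator_central_right a (b * w) z hz]
  rw [← commutatorElement_inv (b * w) a, JI.commutator_central_right b a w hw,
    commutatorElement_inv]

private lemma JI.finite_commutatorSet (Z : Subgroup G)
    (hfin : Z.FiniteIndex) (hc : Z ≤ Subgroup.center G) : Finite (commutatorSet G) := by
  haveI := hfin
  haveI : Finite (G ⧸ Z) := inferInstance
  have hsub : commutatorSet G ⊆
      Set.range (fun p : (G ⧸ Z) × (G ⧸ Z) =>
        ⁅Quotient.out p.1, Quotient.out p.2⁆) := by
    rintro x ⟨g₁, g₂, rfl⟩
    refine ⟨(QuotientGroup.mk g₁, QuotientGroup.mk g₂), ?_⟩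
    have h₁ : g₁⁻¹ * Quotient.out (QuotientGroup.mk g₁ : G ⧸ Z) ∈ Z :=
      QuotientGroup.eq.mp (QuotientGroup.out_eq' _).symm
    have h₂ : g₂⁻¹ * Quotient.out (QuotientGroup.mk g₂ : G ⧸ Z) ∈ Z :=
      QuotientGroup.eq.mp (QuotientGroup.out_eq' _).symm
    have e₁ : Quotient.out (QuotientGroup.mk g₁ : G ⧸ Z) =
        g₁ * (g₁⁻¹ * Quotient.out (QuotientGroup.mk g₁ : G ⧸ Z)) := by
      rw [mul_inv_cancel_left]
    have e₂ : Quotient.out (QuotientGroup.mk g₂ : G ⧸ Z) =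
        g₂ * (g₂⁻¹ * Quotient.out (QuotientGroup.mk g₂ : G ⧸ Z)) := by
      rw [mul_inv_cancel_left]
    show ⁅Quotient.out (QuotientGroup.mk g₁ : G ⧸ Z),
        Quotient.out (QuotientGroup.mk g₂ : G ⧸ Z)⁆ = ⁅g₁, g₂⁆
    rw [e₁, e₂]
    exact JI.commutator_central g₁ g₂ _ _
      (fun x => (Subgroup.mem_center_iff.mp (hc h₁) x).symm)
      (fun x => (Subgroup.mem_center_iff.mp (hc h₂) x).symm)
  exact ((Set.finite_range _).subset hsub).to_subtype

private lemma JI.sup_coe (P Q : Subgroup G)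
    (h : ∀ p ∈ P, ∀ q ∈ Q, p * q = q * p) :
    ((P ⊔ Q : Subgroup G) : Set G) = (P : Set G) * (Q : Set G) := by
  let R : Subgroup G :=
  { carrier := (P : Set G) * (Q : Set G)
    one_mem' := ⟨1, P.one_mem, 1, Q.one_mem, one_mul 1⟩
    mul_mem' := by
      rintro x y ⟨p₁, hp₁, q₁, hq₁, rfl⟩ ⟨p₂, hp₂, q₂, hq₂, rfl⟩
      refine ⟨p₁ * p₂, P.mul_mem hp₁ hp₂, q₁ * q₂, Q.mul_mem hq₁ hq₂, ?_⟩
      calc p₁ * p₂ * (q₁ * q₂) = p₁ * (p₂ * q₁) * q₂ := by simp only [mul_assoc]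
        _ = p₁ * (q₁ * p₂) * q₂ := by rw [h p₂ hp₂ q₁ hq₁]
        _ = p₁ * q₁ * (p₂ * q₂) := by simp only [mul_assoc]
    inv_mem' := by
      rintro x ⟨p, hp, q, hq, rfl⟩
      refine ⟨p⁻¹, P.inv_mem hp, q⁻¹, Q.inv_mem hq, ?_⟩
      show p⁻¹ * q⁻¹ = (p * q)⁻¹
      rw [mul_inv_rev]
      exact h p⁻¹ (P.inv_mem hp) q⁻¹ (Q.inv_mem hq) }
  have hR : P ⊔ Q = R := by
    apply le_antisymm
    · refine sup_le ?_ ?_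
      · intro p hp; exact ⟨p, hp, 1, Q.one_mem, mul_one p⟩
      · intro q hq; exact ⟨1, P.one_mem, q, hq, one_mul q⟩
    · rintro x ⟨p, hp, q, hq, rfl⟩
      exact Subgroup.mul_mem _ ((le_sup_left : P ≤ P ⊔ Q) hp)
        ((le_sup_right : Q ≤ P ⊔ Q) hq)
  rw [hR]
  rfl

private lemma JI.closure_finite {s : Set G} (hs : s.Finite)
    (hord : ∀ x ∈ s, IsOfFinOrder x)
    (hcomm : ∀ x ∈ Subgroup.closure s, ∀ y ∈ Subgroup.closure s, x * y = y * x) :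
    ((Subgroup.closure s : Subgroup G) : Set G).Finite := by
  classical
  revert hord hcomm
  refine Set.Finite.induction_on (motive := fun s _ =>
      (∀ x ∈ s, IsOfFinOrder x) →
      (∀ x ∈ Subgroup.closure s, ∀ y ∈ Subgroup.closure s, x * y = y * x) →
      ((Subgroup.closure s : Subgroup G) : Set G).Finite) s hs ?_ ?_
  · intro _ _
    rw [Subgroup.closure_empty]
    simp
  · intro a t hat hft ih hord hcomm
    have hcl : Subgroup.closure (insert a t) = Subgroup.zpowers a ⊔ Subgroup.closure t := by
      rw [Set.insert_eq, Subgroup.closure_union, ← Subgroup.zpowers_eq_closure]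
    have hmemz : (Subgroup.zpowers a : Subgroup G) ≤ Subgroup.closure (insert a t) := by
      rw [hcl]; exact le_sup_left
    have hmemt : Subgroup.closure t ≤ Subgroup.closure (insert a t) := by
      rw [hcl]; exact le_sup_right
    have hsup : ((Subgroup.closure (insert a t) : Subgroup G) : Set G)
        = (Subgroup.zpowers a : Set G) * (Subgroup.closure t : Set G) := by
      rw [hcl]
      exact JI.sup_coe _ _ (fun p hp q hq => hcomm p (hmemz hp) q (hmemt hq))
    rw [hsup]
    refine Set.Finite.mul ?_ ?_
    · exact finite_zpowers.mpr (hord a (Set.mem_insert a t))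
    · exact ih (fun x hx => hord x (Set.mem_insert_of_mem a hx))
        (fun x hx y hy => hcomm x
          (hmemt hx) y (hmemt hy))

private lemma JI.conjugatesOf_finite (n : G)
    (h : (Subgroup.centralizer ({n} : Set G)).FiniteIndex) : (conjugatesOf n).Finite := by
  haveI := h
  haveI : Finite (G ⧸ Subgroup.centralizer ({n} : Set G)) := inferInstance
  have hsub : conjugatesOf n ⊆
      Set.range (fun q : G ⧸ Subgroup.centralizer ({n} : Set G) =>
        Quotient.out q * n * (Quotient.out q)⁻¹) := by
    rintro b hb
    obtain ⟨g, hg⟩ := isConj_iff.mp hb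
    refine ⟨QuotientGroup.mk g, ?_⟩
    set o : G := Quotient.out (QuotientGroup.mk g : G ⧸ Subgroup.centralizer ({n} : Set G))
      with ho
    show o * n * o⁻¹ = b
    have hz : g⁻¹ * o ∈ Subgroup.centralizer ({n} : Set G) :=
      QuotientGroup.eq.mp (QuotientGroup.out_eq' _).symm
    have hna : n * (g⁻¹ * o) = (g⁻¹ * o) * n :=
      mem_centralizer_iff.mp hz n rfl
    have hcn : (g⁻¹ * o) * n * (g⁻¹ * o)⁻¹ = n := by
      rw [← hna, mul_inv_cancel_right]
    have e : o = g * (g⁻¹ * o) := (mul_inv_cancel_left g o).symm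
    calc o * n * o⁻¹ = (g * (g⁻¹ * o)) * n * (g * (g⁻¹ * o))⁻¹ := by rw [← e]
      _ = g * ((g⁻¹ * o) * n * (g⁻¹ * o)⁻¹) * g⁻¹ := by
          rw [mul_inv_rev]; simp only [mul_assoc]
      _ = g * n * g⁻¹ := by rw [hcn]
      _ = b := hg
  exact (Set.finite_range _).subset hsub

end JIHelpers

private lemma JI.case2 {G : Type*} [Group G] (hGinf : Infinite G)
    (hGn : ∀ N : Subgroup G, N.Normal → N ≠ ⊥ → N.FiniteIndex)
    (K H : Subgroup G) (hH : H.FiniteIndex) (hle : H ≤ K)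
    (N' : Subgroup G) (hN'bot : N' ≠ ⊥)
    (hKN' : ∀ k ∈ K, ∀ x ∈ N', k * x * k⁻¹ ∈ N')
    (hNH : N' ⊓ H = ⊥) : False := by
  classical
  haveI := hH
  set M : Subgroup G := H.normalCore with hMdef
  haveI hMnormal : M.Normal := H.normalCore_normal
  haveI hMfin : M.FiniteIndex := Subgroup.finiteIndex_normalCore H
  have hMH : M ≤ H := H.normalCore_le
  have hMK : M ≤ K := hMH.trans hle
  -- every element of N' commutes with every element of M
  have hcomm : ∀ x ∈ N', ∀ m ∈ M, x * m = m * x := by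
    intro x hx m hm
    have h1 : x * m * x⁻¹ * m⁻¹ ∈ M := M.mul_mem (hMnormal.conj_mem m hm x) (M.inv_mem hm)
    have h2 : x * m * x⁻¹ * m⁻¹ ∈ N' := by
      have ha : m * x⁻¹ * m⁻¹ ∈ N' := hKN' m (hMK hm) x⁻¹ (N'.inv_mem hx)
      have hb := N'.mul_mem hx ha
      simpa [mul_assoc] using hb
    have h3 : x * m * x⁻¹ * m⁻¹ ∈ N' ⊓ H := ⟨h2, hMH h1⟩
    rw [hNH, Subgroup.mem_bot] at h3
    have h4 : x * m * x⁻¹ = m := by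
      rw [← mul_inv_eq_one]; exact h3
    have h5 := congrArg (fun y => y * x) h4
    simpa [mul_assoc] using h5
  -- the centralizer of M is a nontrivial normal subgroup, hence of finite index
  have hCnormal : (centralizer (M : Set G)).Normal := JI.centralizer_normal hMnormal
  have hCN' : N' ≤ centralizer (M : Set G) := fun x hx =>
    mem_centralizer_iff.mpr (fun m hm => (hcomm x hx m hm).symm)
  have hCbot : centralizer (M : Set G) ≠ ⊥ := fun hbot =>
    hN'bot (le_bot_iff.mp (hbot ▸ hCN'))
  haveI hCfin : (centralizer (M : Set G)).FiniteIndex := hGn _ hCnormal hCbot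
  -- Z is abelian, normal, of finite index, inside H, and commutes with N'
  set Z : Subgroup G := centralizer (M : Set G) ⊓ M with hZdef
  haveI hZnormal : Z.Normal :=
    ⟨fun z hz g => ⟨hCnormal.conj_mem _ hz.1 g, hMnormal.conj_mem _ hz.2 g⟩⟩
  haveI hZfin : Z.FiniteIndex := inferInstance
  have hZM : Z ≤ M := inf_le_right
  have hZH : Z ≤ H := hZM.trans hMH
  have hZab : ∀ a ∈ Z, ∀ b ∈ Z, a * b = b * a := fun a ha b hb =>
    ((mem_centralizer_iff.mp ha.1) b hb.2).symm
  -- pick a nontrivial element of N'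
  obtain ⟨a, ha⟩ := Subgroup.ne_bot_iff_exists_ne_one.mp hN'bot
  set n : G := (a : G) with hndef
  have hnN' : n ∈ N' := a.2
  have hn1 : n ≠ 1 := fun hh => ha (Subtype.ext hh)
  have hnZ : ∀ z ∈ Z, n * z = z * n := fun z hz => hcomm n hnN' z (hZM hz)
  -- n has finite order
  have hord : IsOfFinOrder n := by
    haveI : Finite (G ⧸ Z) := inferInstance
    obtain ⟨k, hk, hk1⟩ :=
      isOfFinOrder_iff_pow_eq_one.mp (isOfFinOrder_of_finite ((QuotientGroup.mk' Z) n))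
    have hZk : n ^ k ∈ Z := by
      have hq : (QuotientGroup.mk' Z) (n ^ k) = 1 := by rw [map_pow]; exact hk1
      rwa [← MonoidHom.mem_ker, QuotientGroup.ker_mk'] at hq
    have hmem : n ^ k ∈ N' ⊓ H := ⟨N'.pow_mem hnN' k, hZH hZk⟩
    rw [hNH, Subgroup.mem_bot] at hmem
    exact isOfFinOrder_iff_pow_eq_one.mpr ⟨k, hk, hmem⟩
  -- W, the centralizer of Z, is normal of finite index and contains n
  set W : Subgroup G := centralizer (Z : Set G) with hWdef
  haveI hWnormal : W.Normal := JI.centralizer_normal hZnormal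
  have hZW : Z ≤ W := fun z hz => mem_centralizer_iff.mpr (fun b hb => hZab b hb z hz)
  haveI hWfin : W.FiniteIndex := Subgroup.finiteIndex_of_le hZW
  have hnW : n ∈ W := mem_centralizer_iff.mpr (fun z hz => (hnZ z hz).symm)
  -- L, the normal closure of n, is normal nontrivial hence of finite index, and L ≤ W
  set L : Subgroup G := Subgroup.normalClosure ({n} : Set G) with hLdef
  haveI hLnormal : L.Normal := Subgroup.normalClosure_normal
  have hnL : n ∈ L := Subgroup.subset_normalClosure rfl
  have hLbot : L ≠ ⊥ := fun hbot => hn1 (Subgroup.mem_bot.mp (hbot ▸ hnL))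
  haveI hLfin : L.FiniteIndex := hGn L hLnormal hLbot
  have hLW : L ≤ W := by
    apply Subgroup.normalClosure_le_normal
    intro x hx
    rw [Set.mem_singleton_iff] at hx
    subst hx
    exact hnW
  have hLZ : ∀ l ∈ L, ∀ z ∈ Z, z * l = l * z := fun l hl =>
    mem_centralizer_iff.mp (hLW hl)
  -- L ⊓ Z is a finite-index central subgroup of L
  haveI hBfin : (L ⊓ Z).FiniteIndex := inferInstance
  have hBrelfin : ((L ⊓ Z).subgroupOf L).FiniteIndex := by
    constructor
    intro h0
    have h1 : (L ⊓ Z).relIndex L = 0 := h0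
    have h2 := Subgroup.relIndex_mul_index (inf_le_left : L ⊓ Z ≤ L)
    rw [h1, zero_mul] at h2
    exact hBfin.index_ne_zero h2.symm
  have hBcenter : (L ⊓ Z).subgroupOf L ≤ Subgroup.center ↥L := by
    rintro ⟨x, hxL⟩ hx
    rw [Subgroup.mem_subgroupOf] at hx
    rw [Subgroup.mem_center_iff]
    intro g
    apply Subtype.ext
    show (g : G) * x = x * (g : G)
    exact (hLZ (g : G) g.2 x hx.2).symm
  haveI : Finite (commutatorSet ↥L) := JI.finite_commutatorSet _ hBrelfin hBcenter
  haveI hcommFin : Finite (_root_.commutator ↥L) := inferInstance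
  -- the commutator subgroup ⁅L, L⁆ of G is finite
  have hFmap : Subgroup.map L.subtype (_root_.commutator ↥L) = ⁅L, L⁆ := by
    rw [_root_.commutator_def, Subgroup.map_commutator]
    congr 1 <;> rw [← MonoidHom.range_eq_map, Subgroup.subtype_range]
  haveI hFfinite : Finite ↥(⁅L, L⁆ : Subgroup G) := by
    rw [← hFmap]
    exact Finite.of_equiv _
      (Subgroup.equivMapOfInjective _ _ (Subgroup.subtype_injective L)).toEquiv
  haveI hFnormal : (⁅L, L⁆ : Subgroup G).Normal := Subgroup.commutator_normal L L
  by_cases hF : (⁅L, L⁆ : Subgroup G) = ⊥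
  · -- L is abelian
    have habL : ∀ x ∈ L, ∀ y ∈ L, x * y = y * x := by
      intro x hx y hy
      have h1 : ⁅x, y⁆ ∈ (⊥ : Subgroup G) :=
        hF ▸ (Subgroup.commutator_le.mp (le_of_eq rfl) x hx y hy)
      rw [Subgroup.mem_bot] at h1
      exact (commutatorElement_eq_one_iff_commute.mp h1).eq
    -- L is the closure of the (finite) conjugacy class of n
    have hset : Group.conjugatesOfSet ({n} : Set G) = conjugatesOf n := by
      unfold Group.conjugatesOfSet
      exact Set.biUnion_singleton n conjugatesOf
    have hLeq : L = Subgroup.closure (conjugatesOf n) := by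
      rw [hLdef]
      unfold Subgroup.normalClosure
      rw [hset]
    have hZn : Z ≤ Subgroup.centralizer ({n} : Set G) := by
      intro z hz
      apply mem_centralizer_iff.mpr
      intro m hm
      rw [Set.mem_singleton_iff] at hm
      subst hm
      exact hnZ z hz
    haveI : (Subgroup.centralizer ({n} : Set G)).FiniteIndex := Subgroup.finiteIndex_of_le hZn
    have hconjfin : (conjugatesOf n).Finite := JI.conjugatesOf_finite n inferInstance
    have hconjord : ∀ x ∈ conjugatesOf n, IsOfFinOrder x := by
      intro x hx
      obtain ⟨c, hc⟩ := isConj_iff.mp hx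
      obtain ⟨k, hk, hk1⟩ := isOfFinOrder_iff_pow_eq_one.mp hord
      refine isOfFinOrder_iff_pow_eq_one.mpr ⟨k, hk, ?_⟩
      rw [← hc, conj_pow, hk1, mul_one, mul_inv_cancel]
    have hLfinite : ((Subgroup.closure (conjugatesOf n) : Subgroup G) : Set G).Finite := by
      refine JI.closure_finite hconjfin hconjord ?_
      intro x hx y hy
      rw [← hLeq] at hx hy
      exact habL x hx y hy
    rw [← hLeq] at hLfinite
    haveI : Finite ↥L := hLfinite.to_subtype
    haveI : Finite G := JI.finite_of_subgroup L hLfin inferInstance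
    exact not_finite G
  · -- ⁅L, L⁆ is a finite nontrivial normal subgroup, so G is finite
    haveI := hGn _ hFnormal hF
    haveI : Finite G := JI.finite_of_subgroup ⁅L, L⁆ inferInstance inferInstance
    exact not_finite G



/-- In a just infinite group, every subgroup containing a just infinite
subgroup of finite index is just infinite. -/
theorem justInfinite_of_le {G : Type*} [Group G] (hG : JustInfinite G)
    (H : Subgroup G) (hH : H.FiniteIndex) (hji : JustInfinite H)
    (K : Subgroup G) (hle : H ≤ K) :
    JustInfinite K := by
  obtain ⟨hGinf, hGrf, hGn⟩ := hG
  obtain ⟨hHinf, hHrf, hHn⟩ := hji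
  haveI := hGinf
  haveI := hHinf
  haveI := hH
  refine ⟨?_, ?_, ?_⟩
  · -- K is infinite
    exact Infinite.of_injective _ (Subgroup.inclusion_injective hle)
  · -- K is residually finite
    show sInf {N : Subgroup ↥K | N.Normal ∧ N.FiniteIndex} = ⊥
    rw [eq_bot_iff]
    intro x hx
    rw [Subgroup.mem_sInf] at hx
    rw [Subgroup.mem_bot]
    have hx1 : (x : G) = 1 := by
      have hRF : sInf {N : Subgroup G | N.Normal ∧ N.FiniteIndex} = (⊥ : Subgroup G) := hGrf
      have hmem : (x : G) ∈ sInf {N : Subgroup G | N.Normal ∧ N.FiniteIndex} := by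
        rw [Subgroup.mem_sInf]
        intro N hN
        haveI := hN.1
        haveI := hN.2
        have h1 : (N.subgroupOf K).Normal := Subgroup.normal_subgroupOf
        have h2 : (N.subgroupOf K).FiniteIndex := by
          constructor
          intro h0
          have h0' : N.relIndex K = 0 := h0
          have hd := Subgroup.relIndex_dvd_index_of_normal N K
          rw [h0'] at hd
          exact hN.2.index_ne_zero (zero_dvd_iff.mp hd)
        have := hx (N.subgroupOf K) ⟨h1, h2⟩
        exact Subgroup.mem_subgroupOf.mp this
      rw [hRF] at hmem
      exact Subgroup.mem_bot.mp hmem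
    exact Subtype.ext hx1
  · -- every nontrivial normal subgroup of K has finite index
    intro N hNnormal hNbot
    set N' : Subgroup G := N.map K.subtype with hN'def
    have hN'bot : N' ≠ ⊥ := by
      intro hbot
      apply hNbot
      have := (Subgroup.map_eq_bot_iff N).mp hbot
      rwa [Subgroup.ker_subtype, le_bot_iff] at this
    have hKN' : ∀ k ∈ K, ∀ x ∈ N', k * x * k⁻¹ ∈ N' := by
      rintro k hk x ⟨y, hy, rfl⟩
      refine ⟨(⟨k, hk⟩ : ↥K) * y * (⟨k, hk⟩ : ↥K)⁻¹, hNnormal.conj_mem y hy ⟨k, hk⟩, rfl⟩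
    by_cases hNH : N' ⊓ H = ⊥
    · exact absurd (JI.case2 hGinf hGn K H hH hle N' hN'bot hKN' hNH) not_false
    · -- (N' ⊓ H) ∩ H is normal and nontrivial in H, hence of finite index in H
      have hP : ((N' ⊓ H).subgroupOf H).Normal := by
        constructor
        rintro ⟨x, hxH⟩ hx ⟨g, hgH⟩
        rw [Subgroup.mem_subgroupOf] at hx ⊢
        refine ⟨?_, ?_⟩
        · exact hKN' g (hle hgH) x hx.1
        · exact H.mul_mem (H.mul_mem hgH hx.2) (H.inv_mem hgH)
      have hPbot : (N' ⊓ H).subgroupOf H ≠ ⊥ := by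
        intro hbot
        apply hNH
        rw [Subgroup.subgroupOf_eq_bot] at hbot
        rw [eq_bot_iff]
        intro x hx
        exact (Subgroup.disjoint_def.mp hbot) (Subgroup.mem_inf.mpr hx) hx.2
      have hPfin := hHn _ hP hPbot
      have h1 : (N' ⊓ H).relIndex H ≠ 0 := hPfin.index_ne_zero
      have h2 : (N' ⊓ H).index ≠ 0 := by
        rw [← Subgroup.relIndex_mul_index (inf_le_right : N' ⊓ H ≤ H)]
        exact mul_ne_zero h1 hH.index_ne_zero
      have h3 : N'.index ≠ 0 := fun h0 =>
        h2 (zero_dvd_iff.mp (h0 ▸ Subgroup.index_dvd_of_le (inf_le_left : N' ⊓ H ≤ N')))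
      have h4 : N'.relIndex K ≠ 0 := by
        intro h0
        apply h3
        rw [← Subgroup.relIndex_mul_index (Subgroup.map_subtype_le N), h0, zero_mul]
      have h5 : N = N'.subgroupOf K :=
        (Subgroup.comap_map_eq_self_of_injective (Subgroup.subtype_injective K) N).symm
      constructor
      rw [h5]
      exact h4
end

section
/- Let G be a just infinite group that is not virtually abelian, and let K be a nontrivial subgroup of G that is normal in its normal closure K^G. Then K has only finitely many conjugates in G, and some intersection of conjugates of K is a basal subgroup of G. -/
open scoped commutatorElement

namespace BasalAux
variable {G : Type*} [Group G]


def cnj (g : G) (H : Subgroup G) : Subgroup G := H.map (MulAut.conj g).toMonoidHom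

lemma mem_cnj {g x : G} {H : Subgroup G} : x ∈ cnj g H ↔ g⁻¹ * x * g ∈ H := by
  rw [cnj, Subgroup.mem_map_equiv]; simp [mul_assoc]

lemma cnj_cnj (g h : G) (H : Subgroup G) : cnj g (cnj h H) = cnj (g * h) H := by
  ext x; simp [mem_cnj, mul_assoc]

lemma cnj_one (H : Subgroup G) : cnj 1 H = H := by ext x; simp [mem_cnj]

lemma cnj_mono {g : G} {H K : Subgroup G} (h : H ≤ K) : cnj g H ≤ cnj g K := by
  intro x hx; rw [mem_cnj] at *; exact h hx

lemma cnj_le_iff {g : G} {H K : Subgroup G} : cnj g H ≤ cnj g K ↔ H ≤ K := by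
  constructor
  · intro h x hx
    have hm : g * x * g⁻¹ ∈ cnj g H := by rw [mem_cnj]; group; simpa using hx
    have := h hm
    rw [mem_cnj] at this
    convert this using 1 <;> group
  · exact cnj_mono

def cnjIso (g : G) : Subgroup G ≃o Subgroup G where
  toFun := cnj g
  invFun := cnj g⁻¹
  left_inv := fun H => by rw [cnj_cnj, inv_mul_cancel, cnj_one]
  right_inv := fun H => by rw [cnj_cnj, mul_inv_cancel, cnj_one]
  map_rel_iff' := cnj_le_iff

lemma cnj_sInf (g : G) (S : Set (Subgroup G)) : cnj g (sInf S) = sInf (cnj g '' S) :=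
  map_sInf (cnjIso g) S

lemma cnj_sSup (g : G) (S : Set (Subgroup G)) : cnj g (sSup S) = sSup (cnj g '' S) :=
  map_sSup (cnjIso g) S

lemma cnj_bot (g : G) : cnj g (⊥ : Subgroup G) = ⊥ := map_bot (cnjIso g)

lemma cnj_inf (g : G) (H K : Subgroup G) : cnj g (H ⊓ K) = cnj g H ⊓ cnj g K := by
  ext x; simp [mem_cnj, Subgroup.mem_inf]

lemma cnj_eq_bot_iff {g : G} {H : Subgroup G} : cnj g H = ⊥ ↔ H = ⊥ := by
  constructor
  · intro h
    have := congrArg (cnj g⁻¹) h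
    rwa [cnj_cnj, inv_mul_cancel, cnj_one, cnj_bot] at this
  · rintro rfl; exact cnj_bot g

lemma cnj_of_normal {g : G} {N : Subgroup G} (hN : N.Normal) : cnj g N = N := by
  ext x
  rw [mem_cnj]
  constructor
  · intro h
    have := hN.conj_mem _ h g
    convert this using 1; group
  · intro h
    have := hN.conj_mem _ h g⁻¹
    convert this using 1; group

lemma normal_of_cnj {N : Subgroup G} (h : ∀ g : G, cnj g N = N) : N.Normal := by
  constructor
  intro n hn g
  have : g * n * g⁻¹ ∈ cnj g N := by rw [mem_cnj]; convert hn using 1; group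
  rwa [h g] at this

lemma mem_conjugatesSet {H C : Subgroup G} : C ∈ conjugatesSet G H ↔ ∃ g : G, cnj g H = C :=
  Iff.rfl

lemma self_mem_conjugatesSet (H : Subgroup G) : H ∈ conjugatesSet G H := ⟨1, cnj_one H⟩

lemma cnj_mem_conjugatesSet {H C : Subgroup G} (hC : C ∈ conjugatesSet G H) (g : G) :
    cnj g C ∈ conjugatesSet G H := by
  obtain ⟨h, rfl⟩ := hC
  exact ⟨g * h, (cnj_cnj g h H).symm ▸ rfl⟩

lemma cnj_image_conjugatesSet (g : G) (H : Subgroup G) :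
    cnj g '' conjugatesSet G H = conjugatesSet G H := by
  apply Set.Subset.antisymm
  · rintro _ ⟨C, hC, rfl⟩; exact cnj_mem_conjugatesSet hC g
  · rintro C ⟨h, rfl⟩
    refine ⟨cnj (g⁻¹ * h) H, ⟨g⁻¹ * h, rfl⟩, ?_⟩
    rw [cnj_cnj, mul_inv_cancel_left]; exact rfl

lemma finite_conjugatesSet {N H : Subgroup G} (hfi : N.FiniteIndex)
    (hfix : ∀ n ∈ N, cnj n H = H) : (conjugatesSet G H).Finite := by
  haveI := hfi
  haveI : Finite (G ⧸ N) := N.finite_quotient_of_finiteIndex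
  let f : G ⧸ N → Subgroup G := fun q =>
    Quotient.liftOn' q (fun g => cnj g H) (by
      intro a b hab
      rw [QuotientGroup.leftRel_apply] at hab
      have : cnj b H = cnj a (cnj (a⁻¹ * b) H) := by rw [cnj_cnj, mul_inv_cancel_left]
      simp only [this, hfix _ hab])
  have hsub : conjugatesSet G H ⊆ Set.range f := by
    rintro C ⟨g, rfl⟩
    exact ⟨QuotientGroup.mk g, rfl⟩
  exact (Set.finite_range f).subset hsub


section Derived
variable (N : Subgroup G)

/-- Elements of `A ⊔ P` decompose as `a * p` when `P` is normalized by everything in sight. -/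
lemma sup_decomp {A P : Subgroup G} (hA : A ≤ N) (hP : P ≤ N)
    (hPfix : ∀ n ∈ N, cnj n P = P) :
    ∀ x ∈ A ⊔ P, ∃ a ∈ A, ∃ p ∈ P, x = a * p := by
  have key : ∀ a ∈ A, ∀ p ∈ P, a⁻¹ * p * a ∈ P := by
    intro a ha p hp
    have : p ∈ cnj a P := (hPfix a (hA ha)).symm ▸ hp
    rw [mem_cnj] at this
    exact this
  have key2 : ∀ a ∈ A, ∀ p ∈ P, a * p * a⁻¹ ∈ P := by
    intro a ha p hp
    have := key a⁻¹ (A.inv_mem ha) p hp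
    simpa using this
  let Q : Subgroup G :=
    { carrier := { x | ∃ a ∈ A, ∃ p ∈ P, x = a * p }
      one_mem' := ⟨1, A.one_mem, 1, P.one_mem, by group⟩
      mul_mem' := by
        rintro x y ⟨a₁, ha₁, p₁, hp₁, rfl⟩ ⟨a₂, ha₂, p₂, hp₂, rfl⟩
        refine ⟨a₁ * a₂, A.mul_mem ha₁ ha₂, (a₂⁻¹ * p₁ * a₂) * p₂,
          P.mul_mem (key a₂ ha₂ p₁ hp₁) hp₂, ?_⟩
        group
      inv_mem' := by
        rintro x ⟨a, ha, p, hp, rfl⟩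
        refine ⟨a⁻¹, A.inv_mem ha, a * p⁻¹ * a⁻¹, key2 a ha p⁻¹ (P.inv_mem hp), ?_⟩
        group }
  intro x hx
  have : A ⊔ P ≤ Q := by
    apply sup_le
    · intro a ha; exact ⟨a, ha, 1, P.one_mem, by group⟩
    · intro p hp; exact ⟨1, A.one_mem, p, hp, by group⟩
  exact this hx

lemma commutator_sup_le_of_abelian {A P : Subgroup G} (hA : A ≤ N) (hP : P ≤ N)
    (hPfix : ∀ n ∈ N, cnj n P = P)
    (hab : ∀ x ∈ A, ∀ y ∈ A, x * y = y * x) :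
    ⁅A ⊔ P, A ⊔ P⁆ ≤ P := by
  have hconj : ∀ n ∈ N, ∀ p ∈ P, n * p * n⁻¹ ∈ P := by
    intro n hn p hp
    have : p ∈ cnj n⁻¹ P := (hPfix n⁻¹ (N.inv_mem hn)).symm ▸ hp
    rw [mem_cnj] at this
    simpa using this
  rw [Subgroup.commutator_le]
  intro x hx y hy
  obtain ⟨a₁, ha₁, p₁, hp₁, rfl⟩ := sup_decomp N hA hP hPfix x hx
  obtain ⟨a₂, ha₂, p₂, hp₂, rfl⟩ := sup_decomp N hA hP hPfix y hy
  have hu : a₂⁻¹ * p₁ * a₂ * p₂ ∈ P := by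
    refine P.mul_mem ?_ hp₂
    have := hconj a₂⁻¹ (N.inv_mem (hA ha₂)) p₁ hp₁
    simpa using this
  have hv : a₁⁻¹ * p₂ * a₁ * p₁ ∈ P := by
    refine P.mul_mem ?_ hp₁
    have := hconj a₁⁻¹ (N.inv_mem (hA ha₁)) p₂ hp₂
    simpa using this
  have hw : (a₁ * a₂) * ((a₂⁻¹ * p₁ * a₂ * p₂) * (a₁⁻¹ * p₂ * a₁ * p₁)⁻¹) * (a₁ * a₂)⁻¹ ∈ P :=
    hconj (a₁ * a₂) (N.mul_mem (hA ha₁) (hA ha₂)) _ (P.mul_mem hu (P.inv_mem hv))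
  have hid : ⁅a₁ * p₁, a₂ * p₂⁆ =
      (a₁ * a₂) * ((a₂⁻¹ * p₁ * a₂ * p₂) * (a₁⁻¹ * p₂ * a₁ * p₁)⁻¹) * (a₁ * a₂)⁻¹ := by
    rw [commutatorElement_def]
    have hc : a₂ * a₁ = a₁ * a₂ := hab a₂ ha₂ a₁ ha₁
    calc a₁ * p₁ * (a₂ * p₂) * (a₁ * p₁)⁻¹ * (a₂ * p₂)⁻¹
        = (a₁ * a₂) * ((a₂⁻¹ * p₁ * a₂ * p₂) * (a₁⁻¹ * p₂ * a₁ * p₁)⁻¹) * (a₂ * a₁)⁻¹ := by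
          group
      _ = (a₁ * a₂) * ((a₂⁻¹ * p₁ * a₂ * p₂) * (a₁⁻¹ * p₂ * a₁ * p₁)⁻¹) * (a₁ * a₂)⁻¹ := by
          rw [hc]
  rw [hid]
  exact hw

lemma derived_iterate_mono : ∀ (n : ℕ) {X Y : Subgroup G}, X ≤ Y →
    (fun X : Subgroup G => ⁅X, X⁆)^[n] X ≤ (fun X : Subgroup G => ⁅X, X⁆)^[n] Y := by
  intro n
  induction n with
  | zero => intro X Y h; exact h
  | succ n ih =>
    intro X Y h
    rw [Function.iterate_succ_apply, Function.iterate_succ_apply]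
    exact ih (Subgroup.commutator_mono h h)

lemma exists_derived_bot (s : Finset (Subgroup G))
    (h : ∀ A ∈ s, A ≤ N ∧ (∀ n ∈ N, cnj n A = A) ∧ ∀ x ∈ A, ∀ y ∈ A, x * y = y * x) :
    ∃ n : ℕ, (fun X : Subgroup G => ⁅X, X⁆)^[n] (s.sup id) = ⊥ := by
  classical
  induction s using Finset.induction with
  | empty => exact ⟨0, by simp⟩
  | @insert A t hAt ih =>
    obtain ⟨n, hn⟩ := ih (fun B hB => h B (Finset.mem_insert_of_mem hB))
    obtain ⟨hAN, hAfix, hAab⟩ := h A (Finset.mem_insert_self A t)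
    set P := t.sup id with hPdef
    have hPle : P ≤ N := by
      apply Finset.sup_le
      intro B hB
      exact (h B (Finset.mem_insert_of_mem hB)).1
    have hPfix : ∀ m ∈ N, cnj m P = P := by
      intro m hm
      have : P = sSup (t : Set (Subgroup G)) := by
        rw [hPdef, ← Finset.sup_id_eq_sSup]
      rw [this, cnj_sSup]
      congr 1
      apply Set.Subset.antisymm
      · rintro _ ⟨B, hB, rfl⟩
        rw [(h B (Finset.mem_insert_of_mem hB)).2.1 m hm]
        exact hB
      · intro B hB
        exact ⟨B, hB, (h B (Finset.mem_insert_of_mem hB)).2.1 m hm⟩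
    refine ⟨n + 1, ?_⟩
    rw [Finset.sup_insert, Function.iterate_succ_apply]
    have h1 : ⁅A ⊔ P, A ⊔ P⁆ ≤ P := commutator_sup_le_of_abelian N hAN hPle hPfix hAab
    have := derived_iterate_mono n h1
    rw [hn] at this
    simpa using le_bot_iff.mp this

end Derived


/-- In a just infinite group, a nontrivial abelian subgroup normal in a
finite-index normal subgroup forces virtual abelianness. -/
lemma virtuallyAbelian_of_abelian (hji : JustInfinite G)
    {N : Subgroup G} (hNn : N.Normal) (hNfi : N.FiniteIndex)
    {M : Subgroup G} (hMbot : M ≠ ⊥) (hMN : M ≤ N)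
    (hfix : ∀ n ∈ N, cnj n M = M)
    (hab : ∀ x ∈ M, ∀ y ∈ M, x * y = y * x) : VirtuallyAbelian G := by
  classical
  have hCfin : (conjugatesSet G M).Finite := finite_conjugatesSet hNfi hfix
  have hgood : ∀ C ∈ conjugatesSet G M,
      C ≤ N ∧ (∀ n ∈ N, cnj n C = C) ∧ ∀ x ∈ C, ∀ y ∈ C, x * y = y * x := by
    rintro _ ⟨g, rfl⟩
    refine ⟨?_, ?_, ?_⟩
    · calc cnj g M ≤ cnj g N := cnj_mono hMN
        _ = N := cnj_of_normal hNn
    · intro n hn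
      show cnj n (cnj g M) = cnj g M
      have hmem : g⁻¹ * n * g ∈ N := by
        have := hNn.conj_mem n hn g⁻¹
        simpa [mul_assoc] using this
      rw [cnj_cnj]
      have : n * g = g * (g⁻¹ * n * g) := by group
      rw [this, ← cnj_cnj, hfix _ hmem]
    · intro x hx y hy
      show x * y = y * x
      replace hx : x ∈ cnj g M := hx
      replace hy : y ∈ cnj g M := hy
      rw [mem_cnj] at hx hy
      have h := hab _ hx _ hy
      have h2 : g⁻¹ * (x * y) * g = g⁻¹ * (y * x) * g := by
        calc g⁻¹ * (x * y) * g = (g⁻¹ * x * g) * (g⁻¹ * y * g) := by group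
          _ = (g⁻¹ * y * g) * (g⁻¹ * x * g) := h
          _ = g⁻¹ * (y * x) * g := by group
      have := congrArg (fun z => g * z * g⁻¹) h2
      simpa [mul_assoc] using this
  set s : Finset (Subgroup G) := hCfin.toFinset with hs
  set S : Subgroup G := s.sup id with hSdef
  have hSsSup : S = sSup (conjugatesSet G M) := by
    rw [hSdef, Finset.sup_id_eq_sSup]
    congr 1
    simp [hs]
  have hMS : M ≤ S := by
    rw [hSsSup]
    exact le_sSup (self_mem_conjugatesSet M)
  have hSbot : S ≠ ⊥ := fun h => hMbot (le_bot_iff.mp (h ▸ hMS))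
  have hSnormal : S.Normal := by
    apply normal_of_cnj
    intro g
    rw [hSsSup, cnj_sSup, cnj_image_conjugatesSet]
  obtain ⟨n, hn⟩ := exists_derived_bot N s (by
    intro A hA
    exact hgood A (by simpa [hs] using hA))
  -- iterated derived subgroups
  set D : Subgroup G → Subgroup G := fun X => ⁅X, X⁆ with hD
  have hnormal : ∀ k : ℕ, (D^[k] S).Normal := by
    intro k
    induction k with
    | zero => exact hSnormal
    | succ k ih =>
      rw [Function.iterate_succ_apply']
      exact @Subgroup.commutator_normal G _ _ _ ih ih
  have hex : ∃ k, D^[k] S = ⊥ := ⟨n, hn⟩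
  have hk₀pos : Nat.find hex ≠ 0 := by
    intro h
    have := Nat.find_spec hex
    rw [h] at this
    exact hSbot this
  obtain ⟨k, hk⟩ : ∃ k, Nat.find hex = k + 1 :=
    ⟨Nat.find hex - 1, (Nat.succ_pred_eq_of_pos (Nat.pos_of_ne_zero hk₀pos)).symm⟩
  have hkbot : D^[k + 1] S = ⊥ := hk ▸ Nat.find_spec hex
  have hkne : D^[k] S ≠ ⊥ := Nat.find_min hex (by omega)
  set A := D^[k] S with hA
  have hAnormal : A.Normal := hnormal k
  have hAfi : A.FiniteIndex := hji.2.2 A hAnormal hkne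
  have hAab : ∀ x ∈ A, ∀ y ∈ A, x * y = y * x := by
    intro x hx y hy
    have : ⁅x, y⁆ ∈ D^[k + 1] S := by
      rw [Function.iterate_succ_apply']
      exact Subgroup.commutator_mem_commutator hx hy
    rw [hkbot, Subgroup.mem_bot] at this
    exact commutatorElement_eq_one_iff_mul_comm.mp this
  exact ⟨A, hAfi, fun a b => Subtype.ext (hAab a a.2 b b.2)⟩


lemma conj_mem_of_fix {X : Subgroup G} {n : G} (h : cnj n X = X) {x : G} (hx : x ∈ X) :
    n * x * n⁻¹ ∈ X := by
  have hsimp : n⁻¹ * (n * x * n⁻¹) * n = x := by group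
  rw [← h, mem_cnj, hsimp]
  exact hx

lemma cnj_fix_of_fix {N : Subgroup G} (hNn : N.Normal) {M : Subgroup G}
    (hfix : ∀ n ∈ N, cnj n M = M) (g : G) : ∀ n ∈ N, cnj n (cnj g M) = cnj g M := by
  intro n hn
  have hmem : g⁻¹ * n * g ∈ N := by
    have := hNn.conj_mem n hn g⁻¹
    simpa [mul_assoc] using this
  rw [cnj_cnj]
  have h2 : n * g = g * (g⁻¹ * n * g) := by group
  rw [h2, ← cnj_cnj, hfix _ hmem]

lemma iSup_conjugatesSet_eq_normalClosure (B : Subgroup G) :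
    (⨆ C ∈ conjugatesSet G B, C) = Subgroup.normalClosure (B : Set G) := by
  have hsup : sSup (conjugatesSet G B) = ⨆ C ∈ conjugatesSet G B, C := sSup_eq_iSup
  rw [← hsup]
  apply le_antisymm
  · apply sSup_le
    rintro _ ⟨g, rfl⟩ x hx
    replace hx : x ∈ cnj g B := hx
    rw [mem_cnj] at hx
    have hxe : x = g * (g⁻¹ * x * g) * g⁻¹ := by group
    rw [hxe]
    exact Subgroup.normalClosure_normal.conj_mem _ (Subgroup.subset_normalClosure hx) g
  · haveI hnormal : (sSup (conjugatesSet G B)).Normal :=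
      normal_of_cnj (fun g => by rw [cnj_sSup, cnj_image_conjugatesSet])
    apply Subgroup.normalClosure_le_normal
    intro x hx
    exact le_sSup (self_mem_conjugatesSet B) hx

end BasalAux

open BasalAux in
/-- In a just infinite group which is not virtually abelian, a nontrivial
subgroup K normal in its normal closure has finitely many conjugates, and
some intersection of conjugates of K is basal. -/
theorem exists_basal_of_normal_in_normalClosure {G : Type*} [Group G]
    (hji : JustInfinite G) (hnva : ¬ VirtuallyAbelian G)
    (K : Subgroup G) (hK : K ≠ ⊥)
    (hnc : ∀ g ∈ Subgroup.normalClosure (K : Set G), ∀ k ∈ K, g * k * g⁻¹ ∈ K) :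
    (conjugatesSet G K).Finite ∧
      ∃ T : Set (Subgroup G), T ⊆ conjugatesSet G K ∧ T.Nonempty ∧
        IsBasal G (sInf T) := by
  classical
  set N := Subgroup.normalClosure (K : Set G) with hNdef
  have hNnormal : N.Normal := Subgroup.normalClosure_normal
  have hKN : K ≤ N := Subgroup.le_normalClosure
  have hNbot : N ≠ ⊥ := fun h => hK (le_bot_iff.mp (h ▸ hKN))
  have hNfi : N.FiniteIndex := hji.2.2 N hNnormal hNbot
  have hKfix : ∀ n ∈ N, cnj n K = K := by
    intro n hn
    apply le_antisymm
    · intro x hx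
      rw [mem_cnj] at hx
      have := hnc n hn _ hx
      simpa [mul_assoc] using this
    · intro x hx
      rw [mem_cnj]
      have := hnc n⁻¹ (N.inv_mem hn) x hx
      simpa using this
  have hfinK : (conjugatesSet G K).Finite := finite_conjugatesSet hNfi hKfix
  -- the set of intersections of nonempty families of conjugates of K
  set P : Set (Subgroup G) := (fun T => sInf T) '' {T | T ⊆ conjugatesSet G K ∧ T.Nonempty}
    with hPdef
  have hPfin : P.Finite :=
    ((hfinK.finite_subsets).subset (fun T hT => hT.1)).image _
  have hKP : K ∈ P := ⟨{K}, ⟨Set.singleton_subset_iff.mpr (self_mem_conjugatesSet K),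
    Set.singleton_nonempty K⟩, sInf_singleton⟩
  have hconjKfix : ∀ C ∈ conjugatesSet G K, ∀ n ∈ N, cnj n C = C := by
    rintro _ ⟨g, rfl⟩
    exact cnj_fix_of_fix hNnormal hKfix g
  have hPfix : ∀ X ∈ P, ∀ n ∈ N, cnj n X = X := by
    rintro _ ⟨T, ⟨hTsub, hTne⟩, rfl⟩ n hn
    rw [cnj_sInf]
    congr 1
    apply Set.Subset.antisymm
    · rintro _ ⟨C, hC, rfl⟩
      rw [hconjKfix C (hTsub hC) n hn]
      exact hC
    · intro C hC
      exact ⟨C, hC, hconjKfix C (hTsub hC) n hn⟩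
  have hPleN : ∀ X ∈ P, X ≤ N := by
    rintro _ ⟨T, ⟨hTsub, hTne⟩, rfl⟩
    obtain ⟨C, hC⟩ := hTne
    obtain ⟨g, rfl⟩ := hTsub hC
    calc sInf T ≤ cnj g K := sInf_le hC
      _ ≤ cnj g N := cnj_mono hKN
      _ = N := cnj_of_normal hNnormal
  have hPcnj : ∀ g : G, ∀ X ∈ P, cnj g X ∈ P := by
    rintro g _ ⟨T, ⟨hTsub, hTne⟩, rfl⟩
    refine ⟨cnj g '' T, ⟨?_, hTne.image _⟩, (cnj_sInf g T).symm⟩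
    rintro _ ⟨C, hC, rfl⟩
    exact cnj_mem_conjugatesSet (hTsub hC) g
  have hPinf : ∀ X ∈ P, ∀ Y ∈ P, X ⊓ Y ∈ P := by
    rintro _ ⟨T₁, ⟨h1, h1n⟩, rfl⟩ _ ⟨T₂, ⟨h2, h2n⟩, rfl⟩
    exact ⟨T₁ ∪ T₂, ⟨Set.union_subset h1 h2, h1n.inl⟩, sInf_union⟩
  -- choose a minimal nontrivial element of P
  have hQne : ({X ∈ P | X ≠ ⊥} : Set (Subgroup G)).Nonempty := ⟨K, hKP, hK⟩
  obtain ⟨B, ⟨hBP, hBbot⟩, hBmin⟩ : ∃ B, B ∈ {X ∈ P | X ≠ ⊥} ∧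
      ∀ X ∈ {X ∈ P | X ≠ ⊥}, id X ≤ id B → id B = id X := by
    obtain ⟨B, hB⟩ := Set.Finite.exists_minimal (hPfin.subset (Set.sep_subset _ _)) hQne
    exact ⟨B, hB.1, fun X hX hle => le_antisymm (hB.2 hX hle) hle⟩
  have hmin : ∀ X ∈ P, X ≠ ⊥ → X ≤ B → X = B := by
    intro X hX hXbot hle
    exact (hBmin X ⟨hX, hXbot⟩ hle).symm
  -- conjugates of B are also minimal nontrivial elements of P
  have hconjBmin : ∀ g : G, ∀ X ∈ P, X ≠ ⊥ → X ≤ cnj g B → X = cnj g B := by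
    intro g X hX hXbot hle
    have h1 : cnj g⁻¹ X ∈ P := hPcnj g⁻¹ X hX
    have h2 : cnj g⁻¹ X ≠ ⊥ := fun h => hXbot (cnj_eq_bot_iff.mp h)
    have h3 : cnj g⁻¹ X ≤ B := by
      have := cnj_mono (g := g⁻¹) hle
      rwa [cnj_cnj, inv_mul_cancel, cnj_one] at this
    have h4 := hmin _ h1 h2 h3
    have h5 := congrArg (cnj g) h4
    rwa [cnj_cnj, mul_inv_cancel, cnj_one] at h5
  -- facts about conjugates of B
  have hconjBP : ∀ C ∈ conjugatesSet G B, C ∈ P ∧ C ≠ ⊥ := by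
    rintro _ ⟨g, rfl⟩
    exact ⟨hPcnj g B hBP, fun h => hBbot (cnj_eq_bot_iff.mp h)⟩
  -- pairwise trivial intersections
  have hpair : ∀ C ∈ conjugatesSet G B, ∀ D ∈ conjugatesSet G B, C ≠ D → C ⊓ D = ⊥ := by
    intro C hC D hD hCD
    by_contra hne
    have hCP := (hconjBP C hC).1
    have hDP := (hconjBP D hD).1
    obtain ⟨g, hg⟩ := hC
    obtain ⟨h, hh⟩ := hD
    have hinfP : C ⊓ D ∈ P := hPinf C hCP D hDP
    have hg' : cnj g B = C := hg
    have hh' : cnj h B = D := hh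
    have h1 : C ⊓ D = C :=
      (hconjBmin g _ hinfP hne (le_trans inf_le_left hg'.ge)).trans hg'
    have h2 : C ⊓ D = D :=
      (hconjBmin h _ hinfP hne (le_trans inf_le_right hh'.ge)).trans hh'
    exact hCD (h1 ▸ h2)
  -- pairwise commuting
  have hcomm : ∀ C ∈ conjugatesSet G B, ∀ D ∈ conjugatesSet G B, C ≠ D →
      ∀ x ∈ C, ∀ y ∈ D, Commute x y := by
    intro C hC D hD hCD x hx y hy
    have hCP := (hconjBP C hC).1
    have hDP := (hconjBP D hD).1
    have hxN : x ∈ N := hPleN C hCP hx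
    have hyN : y ∈ N := hPleN D hDP hy
    have h1 : x * y * x⁻¹ ∈ D := conj_mem_of_fix (hPfix D hDP x hxN) hy
    have h2 : y * x⁻¹ * y⁻¹ ∈ C := conj_mem_of_fix (hPfix C hCP y hyN) (C.inv_mem hx)
    have hmem : x * y * x⁻¹ * y⁻¹ ∈ C ⊓ D := by
      constructor
      · have : x * y * x⁻¹ * y⁻¹ = x * (y * x⁻¹ * y⁻¹) := by group
        rw [this]
        exact C.mul_mem hx h2
      · exact D.mul_mem h1 (D.inv_mem hy)
    rw [hpair C hC D hD hCD, Subgroup.mem_bot] at hmem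
    have : ⁅x, y⁆ = 1 := by rw [commutatorElement_def]; exact hmem
    exact commutatorElement_eq_one_iff_commute.mp this
  have hBfix : ∀ n ∈ N, cnj n B = B := hPfix B hBP
  have hfinB : (conjugatesSet G B).Finite := finite_conjugatesSet hNfi hBfix
  -- independence
  have hindep : iSupIndep (fun C : conjugatesSet G B => (C : Subgroup G)) := by
    intro C
    rw [disjoint_iff]
    set W : Subgroup G := ⨆ (j : conjugatesSet G B) (_ : j ≠ C), (j : Subgroup G) with hWdef
    have hWsSup : W = sSup (conjugatesSet G B \ {(C : Subgroup G)}) := by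
      apply le_antisymm
      · apply iSup₂_le
        intro j hj
        exact le_sSup ⟨j.2, fun h => hj (Subtype.coe_injective (Set.mem_singleton_iff.mp h))⟩
      · apply sSup_le
        intro D hD
        exact le_iSup₂_of_le ⟨D, hD.1⟩ (fun h => hD.2 (Set.mem_singleton_iff.mpr (congrArg Subtype.val h))) le_rfl
    by_contra hMbot
    set M : Subgroup G := (C : Subgroup G) ⊓ W with hMdef
    have hCP := (hconjBP (C : Subgroup G) C.2).1
    have hMN : M ≤ N := le_trans inf_le_left (hPleN _ hCP)
    have hMfix : ∀ n ∈ N, cnj n M = M := by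
      intro n hn
      rw [hMdef, cnj_inf, hPfix _ hCP n hn]
      congr 1
      rw [hWsSup, cnj_sSup]
      congr 1
      apply Set.Subset.antisymm
      · rintro _ ⟨D, hD, rfl⟩
        rw [hPfix D (hconjBP D hD.1).1 n hn]
        exact hD
      · intro D hD
        exact ⟨D, hD, hPfix D (hconjBP D hD.1).1 n hn⟩
    have hWcent : W ≤ Subgroup.centralizer ((C : Subgroup G) : Set G) := by
      rw [hWsSup]
      apply sSup_le
      intro D hD
      intro d hd
      rw [Subgroup.mem_centralizer_iff]
      intro c hc
      have hcd := hcomm _ C.2 _ hD.1 (fun h => hD.2 (Set.mem_singleton_iff.mpr h.symm)) c hc d hd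
      exact hcd
    have hMab : ∀ x ∈ M, ∀ y ∈ M, x * y = y * x := by
      intro x hx y hy
      have hyc : y ∈ Subgroup.centralizer ((C : Subgroup G) : Set G) := hWcent hy.2
      rw [Subgroup.mem_centralizer_iff] at hyc
      exact hyc x hx.1
    exact absurd (virtuallyAbelian_of_abelian hji hNnormal hNfi hMbot hMN hMfix hMab) hnva
  -- conclusion
  obtain ⟨T₀, ⟨hT₀sub, hT₀ne⟩, hT₀inf⟩ := hBP
  refine ⟨hfinK, T₀, hT₀sub, hT₀ne, ?_⟩
  rw [show sInf T₀ = B from hT₀inf]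
  refine ⟨hBbot, hfinB, ?_, hindep, iSup_conjugatesSet_eq_normalClosure B⟩
  intro Cs hC Ds hD hCD
  exact ⟨hpair Cs hC Ds hD hCD, hcomm Cs hC Ds hD hCD⟩
end

section
/- Let G be a just infinite group that is not virtually abelian, and let H be a finite-index subgroup of G. If H is not just infinite, then there exists a basal subgroup B of G such that H acts intransitively by conjugation on the set of G-conjugates of B, and the normal core of H in G acts trivially on this set. -/
section Aux

variable {G : Type*} [Group G]

/-- conjugation of a subgroup -/
private def cm (g : G) (B : Subgroup G) : Subgroup G :=
  B.map (MulAut.conj g).toMonoidHom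

private lemma cm_def (g : G) (B : Subgroup G) :
    cm g B = B.map (MulAut.conj g).toMonoidHom := rfl

private lemma mem_cm {g x : G} {B : Subgroup G} : x ∈ cm g B ↔ g⁻¹ * x * g ∈ B := by
  rw [cm_def, Subgroup.mem_map_equiv]
  simp [MulAut.conj_symm_apply, mul_assoc]

private lemma cm_cm (g h : G) (B : Subgroup G) : cm g (cm h B) = cm (g * h) B := by
  ext x
  simp only [mem_cm, mul_inv_rev, mul_assoc]

private lemma cm_one (B : Subgroup G) : cm 1 B = B := by
  ext x; simp [mem_cm]

private lemma cm_mono {g : G} {A B : Subgroup G} (h : A ≤ B) : cm g A ≤ cm g B := by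
  intro x hx; rw [mem_cm] at hx ⊢; exact h hx

private lemma cm_inf (g : G) (A B : Subgroup G) : cm g (A ⊓ B) = cm g A ⊓ cm g B := by
  ext x; simp [mem_cm, Subgroup.mem_inf]

private lemma cm_bot (g : G) : cm g (⊥ : Subgroup G) = ⊥ := by
  ext x
  simp only [mem_cm, Subgroup.mem_bot]
  constructor
  · intro h
    have : g * (g⁻¹ * x * g) * g⁻¹ = x := by group
    rw [h] at this; simpa using this.symm
  · rintro rfl; group
private lemma cm_injective (g : G) : Function.Injective (cm g : Subgroup G → Subgroup G) := by
  intro A B h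
  have := congrArg (cm g⁻¹) h
  rwa [cm_cm, cm_cm, inv_mul_cancel, cm_one, cm_one] at this

private lemma cm_eq_bot_iff {g : G} {B : Subgroup G} : cm g B = ⊥ ↔ B = ⊥ := by
  constructor
  · intro h; apply cm_injective g; rw [h, cm_bot]
  · rintro rfl; exact cm_bot g

private lemma cm_of_normal {g : G} {L : Subgroup G} (hL : L.Normal) : cm g L = L := by
  ext x
  rw [mem_cm]
  constructor
  · intro h
    have := hL.conj_mem _ h g
    simpa [mul_assoc] using this
  · intro h
    simpa [mul_assoc] using hL.conj_mem _ h g⁻¹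

private lemma mem_conjugatesSet {B C : Subgroup G} :
    C ∈ conjugatesSet G B ↔ ∃ g : G, cm g B = C := Iff.rfl

private lemma cm_mem_conjugatesSet (g : G) (B : Subgroup G) :
    cm g B ∈ conjugatesSet G B := ⟨g, rfl⟩

private lemma self_mem_conjugatesSet (B : Subgroup G) : B ∈ conjugatesSet G B :=
  ⟨1, cm_one B⟩


/-- The central trick: in a just infinite, non virtually abelian group, any
subgroup of a nontrivial normal subgroup `N` that is centralized by `N`
is trivial. -/
private lemma aux_central (hji : JustInfinite G) (hnva : ¬ VirtuallyAbelian G)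
    {N X : Subgroup G} (hN : N.Normal) (hXN : X ≤ N)
    (hcomm : ∀ n ∈ N, ∀ x ∈ X, n * x = x * n) : X = ⊥ := by
  by_contra hX
  set Z : Subgroup G := Subgroup.centralizer (N : Set G) ⊓ N with hZdef
  have hXZ : X ≤ Z := by
    refine le_inf (fun x hx => Subgroup.mem_centralizer_iff.2 fun n hn => ?_) hXN
    exact hcomm n hn x hx
  have hZn : Z.Normal := by
    constructor
    intro z hz g
    obtain ⟨hzC, hzN⟩ := hz
    refine ⟨Subgroup.mem_centralizer_iff.2 fun n hn => ?_, hN.conj_mem z hzN g⟩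
    have hn' : g⁻¹ * n * g ∈ N := by simpa using hN.conj_mem n hn g⁻¹
    have h1 : (g⁻¹ * n * g) * z = z * (g⁻¹ * n * g) :=
      Subgroup.mem_centralizer_iff.1 hzC _ hn'
    calc n * (g * z * g⁻¹) = g * ((g⁻¹ * n * g) * z) * g⁻¹ := by group
      _ = g * (z * (g⁻¹ * n * g)) * g⁻¹ := by rw [h1]
      _ = g * z * g⁻¹ * n := by group
  have hZne : Z ≠ ⊥ := by
    intro h
    exact hX (le_bot_iff.1 (h ▸ hXZ))
  have hZfi : Z.FiniteIndex := hji.2.2 Z hZn hZne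
  refine hnva ⟨Z, hZfi, fun a b => ?_⟩
  have ha := a.2.1
  have hb := b.2.2
  exact Subtype.ext (Subgroup.mem_centralizer_iff.1 ha _ hb).symm

/-- Residual finiteness passes to subgroups. -/
private lemma aux_rf (hrf : ResiduallyFinite G) (H : Subgroup G) : ResiduallyFinite H := by
  rw [ResiduallyFinite, eq_bot_iff]
  intro x hx
  rw [Subgroup.mem_sInf] at hx
  have hxG : (x : G) ∈ sInf {N : Subgroup G | N.Normal ∧ N.FiniteIndex} := by
    rw [Subgroup.mem_sInf]
    rintro N ⟨hNn, hNfi⟩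
    have h1 : (N.subgroupOf H).Normal := hNn.subgroupOf H
    have h2 : (N.subgroupOf H).FiniteIndex := by
      constructor
      have : N.relIndex H ∣ N.index := by
        haveI := hNn
        exact Subgroup.relIndex_dvd_index_of_normal N H
      exact ne_zero_of_dvd_ne_zero hNfi.index_ne_zero this
    have := hx (N.subgroupOf H) ⟨h1, h2⟩
    exact this
  rw [hrf, Subgroup.mem_bot] at hxG
  simpa [Subgroup.mem_bot] using Subtype.ext hxG

/-- If `B` is normalized by a finite index subgroup `L`, `B` has finitely
many conjugates.  -/
private lemma aux_orbit_finite {L B : Subgroup G} [L.FiniteIndex]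
    (hLB : ∀ l ∈ L, cm l B = B) : (conjugatesSet G B).Finite := by
  have wd : ∀ a b : G, QuotientGroup.leftRel L a b → cm a B = cm b B := by
    intro a b h
    rw [QuotientGroup.leftRel_apply] at h
    have h2 : cm a (cm (a⁻¹ * b) B) = cm a B := by rw [hLB _ h]
    rw [cm_cm] at h2
    rw [← h2]
    congr 1
    group
  have : conjugatesSet G B =
      Set.range (fun q : G ⧸ L => Quotient.liftOn q (fun g => cm g B) wd) := by
    ext C
    constructor
    · rintro ⟨g, rfl⟩
      exact ⟨QuotientGroup.mk g, rfl⟩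
    · rintro ⟨q, rfl⟩
      induction q using Quotient.inductionOn with
      | h g => exact ⟨g, rfl⟩
  rw [this]
  exact Set.finite_range _

/-- An element with finitely many conjugates has finite index centralizer. -/
private lemma aux_centralizer_fi {x : G} {U : Set G} (hU : U.Finite)
    (hconj : ∀ g : G, g * x * g⁻¹ ∈ U) : (Subgroup.centralizer {x}).FiniteIndex := by
  set C : Subgroup G := Subgroup.centralizer {x} with hCdef
  have wd : ∀ a b : G, QuotientGroup.leftRel C a b → a * x * a⁻¹ = b * x * b⁻¹ := by
    intro a b h
    rw [QuotientGroup.leftRel_apply] at h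
    rw [Subgroup.mem_centralizer_singleton_iff] at h
    calc a * x * a⁻¹ = a * (x * (a⁻¹ * b)) * b⁻¹ := by group
      _ = a * ((a⁻¹ * b) * x) * b⁻¹ := by rw [← h]
      _ = b * x * b⁻¹ := by group
  have hinj : Function.Injective
      (fun q : G ⧸ C => Quotient.liftOn q (fun g => g * x * g⁻¹) wd) := by
    intro q₁ q₂ h
    induction q₁ using Quotient.inductionOn with
    | h a =>
      induction q₂ using Quotient.inductionOn with
      | h b =>
        simp only [Quotient.liftOn_mk] at h
        apply Quotient.sound
        show QuotientGroup.leftRel C a b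
        rw [QuotientGroup.leftRel_apply, Subgroup.mem_centralizer_singleton_iff]
        calc a⁻¹ * b * x = a⁻¹ * (b * x * b⁻¹) * b := by group
          _ = a⁻¹ * (a * x * a⁻¹) * b := by rw [h]
          _ = x * (a⁻¹ * b) := by group
  haveI : Finite ↥U := hU.to_subtype
  have hmem : ∀ q : G ⧸ C, Quotient.liftOn q (fun g => g * x * g⁻¹) wd ∈ U := by
    intro q
    induction q using Quotient.inductionOn with
    | h a => exact hconj a
  haveI : Finite (G ⧸ C) := by
    refine Finite.of_injective (fun q => (⟨_, hmem q⟩ : U)) ?_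
    intro q₁ q₂ h
    exact hinj (congrArg Subtype.val h)
  exact Subgroup.finiteIndex_of_finite_quotient (H := C)


/-- No nontrivial finite subgroup is normalized by a finite index subgroup. -/
private lemma aux_no_finite (hji : JustInfinite G) (hnva : ¬ VirtuallyAbelian G)
    {H E : Subgroup G} [H.FiniteIndex] (hEH : ∀ h ∈ H, cm h E = E)
    (hEne : E ≠ ⊥) (hEfin : (E : Set G).Finite) : False := by
  classical
  set U : Set G := Group.conjugatesOfSet (E : Set G) with hUdef
  have hUconj : ∀ (g : G), ∀ u ∈ U, g * u * g⁻¹ ∈ U := fun g u hu =>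
    Group.conj_mem_conjugatesOfSet hu
  have hcmout : ∀ c : G, cm c E = cm (Quotient.out (QuotientGroup.mk c : G ⧸ H)) E := by
    intro c
    set c₀ := Quotient.out (QuotientGroup.mk c : G ⧸ H) with hc₀
    have h0 : (QuotientGroup.mk c₀ : G ⧸ H) = QuotientGroup.mk c := Quotient.out_eq _
    have hmem : c₀⁻¹ * c ∈ H := (QuotientGroup.eq).1 h0
    calc cm c E = cm (c₀ * (c₀⁻¹ * c)) E := by congr 1; group
      _ = cm c₀ (cm (c₀⁻¹ * c) E) := (cm_cm _ _ _).symm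
      _ = cm c₀ E := by rw [hEH _ hmem]
  have hUfin : U.Finite := by
    have hsub : U ⊆ ⋃ q : G ⧸ H, (cm (Quotient.out q) E : Set G) := by
      intro u hu
      rw [hUdef, Group.mem_conjugatesOfSet_iff] at hu
      obtain ⟨a, ha, hconj⟩ := hu
      obtain ⟨c, hc⟩ := isConj_iff.1 hconj
      refine Set.mem_iUnion.2 ⟨QuotientGroup.mk c, ?_⟩
      rw [← hcmout c]
      show u ∈ cm c E
      rw [mem_cm, ← hc]
      have : c⁻¹ * (c * a * c⁻¹) * c = a := by group
      rw [this]; exact ha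
    refine Set.Finite.subset (Set.finite_iUnion fun q => ?_) hsub
    rw [cm_def, Subgroup.coe_map]
    exact hEfin.image _
  have hMfiel : ∀ u ∈ U, (Subgroup.centralizer {u}).FiniteIndex := fun u hu =>
    aux_centralizer_fi hUfin (fun g => hUconj g u hu)
  set M : Subgroup G := Subgroup.centralizer U with hMdef
  haveI hMfi : M.FiniteIndex := by
    haveI : Finite ↥U := hUfin.to_subtype
    have hMeq : M = ⨅ (u : U), Subgroup.centralizer {(u : G)} := by
      ext g
      simp only [hMdef, Subgroup.mem_iInf, Subgroup.mem_centralizer_iff,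
        Set.mem_singleton_iff, forall_eq]
      constructor
      · intro h u; exact h u u.2
      · intro h u hu; exact h ⟨u, hu⟩
    rw [hMeq]
    exact Subgroup.finiteIndex_iInf fun u => hMfiel u u.2
  set N : Subgroup G := Subgroup.normalClosure (E : Set G) with hNdef
  have hNne : N ≠ ⊥ := by
    intro h
    exact hEne (le_bot_iff.1 (h ▸ Subgroup.le_normalClosure))
  haveI hNfi : N.FiniteIndex := hji.2.2 N Subgroup.normalClosure_normal hNne
  have hNM : N ≤ Subgroup.centralizer (M : Set G) := by
    show Subgroup.closure U ≤ Subgroup.centralizer (M : Set G)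
    rw [Subgroup.closure_le]
    intro u hu
    rw [SetLike.mem_coe, Subgroup.mem_centralizer_iff]
    intro m hm
    exact (Subgroup.mem_centralizer_iff.1 hm u hu).symm
  have hcomm : ∀ n ∈ N, ∀ x ∈ M ⊓ N, n * x = x * n := by
    intro n hn x hx
    exact (Subgroup.mem_centralizer_iff.1 (hNM hn) x hx.1).symm
  have hbot : M ⊓ N = ⊥ :=
    aux_central hji hnva Subgroup.normalClosure_normal inf_le_right hcomm
  haveI : (M ⊓ N).FiniteIndex := inferInstance
  rw [hbot] at this
  have hcard : Nat.card G ≠ 0 := by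
    rw [← Subgroup.index_bot]
    exact this.index_ne_zero
  haveI : Finite G := Nat.finite_of_card_ne_zero hcard
  haveI := hji.1
  exact not_finite G


private lemma cm_top (g : G) : cm g (⊤ : Subgroup G) = ⊤ := by
  ext x; simp [mem_cm]

private lemma cm_finf [DecidableEq (Subgroup G)] (g : G) (T : Finset (Subgroup G)) :
    cm g (T.inf id) = (T.image (cm g)).inf id := by
  induction T using Finset.induction with
  | empty => simpa using cm_top g
  | insert _ _ h ih =>
    rw [Finset.inf_insert, cm_inf, Finset.image_insert, Finset.inf_insert, ih]
    rfl

/-- The key construction: a basal subgroup inside a subgroup `K` normal in a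
finite-index normal subgroup `L`. -/
private lemma aux_basal (hji : JustInfinite G) (hnva : ¬ VirtuallyAbelian G)
    {L K : Subgroup G} (hLn : L.Normal) [L.FiniteIndex]
    (hKne : K ≠ ⊥) (hKleL : K ≤ L) (hKL : ∀ l ∈ L, cm l K = K) :
    ∃ B : Subgroup G, IsBasal G B ∧ (∃ C ∈ conjugatesSet G B, C ≤ K) ∧
      (∀ g ∈ L, ∀ C ∈ conjugatesSet G B, cm g C = C) := by
  classical
  have hconjKfin : (conjugatesSet G K).Finite := aux_orbit_finite hKL
  set 𝒦 : Finset (Subgroup G) := hconjKfin.toFinset with h𝒦def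
  have hmem𝒦 : ∀ C, C ∈ 𝒦 ↔ C ∈ conjugatesSet G K := fun C => Set.Finite.mem_toFinset _
  have h𝒦norm : ∀ C ∈ 𝒦, ∀ l ∈ L, cm l C = C := by
    intro C hC l hl
    obtain ⟨g, rfl⟩ := (hmem𝒦 C).1 hC
    rw [← cm_def]
    have hg : g⁻¹ * l * g ∈ L := by simpa [mul_assoc] using hLn.conj_mem l hl g⁻¹
    calc cm l (cm g K) = cm (l * g) K := cm_cm _ _ _
      _ = cm (g * (g⁻¹ * l * g)) K := by congr 1; group
      _ = cm g (cm (g⁻¹ * l * g) K) := (cm_cm _ _ _).symm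
      _ = cm g K := by rw [hKL _ hg]
  have h𝒦le : ∀ C ∈ 𝒦, C ≤ L := by
    intro C hC
    obtain ⟨g, rfl⟩ := (hmem𝒦 C).1 hC
    rw [← cm_def]
    calc cm g K ≤ cm g L := cm_mono hKleL
      _ = L := cm_of_normal hLn
  have h𝒦conj : ∀ (g : G), ∀ C ∈ 𝒦, cm g C ∈ 𝒦 := by
    intro g C hC
    obtain ⟨a, rfl⟩ := (hmem𝒦 C).1 hC
    rw [← cm_def]
    exact (hmem𝒦 _).2 ⟨g * a, (cm_cm g a K).symm⟩
  have hK𝒦 : K ∈ 𝒦 := (hmem𝒦 K).2 (self_mem_conjugatesSet K)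
  set P : Finset (Subgroup G) → Prop :=
    fun T => T ⊆ 𝒦 ∧ T.Nonempty ∧ T.inf id ≠ ⊥ with hPdef
  obtain ⟨S, hSP, hSmax⟩ : ∃ S, P S ∧ ∀ T, P T → T.card ≤ S.card := by
    have hne : (𝒦.powerset.filter P).Nonempty := by
      have h1 : ({K} : Finset (Subgroup G)) ⊆ 𝒦 := by
        intro x hx; rw [Finset.mem_singleton] at hx; subst hx; exact hK𝒦
      have h2 : ({K} : Finset (Subgroup G)).Nonempty := ⟨K, Finset.mem_singleton_self K⟩
      have h3 : ({K} : Finset (Subgroup G)).inf id ≠ ⊥ := by simpa using hKne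
      have hPK : P {K} := ⟨h1, h2, h3⟩
      exact ⟨{K}, Finset.mem_filter.2 ⟨Finset.mem_powerset.2 h1, hPK⟩⟩
    obtain ⟨S, hS, hmax⟩ := Finset.exists_max_image (𝒦.powerset.filter P) Finset.card hne
    refine ⟨S, (Finset.mem_filter.1 hS).2, fun T hT => hmax T ?_⟩
    exact Finset.mem_filter.2 ⟨Finset.mem_powerset.2 hT.1, hT⟩
  obtain ⟨hS𝒦, hSne, hSbot⟩ := hSP
  set B : Subgroup G := S.inf id with hBdef
  have hBnorm : ∀ l ∈ L, cm l B = B := by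
    intro l hl
    rw [hBdef, cm_finf]
    congr 1
    have : S.image (cm l) = S.image id := by
      apply Finset.image_congr
      intro C hC
      exact h𝒦norm C (hS𝒦 hC) l hl
    rw [this, Finset.image_id]
  have hBconj : ∀ g : G, cm g B = (S.image (cm g)).inf id := fun g => cm_finf g S
  have hBne : B ≠ ⊥ := hSbot
  have hPimage : ∀ g : G, P (S.image (cm g)) := by
    intro g
    refine ⟨?_, hSne.image _, ?_⟩
    · intro C hC
      obtain ⟨D, hD, rfl⟩ := Finset.mem_image.1 hC
      exact h𝒦conj g D (hS𝒦 hD)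
    · rw [← hBconj g]
      intro h
      exact hBne (cm_eq_bot_iff.1 h)
  have hcardimage : ∀ g : G, (S.image (cm g)).card = S.card :=
    fun g => Finset.card_image_of_injective S (cm_injective g)
  have hdisj : ∀ a b : G, cm a B ≠ cm b B → cm a B ⊓ cm b B = ⊥ := by
    intro a b hne
    by_contra hbot
    have hP : P (S.image (cm a) ∪ S.image (cm b)) := by
      refine ⟨Finset.union_subset (hPimage a).1 (hPimage b).1,
        (hPimage a).2.1.mono Finset.subset_union_left, ?_⟩
      rw [Finset.inf_union, ← hBconj a, ← hBconj b]
      exact hbot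
    have hcard := hSmax _ hP
    have h1 : S.image (cm a) = S.image (cm a) ∪ S.image (cm b) := by
      apply Finset.eq_of_subset_of_card_le Finset.subset_union_left
      rw [hcardimage a]; exact hcard
    have h2 : S.image (cm b) ⊆ S.image (cm a) := by
      intro x hx
      rw [h1]
      exact Finset.mem_union_right _ hx
    have h3 : S.image (cm b) = S.image (cm a) :=
      Finset.eq_of_subset_of_card_le h2 (by rw [hcardimage a, hcardimage b])
    apply hne
    rw [hBconj a, hBconj b, h3]
  have hBleL : ∀ g : G, cm g B ≤ L := by
    intro g
    obtain ⟨E, hE⟩ := hSne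
    calc cm g B ≤ cm g E := cm_mono (Finset.inf_le hE)
      _ ≤ L := h𝒦le _ (h𝒦conj g E (hS𝒦 hE))
  have hBconjnorm : ∀ l ∈ L, ∀ g : G, cm l (cm g B) = cm g B := by
    intro l hl g
    have hg : g⁻¹ * l * g ∈ L := by simpa [mul_assoc] using hLn.conj_mem l hl g⁻¹
    calc cm l (cm g B) = cm (l * g) B := cm_cm _ _ _
      _ = cm (g * (g⁻¹ * l * g)) B := by congr 1; group
      _ = cm g (cm (g⁻¹ * l * g) B) := (cm_cm _ _ _).symm
      _ = cm g B := by rw [hBnorm _ hg]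
  have hcommute : ∀ a b : G, cm a B ≠ cm b B →
      ∀ x ∈ cm a B, ∀ y ∈ cm b B, x * y = y * x := by
    intro a b hne x hx y hy
    have hxL : x ∈ L := hBleL a hx
    have hyL : y ∈ L := hBleL b hy
    have h1 : x * y * x⁻¹ ∈ cm b B := by
      rw [← hBconjnorm x hxL b, mem_cm]
      have hxyx : x⁻¹ * (x * y * x⁻¹) * x = y := by group
      rw [hxyx]; exact hy
    have h2 : y * x⁻¹ * y⁻¹ ∈ cm a B := by
      rw [← hBconjnorm y hyL a, mem_cm]
      have hyxy : y⁻¹ * (y * x⁻¹ * y⁻¹) * y = x⁻¹ := by group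
      rw [hyxy]; exact inv_mem hx
    have hu1 : x * y * x⁻¹ * y⁻¹ ∈ cm b B := mul_mem h1 (inv_mem hy)
    have hu2 : x * y * x⁻¹ * y⁻¹ ∈ cm a B := by
      have hm := mul_mem hx h2
      have : x * (y * x⁻¹ * y⁻¹) = x * y * x⁻¹ * y⁻¹ := by group
      rwa [this] at hm
    have hu : x * y * x⁻¹ * y⁻¹ ∈ (⊥ : Subgroup G) := by
      rw [← hdisj a b hne]
      exact ⟨hu2, hu1⟩
    rw [Subgroup.mem_bot] at hu
    calc x * y = (x * y * x⁻¹ * y⁻¹) * (y * x) := by group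
      _ = y * x := by rw [hu]; group
  have hfinB : (conjugatesSet G B).Finite := aux_orbit_finite hBnorm
  set N : Subgroup G := ⨆ C ∈ conjugatesSet G B, C with hNdef2
  have hsub : ∀ C ∈ conjugatesSet G B, C ≤ N := by
    intro C hC
    exact le_biSup (fun C : Subgroup G => C) hC
  have hNsubtype : N = ⨆ C : conjugatesSet G B, (C : Subgroup G) := by
    rw [hNdef2, iSup_subtype']
  have hNnormal : N.Normal := by
    constructor
    intro n hn g
    have hn' : n ∈ ⨆ C : conjugatesSet G B, (C : Subgroup G) := hNsubtype ▸ hn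
    refine Subgroup.iSup_induction _ (C := fun y => g * y * g⁻¹ ∈ N) hn' ?_ ?_ ?_
    · rintro ⟨C, a, rfl⟩ x hx
      have h1 : g * x * g⁻¹ ∈ cm (g * a) B := by
        rw [← cm_cm, mem_cm]
        have hgx : g⁻¹ * (g * x * g⁻¹) * g = x := by group
        rw [hgx]
        exact hx
      exact hsub _ (cm_mem_conjugatesSet (g * a) B) h1
    · simpa using N.one_mem
    · intro x y hx hy
      have : g * (x * y) * g⁻¹ = (g * x * g⁻¹) * (g * y * g⁻¹) := by group
      rw [this]
      exact mul_mem hx hy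
  have hBN : B ≤ N := hsub B (self_mem_conjugatesSet B)
  have hNne : N ≠ ⊥ := fun h => hBne (le_bot_iff.1 (h ▸ hBN))
  -- commuting of distinct conjugates, stated on the set
  have hpair : ∀ C ∈ conjugatesSet G B, ∀ D ∈ conjugatesSet G B, C ≠ D →
      C ⊓ D = ⊥ ∧ ∀ x ∈ C, ∀ y ∈ D, Commute x y := by
    rintro C ⟨a, rfl⟩ D ⟨b, rfl⟩ hne
    rw [← cm_def] at hne ⊢
    rw [← cm_def (g := b)] at hne ⊢
    exact ⟨hdisj a b hne, fun x hx y hy => hcommute a b hne x hx y hy⟩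
  have hindep : iSupIndep (fun C : conjugatesSet G B => (C : Subgroup G)) := by
    intro C₀
    rw [disjoint_iff]
    set Pbig : Subgroup G := ⨆ (D : conjugatesSet G B) (_ : D ≠ C₀), (D : Subgroup G)
      with hPb
    have hPbN : Pbig ≤ N := by
      rw [hPb]
      refine iSup_le fun D => iSup_le fun _ => hsub D.1 D.2
    refine aux_central hji hnva hNnormal (le_trans inf_le_left (hsub C₀.1 C₀.2)) ?_
    intro n hn x hx
    have hxC : x ∈ (C₀ : Subgroup G) := hx.1
    have hxP : x ∈ Pbig := hx.2
    have hN_le : N ≤ Subgroup.centralizer {x} := by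
      rw [hNsubtype]
      refine iSup_le fun E => ?_
      by_cases hE : E = C₀
      · subst hE
        intro e he
        rw [Subgroup.mem_centralizer_singleton_iff]
        have hPbeq : Pbig = ⨆ D : {D : ↥(conjugatesSet G B) // D ≠ E}, ((D : ↥(conjugatesSet G B)) : Subgroup G) := by
          rw [hPb, iSup_subtype']
        have hx' : x ∈ ⨆ D : {D : ↥(conjugatesSet G B) // D ≠ E}, ((D : ↥(conjugatesSet G B)) : Subgroup G) :=
          hPbeq ▸ hxP
        refine Subgroup.iSup_induction _ (C := fun y => e * y = y * e) hx' ?_ ?_ ?_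
        · rintro ⟨⟨D, hD⟩, hDne⟩ y hy
          obtain ⟨b, hb⟩ := hD
          obtain ⟨a, ha⟩ := E.2
          have hDE : cm b B ≠ cm a B := by
            rw [cm_def, cm_def, ha, hb]
            intro hcon
            exact hDne (Subtype.ext hcon)
          exact (hcommute b a hDE y (by rw [cm_def, hb]; exact hy) e
            (by rw [cm_def, ha]; exact he)).symm
        · simp
        · intro y z hy hz
          calc e * (y * z) = (e * y) * z := by group
            _ = y * (e * z) := by rw [hy]; group
            _ = y * z * e := by rw [hz]; group
      · intro e he
        rw [Subgroup.mem_centralizer_singleton_iff]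
        obtain ⟨a, ha⟩ := E.2
        obtain ⟨b, hb⟩ := C₀.2
        have hEC : cm a B ≠ cm b B := by
          rw [cm_def, cm_def, ha, hb]
          intro hcon
          exact hE (Subtype.ext hcon)
        exact hcommute a b hEC e (by rw [cm_def, ha]; exact he) x
          (by rw [cm_def, hb]; exact hxC)
    exact Subgroup.mem_centralizer_singleton_iff.1 (hN_le hn)
  have hsupEq : N = Subgroup.normalClosure (B : Set G) := by
    apply le_antisymm
    · rw [hNsubtype]
      refine iSup_le fun C => ?_
      obtain ⟨a, ha⟩ := C.2
      rw [← ha, ← cm_def]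
      intro x hx
      rw [mem_cm] at hx
      have h1 := Subgroup.normalClosure_normal.conj_mem _
        (Subgroup.subset_normalClosure hx) a
      have h2 : a * (a⁻¹ * x * a) * a⁻¹ = x := by group
      rwa [h2] at h1
    · haveI : N.Normal := hNnormal
      exact Subgroup.normalClosure_le_normal (SetLike.coe_subset_coe.2 hBN)
  refine ⟨B, ⟨hBne, hfinB, hpair, hindep, by rw [← hNdef2, hsupEq]⟩, ?_, ?_⟩
  · obtain ⟨E, hE⟩ := hSne
    obtain ⟨g₀, hg₀⟩ := (hmem𝒦 E).1 (hS𝒦 hE)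
    refine ⟨cm g₀⁻¹ B, cm_mem_conjugatesSet g₀⁻¹ B, ?_⟩
    calc cm g₀⁻¹ B ≤ cm g₀⁻¹ E := cm_mono (Finset.inf_le hE)
      _ = cm g₀⁻¹ (cm g₀ K) := by rw [← cm_def] at hg₀; rw [hg₀]
      _ = K := by rw [cm_cm, inv_mul_cancel, cm_one]
  · rintro g hg C ⟨a, rfl⟩
    rw [← cm_def]
    exact hBconjnorm g hg a

end Aux

/-- If a finite index subgroup H of a just infinite, non virtually abelian
group G is not just infinite, then there is a basal subgroup B of G on whose
conjugates H acts intransitively while the normal core of H acts trivially. -/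
theorem exists_basal_of_not_justInfinite {G : Type*} [Group G]
    (hji : JustInfinite G) (hnva : ¬ VirtuallyAbelian G)
    (H : Subgroup G) (hH : H.FiniteIndex) (hnji : ¬ JustInfinite H) :
    ∃ B : Subgroup G, IsBasal G B ∧
      ¬ (∀ C ∈ conjugatesSet G B, ∀ D ∈ conjugatesSet G B,
          ∃ h ∈ H, C.map (MulAut.conj h).toMonoidHom = D) ∧
      (∀ g ∈ H.normalCore, ∀ C ∈ conjugatesSet G B,
          C.map (MulAut.conj g).toMonoidHom = C) := by
  classical
  haveI := hH
  obtain ⟨hGinf, hGrf, hGni⟩ := hji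
  haveI := hGinf
  set L : Subgroup G := H.normalCore with hLdef
  haveI hLfi : L.FiniteIndex := Subgroup.finiteIndex_normalCore H
  have hLn : L.Normal := H.normalCore_normal
  have hLleH : L ≤ H := H.normalCore_le
  haveI hHinf : Infinite ↥H := by
    rw [← not_finite_iff_infinite]
    intro hfin
    have hcard : Nat.card ↥H * H.index = Nat.card G := Subgroup.card_mul_index H
    have h1 : Nat.card ↥H ≠ 0 := Nat.card_ne_zero.2 ⟨⟨⟨1, H.one_mem⟩⟩, hfin⟩
    have h2 : Nat.card G ≠ 0 := by
      rw [← hcard]; exact Nat.mul_ne_zero h1 hH.index_ne_zero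
    haveI : Finite G := Nat.finite_of_card_ne_zero h2
    exact not_finite G
  have hHrf : ResiduallyFinite ↥H := aux_rf hGrf H
  have hnall : ¬ ∀ N : Subgroup ↥H, N.Normal → N ≠ ⊥ → N.FiniteIndex :=
    fun h => hnji ⟨hHinf, hHrf, h⟩
  push_neg at hnall
  obtain ⟨K', hK'n, hK'ne, hK'fi⟩ := hnall
  set K'' : Subgroup G := K'.map H.subtype with hK''def
  have hK''leH : K'' ≤ H := by
    rw [hK''def]
    rintro x ⟨y, hy, rfl⟩
    exact y.2
  have hK''ne : K'' ≠ ⊥ := by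
    intro h
    apply hK'ne
    rwa [hK''def, Subgroup.map_eq_bot_iff, Subgroup.ker_subtype, le_bot_iff] at h
  have hK''H : ∀ h ∈ H, cm h K'' = K'' := by
    have key : ∀ h ∈ H, ∀ x ∈ K'', h * x * h⁻¹ ∈ K'' := by
      intro h hh x hx
      rw [hK''def] at hx ⊢
      obtain ⟨y, hy, rfl⟩ := hx
      exact ⟨⟨h, hh⟩ * y * ⟨h, hh⟩⁻¹, hK'n.conj_mem y hy ⟨h, hh⟩, rfl⟩
    intro h hh
    apply le_antisymm
    · intro x hx
      rw [mem_cm] at hx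
      have hk := key h hh _ hx
      have he : h * (h⁻¹ * x * h) * h⁻¹ = x := by group
      rwa [he] at hk
    · intro x hx
      rw [mem_cm]
      have hk := key h⁻¹ (inv_mem hh) x hx
      simpa using hk
  set K : Subgroup G := K'' ⊓ L with hKdef
  have hKH : ∀ h ∈ H, cm h K = K := by
    intro h hh
    rw [hKdef, cm_inf, hK''H h hh, cm_of_normal hLn]
  have hKL : ∀ l ∈ L, cm l K = K := fun l hl => hKH l (hLleH hl)
  have hKleL : K ≤ L := inf_le_right
  have hKne : K ≠ ⊥ := by
    intro hbot
    have hinj : Function.Injective (fun x : ↥K'' => (QuotientGroup.mk x.1 : G ⧸ L)) := by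
      intro x y hxy
      have h1 : (x.1)⁻¹ * y.1 ∈ L := (QuotientGroup.eq).1 hxy
      have h2 : (x.1)⁻¹ * y.1 ∈ K'' := mul_mem (inv_mem x.2) y.2
      have h3 : (x.1)⁻¹ * y.1 ∈ K := by rw [hKdef]; exact ⟨h2, h1⟩
      rw [hbot, Subgroup.mem_bot] at h3
      have h4 : x.1 = y.1 := by
        have h5 := congrArg (fun z => x.1 * z) h3
        simp only [mul_one] at h5
        rw [← mul_assoc, mul_inv_cancel, one_mul] at h5
        exact h5.symm
      exact Subtype.ext h4
    haveI : Finite (G ⧸ L) := Subgroup.finite_quotient_of_finiteIndex (H := L)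
    haveI : Finite ↥K'' := Finite.of_injective _ hinj
    have hKfinset : ((K'' : Set G)).Finite := Set.toFinite _
    exact aux_no_finite ⟨hGinf, hGrf, hGni⟩ hnva hK''H hK''ne hKfinset
  obtain ⟨B, hBbasal, ⟨C₀, hC₀mem, hC₀K⟩, htriv⟩ :=
    aux_basal ⟨hGinf, hGrf, hGni⟩ hnva hLn hKne hKleL hKL
  refine ⟨B, hBbasal, ?_, ?_⟩
  · intro htrans
    have hall : ∀ D ∈ conjugatesSet G B, D ≤ K'' := by
      intro D hD
      obtain ⟨h, hh, hhD⟩ := htrans C₀ hC₀mem D hD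
      rw [← hhD, ← cm_def]
      calc cm h C₀ ≤ cm h K'' := cm_mono (le_trans hC₀K inf_le_left)
        _ = K'' := hK''H h hh
    have hNle : Subgroup.normalClosure (B : Set G) ≤ K'' := by
      rw [← hBbasal.2.2.2.2]
      exact iSup_le fun D => iSup_le fun hD => hall D hD
    have hncne : Subgroup.normalClosure (B : Set G) ≠ ⊥ := by
      intro h
      exact hBbasal.1 (le_bot_iff.1 (h ▸ Subgroup.le_normalClosure))
    have hncfi : (Subgroup.normalClosure (B : Set G)).FiniteIndex :=
      hGni _ Subgroup.normalClosure_normal hncne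
    have hK''fi : K''.index ≠ 0 :=
      ne_zero_of_dvd_ne_zero hncfi.index_ne_zero (Subgroup.index_dvd_of_le hNle)
    apply hK'fi
    constructor
    have hrel : K''.relIndex H * H.index = K''.index :=
      Subgroup.relIndex_mul_index hK''leH
    have hrelne : K''.relIndex H ≠ 0 := by
      intro h0
      rw [h0, zero_mul] at hrel
      exact hK''fi hrel.symm
    have heq : K''.subgroupOf H = K' := by
      rw [hK''def]
      exact Subgroup.comap_map_eq_self_of_injective H.subtype_injective K'
    rw [← heq]
    exact hrelne
  · intro g hg C hC
    exact htriv g hg C hC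
end

section
/- Let G be a just infinite group that is not virtually abelian, let H ≤ G have finite index, and suppose there exists a basal subgroup B of G such that H acts intransitively by conjugation on the set of G-conjugates of B. Then H is not just infinite. -/
open Pointwise in
lemma biSup_finite_of_comm {G : Type*} [Group G] {S : Set (Subgroup G)} (hS : S.Finite) :
    (∀ C ∈ S, (C : Set G).Finite) →
    (∀ C ∈ S, ∀ D ∈ S, C ≠ D → ∀ x ∈ C, ∀ y ∈ D, Commute x y) →
    (((⨆ C ∈ S, C : Subgroup G) : Set G)).Finite := by
  refine Set.Finite.induction_on (motive := fun (s : Set (Subgroup G)) _ => (∀ C ∈ s, (C : Set G).Finite) →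
      (∀ C ∈ s, ∀ D ∈ s, C ≠ D → ∀ x ∈ C, ∀ y ∈ D, Commute x y) →
      (((⨆ C ∈ s, C : Subgroup G) : Set G)).Finite) S hS ?_ ?_
  · intro _ _
    rw [iSup_emptyset]
    simp
  · intro C₁ s' hC₁s' hs'fin IH hfin hcomm
    rw [iSup_insert]
    set T := (⨆ C ∈ s', C : Subgroup G) with hT
    have hTfin : (T : Set G).Finite :=
      IH (fun C hC => hfin C (Set.mem_insert_of_mem _ hC))
        (fun C hC D hD hne => hcomm C (Set.mem_insert_of_mem _ hC)
          D (Set.mem_insert_of_mem _ hD) hne)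
    have hC₁fin := hfin C₁ (Set.mem_insert _ _)
    have hTcent : T ≤ Subgroup.centralizer (C₁ : Set G) := by
      refine iSup₂_le fun D hD y hy => ?_
      rw [Subgroup.mem_centralizer_iff]
      intro x hx
      exact hcomm C₁ (Set.mem_insert _ _) D (Set.mem_insert_of_mem _ hD)
        (fun h => hC₁s' (h ▸ hD)) x hx y hy
    let P : Subgroup G :=
      { carrier := (C₁ : Set G) * (T : Set G)
        one_mem' := ⟨1, one_mem _, 1, one_mem _, mul_one 1⟩
        mul_mem' := by
          rintro a b ⟨x1, hx1, y1, hy1, rfl⟩ ⟨x2, hx2, y2, hy2, rfl⟩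
          refine ⟨x1 * x2, mul_mem hx1 hx2, y1 * y2, mul_mem hy1 hy2, ?_⟩
          have hc : x2 * y1 = y1 * x2 :=
            Subgroup.mem_centralizer_iff.mp (hTcent hy1) x2 hx2
          calc (x1 * x2) * (y1 * y2) = x1 * (x2 * y1) * y2 := by group
            _ = x1 * (y1 * x2) * y2 := by rw [hc]
            _ = (x1 * y1) * (x2 * y2) := by group
        inv_mem' := by
          rintro a ⟨x, hx, y, hy, rfl⟩
          refine ⟨x⁻¹, inv_mem hx, y⁻¹, inv_mem hy, ?_⟩
          have hc : x * y = y * x :=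
            Subgroup.mem_centralizer_iff.mp (hTcent hy) x hx
          show x⁻¹ * y⁻¹ = (x * y)⁻¹
          rw [hc, mul_inv_rev] }
    have hsub : (C₁ ⊔ T : Subgroup G) ≤ P :=
      sup_le (fun x hx => ⟨x, hx, 1, one_mem _, mul_one x⟩)
        (fun y hy => ⟨1, one_mem _, y, hy, one_mul y⟩)
    exact (hC₁fin.mul hTfin).subset (fun x hx => hsub hx)

lemma map_conj_map_conj {G : Type*} [Group G] (g h : G) (B : Subgroup G) :
    (B.map (MulAut.conj h).toMonoidHom).map (MulAut.conj g).toMonoidHom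
      = B.map (MulAut.conj (g * h)).toMonoidHom := by
  rw [Subgroup.map_map]
  congr 1
  ext x
  simp [MulAut.conj_apply, mul_assoc]

/-- If H is a finite index subgroup of a just infinite, non virtually abelian
group G acting intransitively on the conjugates of some basal subgroup B,
then H is not just infinite. -/
theorem not_justInfinite_of_intransitive_on_basal {G : Type*} [Group G]
    (hji : JustInfinite G) (hnva : ¬ VirtuallyAbelian G)
    (H : Subgroup G) (hH : H.FiniteIndex)
    (B : Subgroup G) (hB : IsBasal G B)
    (hintrans : ¬ (∀ C ∈ conjugatesSet G B, ∀ D ∈ conjugatesSet G B,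
        ∃ h ∈ H, C.map (MulAut.conj h).toMonoidHom = D)) :
    ¬ JustInfinite H := by
  obtain ⟨hGinf, -, hjiN⟩ := hji
  obtain ⟨hBbot, hConjFin, hPairwise, -, hSupEq⟩ := hB
  push_neg at hintrans
  obtain ⟨C₀, hC₀, D₀, hD₀, hno⟩ := hintrans
  haveI : H.FiniteIndex := hH
  -- normal closure of B is infinite
  set J := Subgroup.normalClosure (B : Set G) with hJ
  haveI hJnormal : J.Normal := Subgroup.normalClosure_normal
  haveI : Infinite G := hGinf
  have hBle : B ≤ J := fun x hx => Subgroup.subset_normalClosure hx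
  have hJne : J ≠ ⊥ := by
    intro h
    exact hBbot (le_bot_iff.mp (h ▸ hBle))
  have hJfi : J.FiniteIndex := hjiN _ hJnormal hJne
  have hJcard : Nat.card ↥J = 0 := by
    have h1 : J.index * Nat.card ↥J = 0 := by
      rw [Subgroup.index_mul_card]
      exact Nat.card_eq_zero_of_infinite
    exact (Nat.mul_eq_zero.mp h1).resolve_left hJfi.index_ne_zero
  have hJinf : (J : Set G).Infinite := by
    rw [Set.infinite_coe_iff.symm]
    rcases Nat.card_eq_zero.mp hJcard with h | h
    · exact absurd (Subgroup.one_mem J) (by simpa using h.false (⟨1, Subgroup.one_mem J⟩ : ↥J))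
    · exact h
  -- B is infinite
  have hBinf : (B : Set G).Infinite := by
    by_contra hfin
    rw [Set.not_infinite] at hfin
    have hall : ∀ C ∈ conjugatesSet G B, (C : Set G).Finite := by
      rintro C ⟨g, rfl⟩
      rw [Subgroup.coe_map]
      exact hfin.image _
    have := biSup_finite_of_comm hConjFin hall
      (fun C hC D hD hne => (hPairwise C hC D hD hne).2)
    rw [hSupEq] at this
    exact hJinf this
  -- the H-orbit of C₀
  set Ω : Set (Subgroup G) :=
    {C | ∃ h ∈ H, C₀.map (MulAut.conj h).toMonoidHom = C} with hΩ
  have hΩsub : Ω ⊆ conjugatesSet G B := by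
    rintro C ⟨h, hh, rfl⟩
    obtain ⟨g₀, hg₀⟩ := hC₀
    exact ⟨h * g₀, by rw [← hg₀, map_conj_map_conj]⟩
  have hC₀Ω : C₀ ∈ Ω := ⟨1, H.one_mem, by ext x; simp⟩
  set K : Subgroup G := ⨆ C ∈ Ω, C with hK
  have hΩconj : ∀ h ∈ H, ∀ C ∈ Ω, C.map (MulAut.conj h).toMonoidHom ∈ Ω := by
    rintro h hh C ⟨h', hh', rfl⟩
    exact ⟨h * h', H.mul_mem hh hh', by rw [map_conj_map_conj]⟩
  have hKconj : ∀ h ∈ H, ∀ n ∈ K, h * n * h⁻¹ ∈ K := by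
    intro h hh n hn
    have hmap : K.map (MulAut.conj h).toMonoidHom ≤ K := by
      rw [Subgroup.map_le_iff_le_comap]
      refine iSup₂_le fun C hC => ?_
      rw [← Subgroup.map_le_iff_le_comap]
      exact le_iSup₂ (f := fun (C : Subgroup G) (_ : C ∈ Ω) => C)
        (C.map (MulAut.conj h).toMonoidHom) (hΩconj h hh C hC)
    exact hmap ⟨n, hn, rfl⟩
  have hNnormal : (K.subgroupOf H).Normal := by
    constructor
    intro n hn g
    rw [Subgroup.mem_subgroupOf] at hn ⊢
    exact hKconj g g.2 n hn
  -- K is infinite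
  have hC₀le : C₀ ≤ K := le_iSup₂ (f := fun (C : Subgroup G) (_ : C ∈ Ω) => C) C₀ hC₀Ω
  have hC₀inf : (C₀ : Set G).Infinite := by
    obtain ⟨g₀, hg₀⟩ := hC₀
    rw [← hg₀, Subgroup.coe_map]
    exact hBinf.image ((MulAut.conj g₀).injective.injOn)
  haveI hKinf : Infinite ↥K := Set.infinite_coe_iff.mpr (hC₀inf.mono hC₀le)
  -- K ∩ H is nontrivial
  haveI : (H.subgroupOf K).FiniteIndex := Subgroup.instFiniteIndex_subgroupOf H K
  have hHK : H.subgroupOf K ≠ ⊥ := by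
    intro hb
    have h0 : (H.subgroupOf K).index ≠ 0 := Subgroup.FiniteIndex.index_ne_zero
    rw [hb, Subgroup.index_bot, Nat.card_eq_zero_of_infinite] at h0
    exact h0 rfl
  obtain ⟨a, ha⟩ := (Subgroup.ne_bot_iff_exists_ne_one).mp hHK
  have haH : ((a : ↥K) : G) ∈ H := Subgroup.mem_subgroupOf.mp a.2
  have haK : ((a : ↥K) : G) ∈ K := (a : ↥K).2
  have ha1 : ((a : ↥K) : G) ≠ 1 := by
    intro h
    exact ha (by ext; exact h)
  have hNne : K.subgroupOf H ≠ ⊥ := by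
    rw [Subgroup.ne_bot_iff_exists_ne_one]
    refine ⟨⟨⟨_, haH⟩, Subgroup.mem_subgroupOf.mpr haK⟩, ?_⟩
    simp only [ne_eq, Subgroup.coe_mk]
    intro h
    exact ha1 (by simpa using congrArg (Subtype.val) h)
  -- conclude
  rintro ⟨-, -, h3⟩
  have hNfi : (K.subgroupOf H).FiniteIndex := h3 _ hNnormal hNne
  -- K ⊓ H has finite index in G
  have hrel : (K ⊓ H).relIndex H ≠ 0 := by
    rw [Subgroup.relIndex, Subgroup.inf_subgroupOf_right]
    exact hNfi.index_ne_zero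
  have hKHfi : (K ⊓ H).FiniteIndex := by
    constructor
    rw [← Subgroup.relIndex_mul_index (inf_le_right : K ⊓ H ≤ H)]
    exact Nat.mul_ne_zero hrel hH.index_ne_zero
  haveI : (K ⊓ H).FiniteIndex := hKHfi
  set M := (K ⊓ H).normalCore with hM
  haveI hMnormal : M.Normal := Subgroup.normalCore_normal _
  haveI hMfi : M.FiniteIndex := Subgroup.finiteIndex_normalCore (K ⊓ H)
  have hMK : M ≤ K := (Subgroup.normalCore_le _).trans inf_le_left
  -- D₀ centralizes K hence M
  have hD₀ne : D₀ ≠ ⊥ := by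
    obtain ⟨g₁, hg₁⟩ := hD₀
    intro h
    apply hBbot
    apply Subgroup.map_injective (f := (MulAut.conj g₁).toMonoidHom) (MulAut.conj g₁).injective
    rw [hg₁, h, Subgroup.map_bot]
  have hKcent : K ≤ Subgroup.centralizer (D₀ : Set G) := by
    refine iSup₂_le fun C hC y hy => ?_
    rw [Subgroup.mem_centralizer_iff]
    intro d hd
    have hne : C ≠ D₀ := by
      rintro rfl
      obtain ⟨h, hh, hmap⟩ := hC
      exact hno h hh hmap
    exact ((hPairwise C (hΩsub hC) D₀ hD₀ hne).2 y hy d hd).symm.eq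
  have hD₀cent : D₀ ≤ Subgroup.centralizer (M : Set G) := by
    intro d hd
    rw [Subgroup.mem_centralizer_iff]
    intro m hm
    exact (Subgroup.mem_centralizer_iff.mp (hKcent (hMK hm)) d hd).symm
  have hCentNormal : (Subgroup.centralizer (M : Set G)).Normal := by
    constructor
    intro n hn g
    rw [Subgroup.mem_centralizer_iff] at hn ⊢
    intro m hm
    have hm' : g⁻¹ * m * g ∈ M := by
      have := hMnormal.conj_mem m hm g⁻¹
      simpa using this
    have hcomm := hn _ hm'
    calc m * (g * n * g⁻¹) = g * ((g⁻¹ * m * g) * n) * g⁻¹ := by group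
      _ = g * (n * (g⁻¹ * m * g)) * g⁻¹ := by rw [hcomm]
      _ = (g * n * g⁻¹) * m := by group
  have hCentne : Subgroup.centralizer (M : Set G) ≠ ⊥ := by
    intro h
    exact hD₀ne (le_bot_iff.mp (hD₀cent.trans h.le))
  have hCentfi := hjiN _ hCentNormal hCentne
  haveI : (Subgroup.centralizer (M : Set G)).FiniteIndex := hCentfi
  apply hnva
  refine ⟨M ⊓ Subgroup.centralizer (M : Set G), inferInstance, ?_⟩
  intro a b
  ext
  push_cast
  exact Subgroup.mem_centralizer_iff.mp b.2.2 _ a.2.1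
end

section
/- Let G be a just infinite group that is not virtually abelian, and let H be a nontrivial normal subgroup of G. Then H is just infinite if and only if every maximal (with respect to proper subgroups of finite index) subgroup of G containing H is just infinite. -/
open Pointwise

namespace JIAux

variable {G : Type*} [Group G]

lemma mem_conjSmul {g x : G} {X : Subgroup G} :
    x ∈ MulAut.conj g • X ↔ g⁻¹ * x * g ∈ X := by
  rw [Subgroup.mem_pointwise_smul_iff_inv_smul_mem, ← map_inv]
  simp [MulAut.smul_def, MulAut.conj_apply, mul_assoc]

lemma conjSmul_conjSmul (g g' : G) (X : Subgroup G) :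
    MulAut.conj g • MulAut.conj g' • X = MulAut.conj (g * g') • X := by
  rw [← mul_smul, ← map_mul]

lemma conjSmul_eq_iff_mem_normalizer {g : G} {X : Subgroup G} :
    MulAut.conj g • X = X ↔ g ∈ Subgroup.normalizer (X : Set G) := by
  rw [Subgroup.mem_normalizer_iff]
  constructor
  · intro h x
    constructor
    · intro hx
      rw [← h, mem_conjSmul]
      simpa [mul_assoc] using hx
    · intro hx
      rw [← h, mem_conjSmul] at hx
      simpa [mul_assoc] using hx
  · intro h
    ext x
    rw [mem_conjSmul]
    constructor
    · intro hx
      have := (h (g⁻¹ * x * g)).mp hx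
      simpa [mul_assoc] using this
    · intro hx
      exact (h (g⁻¹ * x * g)).mpr (by simpa [mul_assoc] using hx)

lemma conjSmul_eq_comap (g : G) (X : Subgroup G) :
    MulAut.conj g • X = X.comap (MulAut.conj g⁻¹).toMonoidHom := by
  ext x
  rw [mem_conjSmul, Subgroup.mem_comap]
  simp [mul_assoc]

lemma index_conjSmul (g : G) (X : Subgroup G) :
    (MulAut.conj g • X).index = X.index := by
  rw [conjSmul_eq_comap]
  exact Subgroup.index_comap_of_surjective X (MulAut.conj g⁻¹).surjective

lemma conjSmul_ne_bot {g : G} {X : Subgroup G} (hX : X ≠ ⊥) :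
    MulAut.conj g • X ≠ ⊥ := by
  intro h
  apply hX
  have := congrArg (fun Y => MulAut.conj g⁻¹ • Y) h
  simpa [conjSmul_conjSmul] using this

lemma conjSmul_le_of_normal {g : G} {X H : Subgroup G} (hle : X ≤ H) (hn : H.Normal) :
    MulAut.conj g • X ≤ H := by
  intro x hx
  rw [mem_conjSmul] at hx
  have := hn.conj_mem _ (hle hx) g
  simpa [mul_assoc] using this

lemma conjSmul_eq_of_stab {X S : Subgroup G}
    (hstab : ∀ m ∈ S, ∀ x ∈ X, m * x * m⁻¹ ∈ X) {h : G} (hh : h ∈ S) :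
    MulAut.conj h • X = X := by
  ext x
  rw [mem_conjSmul]
  constructor
  · intro hx
    have := hstab h hh _ hx
    simpa [mul_assoc] using this
  · intro hx
    simpa [mul_assoc] using hstab h⁻¹ (inv_mem hh) x hx

lemma conjSmul_top (a : MulAut G) : a • (⊤ : Subgroup G) = ⊤ := by
  rw [eq_top_iff]
  intro x _
  rw [Subgroup.mem_pointwise_smul_iff_inv_smul_mem]
  trivial

lemma smul_finsetInf [DecidableEq (Subgroup G)] (a : MulAut G) (s : Finset (Subgroup G)) :
    a • s.inf id = (s.image (fun K => a • K)).inf id := by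
  classical
  induction s using Finset.induction_on with
  | empty => simpa using conjSmul_top a
  | insert _ _ h ih =>
    rw [Finset.inf_insert, Finset.image_insert, Finset.inf_insert, Subgroup.smul_inf, ih]
    rfl

lemma residuallyFinite_subgroup (h : ResiduallyFinite G) (K : Subgroup G) :
    ResiduallyFinite K := by
  rw [ResiduallyFinite, eq_bot_iff]
  intro x hx
  rw [Subgroup.mem_sInf] at hx
  have hxG : (x : G) ∈ sInf {N : Subgroup G | N.Normal ∧ N.FiniteIndex} := by
    rw [Subgroup.mem_sInf]
    rintro N ⟨hN, hNf⟩
    haveI := hNf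
    have : x ∈ N.subgroupOf K := hx _ ⟨hN.comap K.subtype, Subgroup.instFiniteIndex_subgroupOf N K⟩
    exact this
  rw [h] at hxG
  have : (x : G) = 1 := hxG
  simpa [Subgroup.mem_bot] using Subtype.ext this

lemma infinite_subgroup_of_finiteIndex [Infinite G] {K : Subgroup G} (h : K.FiniteIndex) :
    Infinite K := by
  by_contra hfin
  rw [not_infinite_iff_finite] at hfin
  haveI := hfin
  haveI := h
  haveI : Finite G :=
    Finite.of_equiv _ (Subgroup.groupEquivQuotientProdSubgroup (s := K)).symm
  exact not_finite G

lemma exists_coatom_of_finiteIndex {S : Subgroup G} (hfi : S.FiniteIndex) (hne : S ≠ ⊤) :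
    ∃ M : Subgroup G, S ≤ M ∧ IsCoatom M := by
  haveI := hfi
  have hfin : {T : Subgroup G | S ≤ T ∧ T ≠ ⊤}.Finite := by
    have hinj : Set.InjOn (fun T : Subgroup G => (QuotientGroup.mk (s := S)) '' (T : Set G))
        {T : Subgroup G | S ≤ T ∧ T ≠ ⊤} := by
      rintro T₁ ⟨h₁, -⟩ T₂ ⟨h₂, -⟩ heq
      have key : ∀ T T' : Subgroup G, S ≤ T' →
          (QuotientGroup.mk (s := S)) '' (T : Set G) = (QuotientGroup.mk (s := S)) '' (T' : Set G)
          → T ≤ T' := by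
        intro T T' hle him x hx
        have : (QuotientGroup.mk (s := S) x) ∈ (QuotientGroup.mk (s := S)) '' (T' : Set G) := by
          rw [← him]; exact ⟨x, hx, rfl⟩
        obtain ⟨y, hy, hxy⟩ := this
        have : y⁻¹ * x ∈ S := (QuotientGroup.eq (s := S)).mp hxy
        have := T'.mul_mem hy (hle this)
        simpa using this
      exact le_antisymm (key T₁ T₂ h₂ heq) (key T₂ T₁ h₁ heq.symm)
    apply Set.Finite.of_finite_image _ hinj
    exact Set.toFinite _
  obtain ⟨M, hM, hmax⟩ := Set.Finite.exists_maximalFor id _ hfin ⟨S, le_refl S, hne⟩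
  refine ⟨M, hM.1, hM.2, fun T hT => ?_⟩
  by_contra hTne
  exact (ne_of_lt hT) (le_antisymm hT.le (hmax ⟨le_trans hM.1 hT.le, hTne⟩ hT.le))

lemma subgroupOf_ne_bot {X M : Subgroup G} (hle : X ≤ M) (hX : X ≠ ⊥) :
    X.subgroupOf M ≠ ⊥ := by
  intro h
  apply hX
  rw [eq_bot_iff] at h ⊢
  intro x hx
  have hmem : (⟨x, hle hx⟩ : M) ∈ X.subgroupOf M := by
    rw [Subgroup.mem_subgroupOf]; exact hx
  have := h hmem
  rw [Subgroup.mem_bot] at this ⊢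
  exact congrArg Subtype.val this

lemma finiteIndex_of_subgroupOf {X M : Subgroup G} (hle : X ≤ M) (hM : M.FiniteIndex)
    (h : (X.subgroupOf M).FiniteIndex) : X.FiniteIndex := by
  constructor
  rw [← Subgroup.relIndex_mul_index hle]
  exact Nat.mul_ne_zero h.index_ne_zero hM.index_ne_zero

lemma subgroupOf_normal_of_stab {X M : Subgroup G}
    (h : ∀ m ∈ M, ∀ x ∈ X, m * x * m⁻¹ ∈ X) : (X.subgroupOf M).Normal := by
  constructor
  intro n hn m
  rw [Subgroup.mem_subgroupOf] at hn ⊢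
  exact h m m.2 n hn

end JIAux


open Pointwise JIAux commutatorElement

/-- Theorem 1: a nontrivial normal subgroup H of a just infinite, non
virtually abelian group G is just infinite iff every maximal subgroup of G
containing H is just infinite. -/
theorem justInfinite_iff_maximal_subgroups {G : Type*} [Group G]
    (hji : JustInfinite G) (hnva : ¬ VirtuallyAbelian G)
    (H : Subgroup G) (hH : H ≠ ⊥) (hn : H.Normal) :
    JustInfinite H ↔
      ∀ M : Subgroup G, H ≤ M → IsCoatom M → JustInfinite M := by
  classical
  haveI hInfG : Infinite G := hji.1
  haveI hHfi : H.FiniteIndex := hji.2.2 H hn hH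
  constructor
  · -- forward direction
    intro hHji M hHM hMco
    haveI hMfi : M.FiniteIndex := Subgroup.finiteIndex_of_le hHM
    refine ⟨infinite_subgroup_of_finiteIndex hMfi, residuallyFinite_subgroup hji.2.1 M, ?_⟩
    intro L hLn hLb
    set L' := L.map M.subtype with hL'def
    have hL'M : L' ≤ M := Subgroup.map_subtype_le L
    have hL'b : L' ≠ ⊥ := by
      intro h
      exact hLb (Subgroup.map_injective M.subtype_injective
        (h.trans (Subgroup.map_bot M.subtype).symm))
    have hstab : ∀ m ∈ M, ∀ x ∈ L', m * x * m⁻¹ ∈ L' := by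
      intro m hm x hx
      obtain ⟨y, hy, rfl⟩ := hx
      exact ⟨⟨m, hm⟩ * y * ⟨m, hm⟩⁻¹, hLn.conj_mem y hy ⟨m, hm⟩, rfl⟩
    by_cases hX : L' ⊓ H = ⊥
    · exfalso
      have hcent : L' ≤ Subgroup.centralizer (H : Set G) := by
        intro x hx
        rw [Subgroup.mem_centralizer_iff]
        intro y hy
        have hz : x * y * x⁻¹ * y⁻¹ ∈ L' ⊓ H := by
          constructor
          · have h1 : y * x⁻¹ * y⁻¹ ∈ L' := hstab y (hHM hy) x⁻¹ (inv_mem hx)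
            have := L'.mul_mem hx h1
            simpa [mul_assoc] using this
          · have h2 : x * y * x⁻¹ ∈ H := hn.conj_mem y hy x
            exact H.mul_mem h2 (inv_mem hy)
        rw [hX, Subgroup.mem_bot] at hz
        have hc' : ⁅x, y⁆ = 1 := by rw [commutatorElement_def]; exact hz
        exact (commutatorElement_eq_one_iff_commute.mp hc').eq.symm
      have hCn : (Subgroup.centralizer (H : Set G)).Normal := by
        constructor
        intro x hx g
        rw [Subgroup.mem_centralizer_iff] at hx ⊢
        intro y hy
        have hy' : g⁻¹ * y * g ∈ H := by
          have := hn.conj_mem y hy g⁻¹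
          simpa using this
        have he := hx _ hy'
        calc y * (g * x * g⁻¹) = g * ((g⁻¹ * y * g) * x) * g⁻¹ := by group
          _ = g * (x * (g⁻¹ * y * g)) * g⁻¹ := by rw [he]
          _ = (g * x * g⁻¹) * y := by group
      have hCb : Subgroup.centralizer (H : Set G) ≠ ⊥ := by
        intro h
        exact hL'b (le_bot_iff.mp (h ▸ hcent))
      haveI hCfi := hji.2.2 _ hCn hCb
      apply hnva
      refine ⟨Subgroup.centralizer (H : Set G) ⊓ H, inferInstance, ?_⟩
      rintro ⟨a, haC, haH⟩ ⟨b, hbC, hbH⟩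
      exact Subtype.ext (Subgroup.mem_centralizer_iff.mp hbC a haH)
    · have hXle : L' ⊓ H ≤ H := inf_le_right
      have hXn : ((L' ⊓ H).subgroupOf H).Normal := by
        apply subgroupOf_normal_of_stab
        intro h hh x hx
        exact ⟨hstab h (hHM hh) x hx.1, hn.conj_mem x hx.2 h⟩
      have hXb := subgroupOf_ne_bot hXle hX
      have hfi := hHji.2.2 _ hXn hXb
      have hXfi : (L' ⊓ H).FiniteIndex := finiteIndex_of_subgroupOf hXle hHfi hfi
      haveI hL'fi : L'.FiniteIndex := by
        haveI := hXfi
        exact Subgroup.finiteIndex_of_le (inf_le_left : L' ⊓ H ≤ L')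
      have hLL' : L'.subgroupOf M = L :=
        Subgroup.comap_map_eq_self_of_injective M.subtype_injective L
      rw [← hLL']
      exact Subgroup.instFiniteIndex_subgroupOf L' M
  · -- backward direction
    intro hmax
    refine ⟨infinite_subgroup_of_finiteIndex hHfi, residuallyFinite_subgroup hji.2.1 H, ?_⟩
    intro L hLn hLb
    set L' := L.map H.subtype with hL'def
    have hL'H : L' ≤ H := Subgroup.map_subtype_le L
    have hL'b : L' ≠ ⊥ := by
      intro h
      exact hLb (Subgroup.map_injective H.subtype_injective
        (h.trans (Subgroup.map_bot H.subtype).symm))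
    have hstab : ∀ h ∈ H, ∀ x ∈ L', h * x * h⁻¹ ∈ L' := by
      intro m hm x hx
      obtain ⟨y, hy, rfl⟩ := hx
      exact ⟨⟨m, hm⟩ * y * ⟨m, hm⟩⁻¹, hLn.conj_mem y hy ⟨m, hm⟩, rfl⟩
    have hLfix : ∀ h ∈ H, MulAut.conj h • L' = L' := fun h hh => conjSmul_eq_of_stab hstab hh
    suffices hfi : L'.FiniteIndex by
      haveI := hfi
      have hLL' : L'.subgroupOf H = L :=
        Subgroup.comap_map_eq_self_of_injective H.subtype_injective L
      rw [← hLL']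
      exact Subgroup.instFiniteIndex_subgroupOf L' H
    by_contra hnfi
    have hLidx : L'.index = 0 := by
      by_contra h0
      exact hnfi ⟨h0⟩
    -- the set of conjugates of L'
    set C : Set (Subgroup G) := Set.range (fun g : G => MulAut.conj g • L') with hCdef
    have hCle : ∀ K ∈ C, K ≤ H := by
      rintro K ⟨g, rfl⟩
      exact conjSmul_le_of_normal hL'H hn
    have hCfix : ∀ K ∈ C, ∀ h ∈ H, MulAut.conj h • K = K := by
      rintro K ⟨g, rfl⟩ h hh
      rw [conjSmul_conjSmul]
      have he : h * g = g * (g⁻¹ * h * g) := by group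
      rw [he, ← conjSmul_conjSmul]
      rw [hLfix _ (by simpa using hn.conj_mem h hh g⁻¹)]
    have hCidx : ∀ K ∈ C, K.index = 0 := by
      rintro K ⟨g, rfl⟩
      rw [index_conjSmul]
      exact hLidx
    have hCclosed : ∀ K ∈ C, ∀ g : G, MulAut.conj g • K ∈ C := by
      rintro K ⟨g', rfl⟩ g
      exact ⟨g * g', (conjSmul_conjSmul g g' L').symm⟩
    have hHNL : H ≤ (Subgroup.normalizer (L' : Set G)) := fun h hh => conjSmul_eq_iff_mem_normalizer.mp (hLfix h hh)
    haveI hNLfi : (Subgroup.normalizer (L' : Set G)).FiniteIndex := Subgroup.finiteIndex_of_le hHNL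
    have hCfin : C.Finite := by
      have key : ∀ (a b : G), (QuotientGroup.leftRel (Subgroup.normalizer (L' : Set G))) a b →
          MulAut.conj a • L' = MulAut.conj b • L' := by
        intro a b hab
        rw [QuotientGroup.leftRel_apply] at hab
        have h1 : MulAut.conj (a⁻¹ * b) • L' = L' := conjSmul_eq_iff_mem_normalizer.mpr hab
        calc MulAut.conj a • L' = MulAut.conj a • (MulAut.conj (a⁻¹ * b) • L') := by rw [h1]
          _ = MulAut.conj b • L' := by rw [conjSmul_conjSmul, mul_inv_cancel_left]
      let f : G ⧸ (Subgroup.normalizer (L' : Set G)) → Subgroup G := Quotient.lift (fun g => MulAut.conj g • L') key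
      have hsub : C ⊆ Set.range f := by
        rintro K ⟨g, rfl⟩
        exact ⟨QuotientGroup.mk g, rfl⟩
      exact (Set.finite_range f).subset hsub
    set Cs := hCfin.toFinset with hCs
    have hmemCs : ∀ K : Subgroup G, K ∈ Cs ↔ K ∈ C := fun K => Set.Finite.mem_toFinset hCfin
    have hL'C : L' ∈ C := ⟨1, by simp⟩
    set P := Cs.powerset.filter (fun s => s.Nonempty ∧ s.inf id ≠ ⊥) with hPdef
    have hPne : ({L'} : Finset (Subgroup G)) ∈ P := by
      rw [hPdef, Finset.mem_filter, Finset.mem_powerset]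
      refine ⟨?_, ⟨L', Finset.mem_singleton_self L'⟩, by simpa using hL'b⟩
      intro x hx
      rw [Finset.mem_singleton] at hx
      subst hx
      exact (hmemCs L').mpr hL'C
    obtain ⟨s, hsP, hsmax⟩ := Finset.exists_max_image P (fun s => s.card) ⟨_, hPne⟩
    rw [hPdef, Finset.mem_filter, Finset.mem_powerset] at hsP
    obtain ⟨hsCs, hsne, hsbot⟩ := hsP
    set B := s.inf id with hB
    have hsC : ∀ K ∈ s, K ∈ C := fun K hK => (hmemCs K).mp (hsCs hK)
    obtain ⟨K₀, hK₀⟩ := hsne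
    have hBleK₀ : B ≤ K₀ := Finset.inf_le hK₀
    have hBH : B ≤ H := hBleK₀.trans (hCle K₀ (hsC _ hK₀))
    have hBb : B ≠ ⊥ := hsbot
    have hBidx : B.index = 0 := by
      have hdvd := Subgroup.index_dvd_of_le hBleK₀
      rw [hCidx K₀ (hsC _ hK₀)] at hdvd
      exact zero_dvd_iff.mp hdvd
    have hBfix : ∀ h ∈ H, MulAut.conj h • B = B := by
      intro h hh
      rw [hB, smul_finsetInf]
      have himg : s.image (fun K => MulAut.conj h • K) = s := by
        rw [Finset.image_congr (g := id) (fun K hK => hCfix K (hsC K hK) h hh), Finset.image_id]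
      rw [himg]
    have hKey : ∀ g : G, B ⊓ (MulAut.conj g • B) ≠ ⊥ → B ≤ MulAut.conj g • B := by
      intro g hne
      set t := s.image (fun K => MulAut.conj g • K) with ht
      have hst : (s ∪ t).inf id = B ⊓ MulAut.conj g • B := by
        rw [Finset.inf_union, hB, ht, ← smul_finsetInf]
      have hmem : s ∪ t ∈ P := by
        rw [hPdef, Finset.mem_filter, Finset.mem_powerset]
        refine ⟨?_, ⟨K₀, Finset.mem_union_left _ hK₀⟩, by rw [hst]; exact hne⟩
        intro K hK
        rw [Finset.mem_union] at hK
        rcases hK with hK | hK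
        · exact hsCs hK
        · rw [ht, Finset.mem_image] at hK
          obtain ⟨K', hK', rfl⟩ := hK
          exact (hmemCs _).mpr (hCclosed _ (hsC _ hK') g)
      have hcard := hsmax _ hmem
      have heq := Finset.eq_of_subset_of_card_le Finset.subset_union_left hcard
      have htsub : t ⊆ s := heq ▸ Finset.subset_union_right
      calc B = s.inf id := rfl
        _ ≤ t.inf id := Finset.inf_mono htsub
        _ = MulAut.conj g • B := by rw [ht, ← smul_finsetInf]
    have hDisj : ∀ g : G, MulAut.conj g • B ≠ B → B ⊓ (MulAut.conj g • B) = ⊥ := by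
      intro g hne
      by_contra hbot
      have h1 : B ≤ MulAut.conj g • B := hKey g hbot
      have h2 : MulAut.conj g⁻¹ • B ≤ B := by
        calc MulAut.conj g⁻¹ • B ≤ MulAut.conj g⁻¹ • (MulAut.conj g • B) :=
              Subgroup.pointwise_smul_le_pointwise_smul_iff.mpr h1
          _ = B := by rw [conjSmul_conjSmul, inv_mul_cancel, map_one, one_smul]
      have h3 : B ⊓ MulAut.conj g⁻¹ • B ≠ ⊥ := by
        rw [inf_eq_right.mpr h2]
        exact conjSmul_ne_bot hBb
      have h4 := hKey g⁻¹ h3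
      have h5 : MulAut.conj g • B ≤ B := by
        calc MulAut.conj g • B ≤ MulAut.conj g • (MulAut.conj g⁻¹ • B) :=
              Subgroup.pointwise_smul_le_pointwise_smul_iff.mpr h4
          _ = B := by rw [conjSmul_conjSmul, mul_inv_cancel, map_one, one_smul]
      exact hne (le_antisymm h5 h1)
    have hfixconj : ∀ g : G, ∀ h ∈ H, MulAut.conj h • (MulAut.conj g • B) = MulAut.conj g • B := by
      intro g h hh
      rw [conjSmul_conjSmul]
      have he : h * g = g * (g⁻¹ * h * g) := by group
      rw [he, ← conjSmul_conjSmul]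
      rw [hBfix _ (by simpa using hn.conj_mem h hh g⁻¹)]
    have hComm : ∀ g₁ g₂ : G, MulAut.conj g₁ • B ≠ MulAut.conj g₂ • B →
        ∀ x ∈ MulAut.conj g₁ • B, ∀ y ∈ MulAut.conj g₂ • B, x * y = y * x := by
      intro g₁ g₂ hne x hx y hy
      have hdisj : (MulAut.conj g₁ • B) ⊓ (MulAut.conj g₂ • B) = ⊥ := by
        have hne' : MulAut.conj (g₁⁻¹ * g₂) • B ≠ B := by
          intro h
          apply hne
          have := congrArg (fun X => MulAut.conj g₁ • X) h
          simp only [conjSmul_conjSmul, mul_inv_cancel_left] at this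
          exact this.symm
        have hd := hDisj (g₁⁻¹ * g₂) hne'
        have := congrArg (fun X => MulAut.conj g₁ • X) hd
        simpa only [Subgroup.smul_inf, conjSmul_conjSmul, mul_inv_cancel_left,
          Subgroup.smul_bot] using this
      have hx' : x ∈ H := conjSmul_le_of_normal hBH hn hx
      have hy' : y ∈ H := conjSmul_le_of_normal hBH hn hy
      have hz : x * y * x⁻¹ * y⁻¹ ∈ (MulAut.conj g₁ • B) ⊓ (MulAut.conj g₂ • B) := by
        constructor
        · have h1 : y * x⁻¹ * y⁻¹ ∈ MulAut.conj g₁ • B := by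
            rw [← hfixconj g₁ y hy', mem_conjSmul]
            simpa [mul_assoc] using inv_mem hx
          have := Subgroup.mul_mem _ hx h1
          exact (by simpa [mul_assoc] using this : x * y * x⁻¹ * y⁻¹ ∈ MulAut.conj g₁ • B)
        · have h2 : x * y * x⁻¹ ∈ MulAut.conj g₂ • B := by
            rw [← hfixconj g₂ x hx', mem_conjSmul]
            simpa [mul_assoc] using hy
          exact Subgroup.mul_mem _ h2 (inv_mem hy)
      rw [hdisj, Subgroup.mem_bot] at hz
      have hz' : ⁅x, y⁆ = 1 := by rw [commutatorElement_def]; exact hz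
      exact (commutatorElement_eq_one_iff_commute.mp hz').eq
    have hHNB : H ≤ (Subgroup.normalizer (B : Set G)) := fun h hh => conjSmul_eq_iff_mem_normalizer.mp (hBfix h hh)
    have hNfi : (Subgroup.normalizer (B : Set G)).FiniteIndex := Subgroup.finiteIndex_of_le hHNB
    have hNne : (Subgroup.normalizer (B : Set G)) ≠ ⊤ := by
      intro htop
      have hBnormal : B.Normal := Subgroup.normalizer_eq_top_iff.mp htop
      exact (hji.2.2 B hBnormal hBb).index_ne_zero hBidx
    obtain ⟨M, hNM, hMco⟩ := exists_coatom_of_finiteIndex hNfi hNne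
    have hHM : H ≤ M := hHNB.trans hNM
    have hMji := hmax M hHM hMco
    haveI hMfi : M.FiniteIndex := Subgroup.finiteIndex_of_le hHM
    set K : Subgroup G := ⨆ m : M, MulAut.conj (m : G) • B with hK
    have hBK : B ≤ K := by
      have := le_iSup (fun m : M => MulAut.conj (m : G) • B) 1
      simpa using this
    have hKH : K ≤ H := iSup_le fun m => conjSmul_le_of_normal hBH hn
    have hKfixle : ∀ m ∈ M, MulAut.conj m • K ≤ K := by
      intro m hm
      rw [hK, Subgroup.pointwise_smul_subset_iff]
      apply iSup_le
      intro m'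
      rw [Subgroup.subset_pointwise_smul_iff, inv_inv, conjSmul_conjSmul]
      exact le_iSup (fun m : M => MulAut.conj (m : G) • B) ⟨m * m', M.mul_mem hm m'.2⟩
    have hKfix : ∀ m ∈ M, MulAut.conj m • K = K := by
      intro m hm
      refine le_antisymm (hKfixle m hm) ?_
      have h2 := hKfixle m⁻¹ (M.inv_mem hm)
      calc K = MulAut.conj m • (MulAut.conj m⁻¹ • K) := by
            rw [conjSmul_conjSmul, mul_inv_cancel, map_one, one_smul]
        _ ≤ MulAut.conj m • K := Subgroup.pointwise_smul_le_pointwise_smul_iff.mpr h2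
    have hKb : K ≠ ⊥ := by
      intro h
      exact hBb (le_bot_iff.mp (h ▸ hBK))
    have hKM : K ≤ M := hKH.trans hHM
    have hKMn : (K.subgroupOf M).Normal := by
      apply subgroupOf_normal_of_stab
      intro m hm x hx
      rw [← hKfix m hm, mem_conjSmul]
      simpa [mul_assoc] using hx
    have hKfi : K.FiniteIndex :=
      finiteIndex_of_subgroupOf hKM hMfi (hMji.2.2 _ hKMn (subgroupOf_ne_bot hKM hKb))
    obtain ⟨g, hg⟩ : ∃ g : G, g ∉ M := by
      by_contra h
      push_neg at h
      exact hMco.1 ((Subgroup.eq_top_iff' M).mpr h)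
    set D := MulAut.conj g • B with hD
    have hDb : D ≠ ⊥ := conjSmul_ne_bot hBb
    have hDH : D ≤ H := conjSmul_le_of_normal hBH hn
    have hDne : ∀ m : M, MulAut.conj (m : G) • B ≠ D := by
      intro m heq
      apply hg
      have h1 : MulAut.conj (g⁻¹ * m) • B = B := by
        rw [← conjSmul_conjSmul, heq, hD, conjSmul_conjSmul, inv_mul_cancel, map_one, one_smul]
      have h2 : g⁻¹ * m ∈ M := hNM (conjSmul_eq_iff_mem_normalizer.mp h1)
      have h3 : (g⁻¹ : G) ∈ M := by
        have := M.mul_mem h2 (M.inv_mem m.2)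
        simpa [mul_assoc] using this
      simpa using M.inv_mem h3
    have hKcent : K ≤ Subgroup.centralizer (D : Set G) := by
      rw [hK]
      apply iSup_le
      intro m z hz
      rw [Subgroup.mem_centralizer_iff]
      intro d hd
      exact hComm g m (fun h => hDne m h.symm) d hd z hz
    set Cg := Subgroup.centralizer (K : Set G) with hCg
    set E := Cg ⊓ M with hE
    have hDCg : D ≤ Cg := by
      intro x hx
      rw [hCg, Subgroup.mem_centralizer_iff]
      intro y hy
      exact (Subgroup.mem_centralizer_iff.mp (hKcent hy) x hx).symm
    have hEb : E ≠ ⊥ := by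
      intro h
      apply hDb
      rw [eq_bot_iff] at h ⊢
      intro x hx
      exact h ⟨hDCg hx, hHM (hDH hx)⟩
    have hEM : E ≤ M := inf_le_right
    have hEn : (E.subgroupOf M).Normal := by
      apply subgroupOf_normal_of_stab
      intro m hm x hx
      obtain ⟨hx1, hx2⟩ := Subgroup.mem_inf.mp hx
      have h1 : m * x * m⁻¹ ∈ Cg := by
        rw [hCg, Subgroup.mem_centralizer_iff]
        intro y hy
        have hy' : m⁻¹ * y * m ∈ K := by
          rw [← hKfix m⁻¹ (M.inv_mem hm), mem_conjSmul]
          simpa [mul_assoc] using hy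
        have he := Subgroup.mem_centralizer_iff.mp (hCg ▸ hx1) _ hy'
        calc y * (m * x * m⁻¹) = m * ((m⁻¹ * y * m) * x) * m⁻¹ := by group
          _ = m * (x * (m⁻¹ * y * m)) * m⁻¹ := by rw [he]
          _ = (m * x * m⁻¹) * y := by group
      exact Subgroup.mem_inf.mpr ⟨h1, M.mul_mem (M.mul_mem hm hx2) (M.inv_mem hm)⟩
    have hEfi : E.FiniteIndex :=
      finiteIndex_of_subgroupOf hEM hMfi (hMji.2.2 _ hEn (subgroupOf_ne_bot hEM hEb))
    exfalso
    apply hnva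
    haveI := hKfi
    haveI := hEfi
    refine ⟨K ⊓ E, inferInstance, ?_⟩
    rintro ⟨a, haK, haE⟩ ⟨b, hbK, hbE⟩
    exact Subtype.ext (Subgroup.mem_centralizer_iff.mp hbE.1 a haK)
end

section
/- Let G be a just infinite group that is not virtually abelian. Then G is hereditarily just infinite if and only if every maximal subgroup of G of finite index is just infinite. -/
namespace HJIaux

variable {G : Type*} [Group G]

lemma commute_of_disjoint {H B₁ B₂ : Subgroup G} (h1 : B₁ ≤ H) (h2 : B₂ ≤ H)
    (n1 : ∀ h ∈ H, ∀ x ∈ B₁, h * x * h⁻¹ ∈ B₁) (n2 : ∀ h ∈ H, ∀ x ∈ B₂, h * x * h⁻¹ ∈ B₂)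
    (hd : B₁ ⊓ B₂ = ⊥) : ∀ x ∈ B₁, ∀ y ∈ B₂, Commute x y := by
  intro x hx y hy
  have hxH : x ∈ H := h1 hx
  have hyH : y ∈ H := h2 hy
  have c1 : x⁻¹ * (y⁻¹ * x * y) ∈ B₁ := by
    have h := n1 y⁻¹ (inv_mem hyH) x hx
    rw [inv_inv] at h
    exact mul_mem (inv_mem hx) h
  have c2 : x⁻¹ * (y⁻¹ * x * y) ∈ B₂ := by
    have h := n2 x⁻¹ (inv_mem hxH) y⁻¹ (inv_mem hy)
    rw [inv_inv] at h
    have h2 : x⁻¹ * y⁻¹ * x * y ∈ B₂ := mul_mem h hy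
    have : x⁻¹ * (y⁻¹ * x * y) = x⁻¹ * y⁻¹ * x * y := by group
    rw [this]
    exact h2
  have hmem : x⁻¹ * (y⁻¹ * x * y) ∈ B₁ ⊓ B₂ := ⟨c1, c2⟩
  rw [hd, Subgroup.mem_bot, inv_mul_eq_one] at hmem
  show x * y = y * x
  calc x * y = y * (y⁻¹ * x * y) := by group
    _ = y * x := by rw [← hmem]

lemma centralizer_normal_of_normal {N : Subgroup G} (hN : N.Normal) :
    (Subgroup.centralizer (N : Set G)).Normal := by
  constructor
  intro c hc g
  rw [Subgroup.mem_centralizer_iff] at hc ⊢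
  intro n hn
  have hn' : g⁻¹ * n * g ∈ N := by
    have := hN.conj_mem n hn g⁻¹
    simpa using this
  have h := hc _ hn'
  have h2 := congrArg (fun z => g * z * g⁻¹) h
  simp only [mul_assoc] at h2 ⊢
  group at h2 ⊢
  convert h2 using 1 <;> group

lemma le_centralizer_of_commute {A C : Subgroup G}
    (h : ∀ x ∈ A, ∀ y ∈ C, Commute x y) : A ≤ Subgroup.centralizer (C : Set G) := by
  intro a ha
  rw [Subgroup.mem_centralizer_iff]
  intro c hc
  exact (h a ha c hc).symm

lemma ne_bot_of_le {A B : Subgroup G} (hA : A ≠ ⊥) (h : A ≤ B) : B ≠ ⊥ := by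
  intro hB
  exact hA (le_bot_iff.mp (hB ▸ h))

lemma lemA (hji : JustInfinite G) {N : Subgroup G} (hN : N.Normal) (hNfi : N.FiniteIndex)
    (hc : Subgroup.centralizer (N : Set G) ≠ ⊥) : VirtuallyAbelian G := by
  have hCnormal := centralizer_normal_of_normal hN
  have hCfi : (Subgroup.centralizer (N : Set G)).FiniteIndex := hji.2.2 _ hCnormal hc
  refine ⟨N ⊓ Subgroup.centralizer (N : Set G), ?_, ?_⟩
  · haveI := hNfi; haveI := hCfi; infer_instance
  · intro a b
    have hb := (Subgroup.mem_inf.mp b.2).2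
    have ha := (Subgroup.mem_inf.mp a.2).1
    have := Subgroup.mem_centralizer_iff.mp hb a.1 ha
    exact Subtype.ext this

lemma closure_commute {s : Set G} (hs : ∀ x ∈ s, ∀ y ∈ s, Commute x y) :
    ∀ x ∈ Subgroup.closure s, ∀ y ∈ Subgroup.closure s, Commute x y := by
  intro x hx y hy
  exact Subgroup.closure_induction₂ (p := fun a b _ _ => Commute a b) (fun x y hx hy => hs x hx y hy)
    (fun x _ => Commute.one_left x) (fun x _ => Commute.one_right x)
    (fun x y z _ _ _ h1 h2 => h1.mul_left h2) (fun y z x _ _ _ h1 h2 => h1.mul_right h2)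
    (fun x y _ _ h => h.inv_left) (fun x y _ _ h => h.inv_right) hx hy

lemma lemB (hji : JustInfinite G) {H A : Subgroup G} (hH : H.Normal) (hHfi : H.FiniteIndex)
    (hAbot : A ≠ ⊥) (hAH : A ≤ H)
    (hAn : ∀ h ∈ H, ∀ x ∈ A, h * x * h⁻¹ ∈ A)
    (hcfi : (Subgroup.centralizer (A : Set G)).FiniteIndex) : VirtuallyAbelian G := by
  set C : Subgroup G := (Subgroup.centralizer (A : Set G)).normalCore ⊓ H with hCdef
  haveI : (Subgroup.centralizer (A : Set G)).FiniteIndex := hcfi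
  have hCnormal : C.Normal := Subgroup.normal_inf_normal _ _
  have hCfi : C.FiniteIndex := by
    haveI := hHfi
    infer_instance
  have hCle : C ≤ Subgroup.centralizer (A : Set G) :=
    le_trans inf_le_left (Subgroup.normalCore_le _)
  by_cases h0 : A ⊓ C = ⊥
  · -- A centralizes C
    have hcomm := commute_of_disjoint hAH inf_le_right hAn
      (fun h hh x hx => hCnormal.conj_mem x hx h) h0
    have hle : A ≤ Subgroup.centralizer (C : Set G) := le_centralizer_of_commute hcomm
    exact lemA hji hCnormal hCfi (ne_bot_of_le hAbot hle)
  · set A₀ : Subgroup G := A ⊓ C with hA0def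
    have hA0C : A₀ ≤ C := inf_le_right
    have hA0A : A₀ ≤ A := inf_le_left
    set W : Subgroup G := Subgroup.normalClosure (A₀ : Set G) with hWdef
    have hWne : W ≠ ⊥ := ne_bot_of_le h0 Subgroup.le_normalClosure
    have hWfi : W.FiniteIndex := hji.2.2 W Subgroup.normalClosure_normal hWne
    refine ⟨W, hWfi, ?_⟩
    have hgen : ∀ x ∈ Group.conjugatesOfSet (A₀ : Set G),
        ∀ y ∈ Group.conjugatesOfSet (A₀ : Set G), Commute x y := by
      intro x hx y hy
      obtain ⟨a, ha, hax⟩ := Group.mem_conjugatesOfSet_iff.mp hx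
      obtain ⟨a', ha', hay⟩ := Group.mem_conjugatesOfSet_iff.mp hy
      obtain ⟨g, rfl⟩ := isConj_iff.mp hax
      obtain ⟨g', rfl⟩ := isConj_iff.mp hay
      have hv : (g⁻¹ * g') * a' * (g⁻¹ * g')⁻¹ ∈ C := hCnormal.conj_mem a' (hA0C ha') _
      have hcomm : Commute a ((g⁻¹ * g') * a' * (g⁻¹ * g')⁻¹) :=
        (Subgroup.mem_centralizer_iff.mp (hCle hv) a (hA0A ha))
      have := hcomm.map ((MulAut.conj g).toMonoidHom)
      simp only [MulEquiv.coe_toMonoidHom, MulAut.conj_apply] at this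
      have heq : g * ((g⁻¹ * g') * a' * (g⁻¹ * g')⁻¹) * g⁻¹ = g' * a' * g'⁻¹ := by group
      rwa [heq] at this
    intro a b
    have := closure_commute hgen a.1 a.2 b.1 b.2
    exact Subtype.ext this



/-- Conjugate of a subgroup. -/
def cnj (g : G) (B : Subgroup G) : Subgroup G := B.map (MulAut.conj g).toMonoidHom

lemma mem_cnj {g x : G} {B : Subgroup G} : x ∈ cnj g B ↔ g⁻¹ * x * g ∈ B := by
  rw [cnj, Subgroup.mem_map_equiv]
  simp [MulAut.conj]

lemma cnj_cnj (g g' : G) (B : Subgroup G) : cnj g (cnj g' B) = cnj (g * g') B := by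
  ext x
  simp only [mem_cnj]
  constructor
  · intro h
    have he : (g * g')⁻¹ * x * (g * g') = g'⁻¹ * (g⁻¹ * x * g) * g' := by group
    rwa [he]
  · intro h
    have he : g'⁻¹ * (g⁻¹ * x * g) * g' = (g * g')⁻¹ * x * (g * g') := by group
    rwa [he]

lemma cnj_one (B : Subgroup G) : cnj 1 B = B := by
  ext x; simp [mem_cnj]

lemma cnj_bot (g : G) : cnj g (⊥ : Subgroup G) = ⊥ := by
  ext x
  simp only [mem_cnj, Subgroup.mem_bot]
  constructor
  · intro h
    have := congrArg (fun z => g * z * g⁻¹) h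
    simpa [mul_assoc] using this
  · rintro rfl; group

lemma cnj_ne_bot {g : G} {B : Subgroup G} (hB : B ≠ ⊥) : cnj g B ≠ ⊥ := by
  intro h
  apply hB
  have := congrArg (cnj g⁻¹) h
  rwa [cnj_cnj, inv_mul_cancel, cnj_one, cnj_bot] at this

lemma cnj_index (g : G) (B : Subgroup G) : (cnj g B).index = B.index := by
  rw [cnj, Subgroup.index_map]
  have hker : ((MulAut.conj g).toMonoidHom : G →* G).ker = ⊥ :=
    MonoidHom.ker_eq_bot_iff _ |>.mpr (MulAut.conj g).injective
  have hrange : ((MulAut.conj g).toMonoidHom : G →* G).range = ⊤ :=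
    MonoidHom.range_eq_top_of_surjective _ (MulAut.conj g).surjective
  rw [hker, hrange, sup_bot_eq, Subgroup.index_top, mul_one]

lemma cnj_le {g : G} {B H : Subgroup G} (hH : H.Normal) (hBH : B ≤ H) : cnj g B ≤ H := by
  intro x hx
  rw [mem_cnj] at hx
  have := hH.conj_mem _ (hBH hx) g
  have he : g * (g⁻¹ * x * g) * g⁻¹ = x := by group
  rwa [he] at this

lemma cnj_normby {g : G} {B H : Subgroup G} (hH : H.Normal)
    (hn : ∀ h ∈ H, ∀ x ∈ B, h * x * h⁻¹ ∈ B) :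
    ∀ h ∈ H, ∀ x ∈ cnj g B, h * x * h⁻¹ ∈ cnj g B := by
  intro h hh x hx
  rw [mem_cnj] at hx ⊢
  have hh' : g⁻¹ * h * g ∈ H := by
    have := hH.conj_mem _ hh g⁻¹
    simpa [mul_assoc] using this
  have := hn _ hh' _ hx
  have he : g⁻¹ * h * g * (g⁻¹ * x * g) * (g⁻¹ * h * g)⁻¹ = g⁻¹ * (h * x * h⁻¹) * g := by group
  rwa [he] at this

lemma cnj_sInf (g : G) (S : Set (Subgroup G)) :
    cnj g (sInf S) = sInf (cnj g '' S) := by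
  ext x
  simp only [mem_cnj, Subgroup.mem_sInf, Set.mem_image]
  constructor
  · rintro h C ⟨B, hB, rfl⟩
    rw [mem_cnj]
    exact h B hB
  · intro h B hB
    have := h (cnj g B) ⟨B, hB, rfl⟩
    rwa [mem_cnj] at this

lemma residuallyFinite_subgroup (hrf : ResiduallyFinite G) (K : Subgroup G) :
    ResiduallyFinite K := by
  rw [ResiduallyFinite, eq_bot_iff]
  intro x hx
  rw [Subgroup.mem_sInf] at hx
  rw [Subgroup.mem_bot]
  have hxG : (x : G) ∈ sInf {N : Subgroup G | N.Normal ∧ N.FiniteIndex} := by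
    rw [Subgroup.mem_sInf]
    rintro N ⟨hN, hNfi⟩
    have h1 : (N.subgroupOf K).Normal := hN.subgroupOf K
    have h2 : (N.subgroupOf K).FiniteIndex := by
      constructor
      intro h
      have hdvd : N.relIndex K ∣ N.index := by
        haveI := hN
        exact Subgroup.relIndex_dvd_index_of_normal N K
      rw [Subgroup.relIndex] at hdvd
      rw [h] at hdvd
      exact hNfi.index_ne_zero (zero_dvd_iff.mp hdvd)
    exact Subgroup.mem_subgroupOf.mp (hx _ ⟨h1, h2⟩)
  rw [hrf, Subgroup.mem_bot] at hxG
  exact Subtype.ext hxG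

lemma infinite_subgroup [Infinite G] (K : Subgroup G) (hK : K.FiniteIndex) : Infinite K := by
  by_contra h
  rw [not_infinite_iff_finite] at h
  haveI := h
  haveI := hK
  haveI : Finite (G ⧸ K) := Subgroup.finite_quotient_of_finiteIndex
  haveI : Finite G := Finite.of_equiv _ (Subgroup.groupEquivQuotientProdSubgroup (s := K)).symm
  exact not_finite G



lemma cnj_inf (g : G) (B C : Subgroup G) : cnj g (B ⊓ C) = cnj g B ⊓ cnj g C := by
  ext x
  simp [mem_cnj, Subgroup.mem_inf]

lemma cnj_mono {g : G} {B C : Subgroup G} (h : B ≤ C) : cnj g B ≤ cnj g C := by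
  intro x hx
  rw [mem_cnj] at hx ⊢
  exact h hx

lemma cnj_eq_self_of_mem_normalizer {n : G} {B : Subgroup G} (hn : n ∈ Subgroup.normalizer (B : Set G)) :
    cnj n B = B := by
  ext x
  rw [mem_cnj]
  exact (Subgroup.mem_normalizer_iff''.mp hn x).symm

lemma mem_normalizer_of_cnj_eq {g : G} {B : Subgroup G} (h : cnj g B = B) :
    g ∈ Subgroup.normalizer (B : Set G) := by
  rw [Subgroup.mem_normalizer_iff'']
  intro x
  constructor
  · intro hx
    rw [← h, mem_cnj] at hx
    exact hx
  · intro hx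
    rw [← h, mem_cnj]
    exact hx

end HJIaux

open HJIaux in
/-- A just infinite group that is not virtually abelian is hereditarily just
infinite iff every maximal subgroup of finite index is just infinite. -/

theorem hereditarilyJustInfinite_iff_maximal {G : Type*} [Group G]
    (hji : JustInfinite G) (hnva : ¬ VirtuallyAbelian G) :
    (∀ K : Subgroup G, K.FiniteIndex → JustInfinite K) ↔
      ∀ M : Subgroup G, IsCoatom M → M.FiniteIndex → JustInfinite M := by
  constructor
  · intro h M _ hMfi
    exact h M hMfi
  · intro hmax K hKfi
    haveI : Infinite G := hji.1
    refine ⟨infinite_subgroup K hKfi, residuallyFinite_subgroup hji.2.1 K, ?_⟩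
    intro P hPnormal hPbot
    by_contra hPfi
    have hPidx : P.index = 0 := by
      by_contra h0
      exact hPfi ⟨h0⟩
    -- Push P to a subgroup of G
    set P' : Subgroup G := P.map K.subtype with hP'def
    have hP'K : P' ≤ K := Subgroup.map_subtype_le P
    have hP'ne : P' ≠ ⊥ := by
      intro h
      apply hPbot
      rw [Subgroup.map_eq_bot_iff, Subgroup.ker_subtype, le_bot_iff] at h
      exact h
    have hP'sub : P'.subgroupOf K = P :=
      Subgroup.comap_map_eq_self_of_injective K.subtype_injective P
    have hP'idx : P'.index = 0 := by
      have := Subgroup.relIndex_mul_index hP'K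
      rw [Subgroup.relIndex, hP'sub, hPidx, zero_mul] at this
      exact this.symm
    have hP'n : ∀ k ∈ K, ∀ x ∈ P', k * x * k⁻¹ ∈ P' := by
      rintro k hk x ⟨p, hp, rfl⟩
      have := hPnormal.conj_mem p hp ⟨k, hk⟩
      exact ⟨_, this, rfl⟩
    -- the normal core
    set H : Subgroup G := K.normalCore with hHdef
    have hH : H.Normal := Subgroup.normalCore_normal K
    haveI := hKfi
    have hHfi : H.FiniteIndex := Subgroup.finiteIndex_normalCore K
    have hHK : H ≤ K := Subgroup.normalCore_le K
    have hHn : ∀ k ∈ K, ∀ x ∈ H, k * x * k⁻¹ ∈ H := fun k _ x hx => hH.conj_mem x hx k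
    -- Q₀
    set Q₀ : Subgroup G := P' ⊓ H with hQ₀def
    have hQ₀ne : Q₀ ≠ ⊥ := by
      intro hbot
      apply hnva
      have hcomm := commute_of_disjoint hP'K hHK hP'n hHn hbot
      exact lemA hji hH hHfi (ne_bot_of_le hP'ne (le_centralizer_of_commute hcomm))
    have hQ₀idx : Q₀.index = 0 := by
      have := Subgroup.index_dvd_of_le (inf_le_left : Q₀ ≤ P')
      rw [hP'idx] at this
      exact zero_dvd_iff.mp this
    have hQ₀K : ∀ k ∈ K, ∀ x ∈ Q₀, k * x * k⁻¹ ∈ Q₀ := by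
      rintro k hk x ⟨hx1, hx2⟩
      exact ⟨hP'n k hk x hx1, hHn k hk x hx2⟩
    have hQ₀H : Q₀ ≤ H := inf_le_right
    have hQ₀nH : ∀ h ∈ H, ∀ x ∈ Q₀, h * x * h⁻¹ ∈ Q₀ := fun h hh => hQ₀K h (hHK hh)
    -- the set of conjugates of Q₀ is finite
    have hKnorm : K ≤ Subgroup.normalizer (Q₀ : Set G) := by
      intro k hk
      rw [Subgroup.mem_normalizer_iff]
      intro x
      constructor
      · intro hx
        exact hQ₀K k hk x hx
      · intro hx
        have := hQ₀K k⁻¹ (inv_mem hk) _ hx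
        simpa [mul_assoc] using this
    have hNqfi : (Subgroup.normalizer (Q₀ : Set G)).FiniteIndex := Subgroup.finiteIndex_of_le hKnorm
    haveI := hNqfi
    haveI : Finite (G ⧸ Subgroup.normalizer (Q₀ : Set G)) := Subgroup.finite_quotient_of_finiteIndex
    set 𝒞 : Set (Subgroup G) := Set.range (fun g : G => cnj g Q₀) with h𝒞def
    have h𝒞fin : 𝒞.Finite := by
      have : 𝒞 = Set.range (fun q : G ⧸ Subgroup.normalizer (Q₀ : Set G) =>
          Quotient.liftOn' q (fun g => cnj g Q₀) (by
            intro a b hab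
            rw [QuotientGroup.leftRel_apply] at hab
            have : cnj a (cnj (a⁻¹ * b) Q₀) = cnj a Q₀ := by
              rw [cnj_eq_self_of_mem_normalizer hab]
            rw [cnj_cnj] at this
            simp only [mul_inv_cancel_left] at this
            exact this.symm)) := by
        ext C
        constructor
        · rintro ⟨g, rfl⟩
          exact ⟨QuotientGroup.mk g, rfl⟩
        · rintro ⟨q, rfl⟩
          induction q using Quotient.inductionOn' with
          | h g => exact ⟨g, rfl⟩
      rw [this]
      exact Set.finite_range _
    have h𝒞mem : ∀ C ∈ 𝒞, C ≠ ⊥ ∧ C ≤ H ∧ C.index = 0 ∧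
        (∀ h ∈ H, ∀ x ∈ C, h * x * h⁻¹ ∈ C) := by
      rintro C ⟨g, rfl⟩
      exact ⟨cnj_ne_bot hQ₀ne, cnj_le hH hQ₀H, by rw [cnj_index]; exact hQ₀idx,
        cnj_normby hH hQ₀nH⟩
    have h𝒞conj : ∀ g : G, ∀ C ∈ 𝒞, cnj g C ∈ 𝒞 := by
      rintro g C ⟨g', rfl⟩
      exact ⟨g * g', (cnj_cnj g g' Q₀).symm⟩
    -- the finite family of intersections
    set T : Set (Subgroup G) :=
      {R | R ≠ ⊥ ∧ ∃ S : Set (Subgroup G), S ⊆ 𝒞 ∧ S.Nonempty ∧ R = sInf S} with hTdef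
    have hTfin : T.Finite := by
      apply Set.Finite.subset ((h𝒞fin.finite_subsets).image sInf)
      rintro R ⟨-, S, hS, -, rfl⟩
      exact ⟨S, hS, rfl⟩
    have hQ₀𝒞 : Q₀ ∈ 𝒞 := ⟨1, cnj_one Q₀⟩
    have hTne : T.Nonempty :=
      ⟨Q₀, hQ₀ne, {Q₀}, Set.singleton_subset_iff.mpr hQ₀𝒞, Set.singleton_nonempty _,
        (sInf_singleton).symm⟩
    obtain ⟨B, hBT, hBmin'⟩ := Set.Finite.exists_minimalFor id T hTfin hTne
    have hBmin : ∀ a' ∈ T, id a' ≤ id B → id B = id a' := fun a' ha h => le_antisymm (hBmin' ha h) h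
    simp only [id_eq] at hBmin
    obtain ⟨hBne, S₀, hS₀sub, hS₀ne, hBeq⟩ := hBT
    obtain ⟨C₀, hC₀S₀⟩ := hS₀ne
    have hBH : B ≤ H := le_trans (hBeq ▸ sInf_le hC₀S₀) (h𝒞mem C₀ (hS₀sub hC₀S₀)).2.1
    have hBidx : B.index = 0 := by
      have h1 := Subgroup.index_dvd_of_le (hBeq ▸ sInf_le hC₀S₀ : B ≤ C₀)
      rw [(h𝒞mem C₀ (hS₀sub hC₀S₀)).2.2.1] at h1
      exact zero_dvd_iff.mp h1
    have hBnH : ∀ h ∈ H, ∀ x ∈ B, h * x * h⁻¹ ∈ B := by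
      intro h hh x hx
      rw [hBeq, Subgroup.mem_sInf] at hx ⊢
      intro C hC
      exact (h𝒞mem C (hS₀sub hC)).2.2.2 h hh x (hx C hC)
    -- membership of intersections in T
    have hinfT : ∀ g : G, B ⊓ cnj g B ≠ ⊥ → B ⊓ cnj g B ∈ T := by
      intro g hne
      refine ⟨hne, S₀ ∪ (cnj g '' S₀), ?_, Set.Nonempty.inl ⟨C₀, hC₀S₀⟩, ?_⟩
      · rintro C (hC | ⟨D, hD, rfl⟩)
        · exact hS₀sub hC
        · exact h𝒞conj g D (hS₀sub hD)
      · rw [sInf_union, ← cnj_sInf, ← hBeq]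
    -- dichotomy
    have hdich : ∀ g : G, cnj g B = B ∨ B ⊓ cnj g B = ⊥ := by
      intro g
      by_cases hbot : B ⊓ cnj g B = ⊥
      · exact Or.inr hbot
      · left
        have hmem := hinfT g hbot
        have hle : B ⊓ cnj g B ≤ B := inf_le_left
        have heq := hBmin _ hmem hle
        -- heq : B = B ⊓ cnj g B, so B ≤ cnj g B
        have hBle : B ≤ cnj g B := le_trans heq.le inf_le_right
        -- then cnj g⁻¹ B ≤ B
        have hle2 : cnj g⁻¹ B ≤ B := by
          have := cnj_mono (g := g⁻¹) hBle
          rwa [cnj_cnj, inv_mul_cancel, cnj_one] at this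
        have hne2 : B ⊓ cnj g⁻¹ B ≠ ⊥ := by
          rw [inf_eq_right.mpr hle2]
          exact cnj_ne_bot hBne
        have hmem2 := hinfT g⁻¹ hne2
        have heq2 := hBmin _ hmem2 inf_le_left
        -- B = B ⊓ cnj g⁻¹ B = cnj g⁻¹ B
        have : B = cnj g⁻¹ B := heq2.trans (inf_eq_right.mpr hle2)
        have := congrArg (cnj g) this
        rwa [cnj_cnj, mul_inv_cancel, cnj_one] at this
    -- distinct conjugates of B are disjoint
    have hpair : ∀ a b : G, cnj a B ≠ cnj b B → cnj a B ⊓ cnj b B = ⊥ := by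
      intro a b hne
      have h1 : cnj a B ⊓ cnj b B = cnj a (B ⊓ cnj (a⁻¹ * b) B) := by
        rw [cnj_inf, cnj_cnj, mul_inv_cancel_left]
      rcases hdich (a⁻¹ * b) with h | h
      · exfalso
        apply hne
        have h2 := congrArg (cnj a) h
        rw [cnj_cnj, mul_inv_cancel_left] at h2
        exact h2.symm
      · rw [h1, h, cnj_bot]
    -- normalizer of B
    set N : Subgroup G := Subgroup.normalizer (B : Set G) with hNdef
    have hHN : H ≤ N := by
      intro h hh
      rw [Subgroup.mem_normalizer_iff]
      intro x
      constructor
      · intro hx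
        exact hBnH h hh x hx
      · intro hx
        have := hBnH h⁻¹ (inv_mem hh) _ hx
        simpa [mul_assoc] using this
    haveI := hHfi
    have hNfi : N.FiniteIndex := Subgroup.finiteIndex_of_le hHN
    have hNtop : N ≠ ⊤ := by
      intro h
      have hBnormal : B.Normal := Subgroup.normalizer_eq_top_iff.mp h
      exact (hji.2.2 B hBnormal hBne).index_ne_zero hBidx
    -- a maximal subgroup containing N
    haveI := hNfi
    haveI : Finite (G ⧸ N) := Subgroup.finite_quotient_of_finiteIndex
    set 𝒯 : Set (Subgroup G) := {T' | N ≤ T' ∧ T' ≠ ⊤} with h𝒯def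
    have h𝒯fin : 𝒯.Finite := by
      have key : ∀ T₁' T₂' : Subgroup G, N ≤ T₂' →
          (QuotientGroup.mk '' (T₁' : Set G) : Set (G ⧸ N)) =
            QuotientGroup.mk '' (T₂' : Set G) → T₁' ≤ T₂' := by
        intro T₁' T₂' hN2 himg t ht
        have hmem : (QuotientGroup.mk t : G ⧸ N) ∈ QuotientGroup.mk '' (T₂' : Set G) := by
          rw [← himg]
          exact ⟨t, ht, rfl⟩
        obtain ⟨t₂, ht₂, heqq⟩ := hmem
        have h3 : t₂⁻¹ * t ∈ N := (QuotientGroup.eq).mp heqq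
        have h4 : t₂ * (t₂⁻¹ * t) ∈ T₂' := mul_mem ht₂ (hN2 h3)
        simpa using h4
      have hinj : Set.InjOn
          (fun T' : Subgroup G => (QuotientGroup.mk '' (T' : Set G) : Set (G ⧸ N))) 𝒯 := by
        intro T₁ hT₁ T₂ hT₂ himg
        exact le_antisymm (key T₁ T₂ hT₂.1 himg) (key T₂ T₁ hT₁.1 himg.symm)
      exact Set.Finite.of_finite_image (Set.toFinite _) hinj
    have h𝒯ne : 𝒯.Nonempty := ⟨N, le_refl N, hNtop⟩
    obtain ⟨M, hM𝒯, hMmax'⟩ := Set.Finite.exists_maximalFor id 𝒯 h𝒯fin h𝒯ne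
    have hMmax : ∀ a' ∈ 𝒯, id M ≤ id a' → id M = id a' := fun a' ha h => le_antisymm h (hMmax' ha h)
    simp only [id_eq] at hMmax
    have hNM : N ≤ M := hM𝒯.1
    have hMtop : M ≠ ⊤ := hM𝒯.2
    have hMco : IsCoatom M := by
      refine ⟨hMtop, fun T' hT' => ?_⟩
      by_contra hT'top
      exact absurd (hMmax T' ⟨le_trans hNM hT'.le, hT'top⟩ hT'.le) hT'.ne
    have hMfi : M.FiniteIndex := Subgroup.finiteIndex_of_le hNM
    have hMji := hmax M hMco hMfi
    -- pick g₀ outside M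
    have hex : ¬ ∀ x : G, x ∈ M := fun hall => hMtop ((Subgroup.eq_top_iff' M).mpr hall)
    push_neg at hex
    obtain ⟨g₀, hg₀⟩ := hex
    have hBM : B ≤ M := le_trans Subgroup.le_normalizer hNM
    set B' : Subgroup G := cnj g₀ B with hB'def
    have hB'B : ∀ m ∈ M, cnj m B ≠ B' := by
      intro m hm heq
      apply hg₀
      have h2 := congrArg (cnj m⁻¹) heq
      rw [cnj_cnj, cnj_cnj, inv_mul_cancel, cnj_one] at h2
      have h3 := mem_normalizer_of_cnj_eq h2.symm
      have h4 : m * (m⁻¹ * g₀) ∈ M := mul_mem hm (hNM h3)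
      simpa using h4
    -- the normal closure of B in M
    set β : Subgroup ↥M := B.subgroupOf M with hβdef
    have hβne : β ≠ ⊥ := by
      obtain ⟨x, hxB, hxne⟩ : ∃ x ∈ B, x ≠ 1 := by
        by_contra hc
        push_neg at hc
        exact hBne (Subgroup.eq_bot_iff_forall B |>.mpr hc)
      intro hb
      have hxβ : (⟨x, hBM hxB⟩ : ↥M) ∈ β := Subgroup.mem_subgroupOf.mpr hxB
      rw [hb, Subgroup.mem_bot] at hxβ
      exact hxne (congrArg Subtype.val hxβ)
    set R : Subgroup ↥M := Subgroup.normalClosure (β : Set ↥M) with hRdef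
    have hRne : R ≠ ⊥ := ne_bot_of_le hβne Subgroup.le_normalClosure
    have hRfi : R.FiniteIndex := hMji.2.2 R Subgroup.normalClosure_normal hRne
    set W : Subgroup G := R.map M.subtype with hWdef
    have hWM : W ≤ M := Subgroup.map_subtype_le R
    have hWidx : W.index ≠ 0 := by
      have h1 := Subgroup.relIndex_mul_index hWM
      have h2 : W.subgroupOf M = R :=
        Subgroup.comap_map_eq_self_of_injective M.subtype_injective R
      rw [Subgroup.relIndex, h2] at h1
      rw [← h1]
      exact Nat.mul_ne_zero hRfi.index_ne_zero hMfi.index_ne_zero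
    have hB'H : B' ≤ H := cnj_le hH hBH
    have hB'nH : ∀ h ∈ H, ∀ x ∈ B', h * x * h⁻¹ ∈ B' := cnj_normby hH hBnH
    have hB'ne : B' ≠ ⊥ := cnj_ne_bot hBne
    -- W centralizes B'
    have hWcent : W ≤ Subgroup.centralizer (B' : Set G) := by
      have hsub : Group.conjugatesOfSet (β : Set ↥M) ⊆
          ((Subgroup.centralizer (B' : Set G)).comap M.subtype : Set ↥M) := by
        intro c hc
        obtain ⟨a, ha, hconj⟩ := Group.mem_conjugatesOfSet_iff.mp hc
        obtain ⟨m, rfl⟩ := isConj_iff.mp hconj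
        have haB : (a : G) ∈ B := Subgroup.mem_subgroupOf.mp ha
        have hmem : ((m * a * m⁻¹ : ↥M) : G) ∈ cnj (↑m) B := by
          rw [mem_cnj]
          have hcoe : ((m * a * m⁻¹ : ↥M) : G) = (m : G) * (a : G) * (m : G)⁻¹ := rfl
          rw [hcoe]
          have he : (↑m)⁻¹ * ((m : G) * ↑a * (↑m)⁻¹) * ↑m = (a : G) := by group
          rw [he]
          exact haB
        have hdisj : cnj (↑m) B ⊓ B' = ⊥ := hpair _ _ (hB'B ↑m m.2)
        have hcomm := commute_of_disjoint (cnj_le hH hBH) hB'H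
          (cnj_normby hH hBnH) hB'nH hdisj
        show M.subtype (m * a * m⁻¹) ∈ Subgroup.centralizer (B' : Set G)
        rw [Subgroup.mem_centralizer_iff]
        intro y hy
        exact (hcomm _ hmem y hy).symm
      have hle : R ≤ (Subgroup.centralizer (B' : Set G)).comap M.subtype :=
        (Subgroup.closure_le _).mpr hsub
      rintro w ⟨r, hr, rfl⟩
      exact hle hr
    have hWfi : W.FiniteIndex := ⟨hWidx⟩
    haveI := hWfi
    have hcentfi : (Subgroup.centralizer (B' : Set G)).FiniteIndex :=
      Subgroup.finiteIndex_of_le hWcent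
    -- final case analysis
    by_cases hz : B' ⊓ Subgroup.centralizer (B' : Set G) = ⊥
    · apply hnva
      haveI := hcentfi
      set C₁ : Subgroup G := (Subgroup.centralizer (B' : Set G)).normalCore ⊓ H with hC₁def
      have hC₁normal : C₁.Normal := Subgroup.normal_inf_normal _ _
      have hC₁fi : C₁.FiniteIndex := by infer_instance
      have hC₁H : C₁ ≤ H := inf_le_right
      have hC₁cent : C₁ ≤ Subgroup.centralizer (B' : Set G) :=
        le_trans inf_le_left (Subgroup.normalCore_le _)
      have hdisj : B' ⊓ C₁ = ⊥ := by
        rw [← le_bot_iff, ← hz]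
        exact inf_le_inf_left B' hC₁cent
      have hcomm := commute_of_disjoint hB'H hC₁H hB'nH
        (fun h _ x hx => hC₁normal.conj_mem x hx h) hdisj
      exact lemA hji hC₁normal hC₁fi (ne_bot_of_le hB'ne (le_centralizer_of_commute hcomm))
    · apply hnva
      set A : Subgroup G := B' ⊓ Subgroup.centralizer (B' : Set G) with hAdef
      have hAH : A ≤ H := le_trans inf_le_left hB'H
      have hAn : ∀ h ∈ H, ∀ x ∈ A, h * x * h⁻¹ ∈ A := by
        rintro h hh x ⟨hx1, hx2⟩
        refine ⟨hB'nH h hh x hx1, ?_⟩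
        show h * x * h⁻¹ ∈ Subgroup.centralizer (B' : Set G)
        rw [Subgroup.mem_centralizer_iff]
        intro y hy
        have hy' : h⁻¹ * y * h ∈ B' := by
          have := hB'nH h⁻¹ (inv_mem hh) y hy
          simpa [mul_assoc] using this
        have hx2' := Subgroup.mem_centralizer_iff.mp hx2 _ hy'
        have e1 : y * (h * x * h⁻¹) = h * (h⁻¹ * y * h * x) * h⁻¹ := by group
        have e2 : h * x * h⁻¹ * y = h * (x * (h⁻¹ * y * h)) * h⁻¹ := by group
        rw [e1, e2, hx2']
      have hsubset : (A : Set G) ⊆ (B' : Set G) := by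
        intro x hx
        exact hx.1
      have hcentA : Subgroup.centralizer (B' : Set G) ≤ Subgroup.centralizer (A : Set G) :=
        Subgroup.centralizer_le hsubset
      exact lemB hji hH hHfi hz hAH hAn
        (Subgroup.finiteIndex_of_le (le_trans hWcent hcentA))
end

section
/- Let G be a finite group acting faithfully and primitively on a finite set Ω, and let H be a normal subgroup of G. Then the Frattini subgroup Φ(H) of H is trivial. -/
open Subgroup MulAction

/-- If a finite group G acts faithfully and primitively on a finite set Ω,
then every normal subgroup H of G has trivial Frattini subgroup. -/
theorem frattini_eq_bot_of_primitive {G Ω : Type*} [Group G] [Finite G]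
    [Finite Ω] [MulAction G Ω] [FaithfulSMul G Ω]
    (htrans : MulAction.IsPretransitive G Ω)
    (hprim : ∀ ω : Ω, IsCoatom (MulAction.stabilizer G ω))
    (H : Subgroup G) (hH : H.Normal) :
    sInf {M : Subgroup H | IsCoatom M} = ⊥ := by
  have key : sInf {M : Subgroup H | IsCoatom M} = frattini H := by
    rw [frattini, Order.radical, sInf_eq_iInf]
  rw [key]
  by_contra hne
  -- the image of the Frattini subgroup in G
  set N : Subgroup G := (frattini H).map H.subtype with hN
  have hNnormal : N.Normal := by haveI := hH; exact ConjAct.normal_of_characteristic_of_normal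
  have hNbot : N ≠ ⊥ := by
    intro h
    apply hne
    rwa [Subgroup.map_eq_bot_iff_of_injective _ H.subtype_injective] at h
  -- N is not contained in every stabilizer
  obtain ⟨ω1, hω1⟩ : ∃ ω1 : Ω, ¬ N ≤ stabilizer G ω1 := by
    by_contra hcon
    push_neg at hcon
    apply hNbot
    rw [eq_bot_iff]
    intro n hn
    have : ∀ ω : Ω, n • ω = (1 : G) • ω := by
      intro ω
      rw [one_smul]
      exact hcon ω hn
    rw [Subgroup.mem_bot]
    exact eq_of_smul_eq_smul this
  -- hence N ⊔ stabilizer = ⊤ and N acts transitively from ω1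
  have hsup : N ⊔ stabilizer G ω1 = ⊤ := by
    exact (hprim ω1).2 _ (right_lt_sup.mpr hω1)
  have horb : ∀ ω : Ω, ∃ n ∈ N, n • ω1 = ω := by
    intro ω
    obtain ⟨g, hg⟩ := htrans.exists_smul_eq ω1 ω
    have hg' : g ∈ ((N ⊔ stabilizer G ω1 : Subgroup G) : Set G) := by
      rw [hsup]; trivial
    rw [Subgroup.normal_mul] at hg'
    obtain ⟨n, hn, s, hs, rfl⟩ := hg'
    refine ⟨n, hn, ?_⟩
    have hg2 : (n * s) • ω1 = ω := hg
    rw [mul_smul, hs] at hg2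
    exact hg2
  -- N-transitivity between arbitrary points
  have htransN : ∀ ω ω' : Ω, ∃ n ∈ N, n • ω = ω' := by
    intro ω ω'
    obtain ⟨n, hn, hne⟩ := horb ω
    obtain ⟨m, hm, hme⟩ := horb ω'
    exact ⟨m * n⁻¹, mul_mem hm (inv_mem hn), by
      rw [mul_smul, ← hne, inv_smul_smul, hme]⟩
  -- Ω is nonempty (N nontrivial needs it? rather: derive stabilizers are ⊤)
  have hstab : ∀ ω : Ω, (stabilizer G ω).comap H.subtype = (⊤ : Subgroup H) := by
    intro ω
    apply frattini_nongenerating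
    rw [sup_comm, eq_top_iff]
    rintro h -
    obtain ⟨n, hn, hne⟩ := htransN ω ((h : G) • ω)
    rw [hN, Subgroup.mem_map] at hn
    obtain ⟨n', hn', rfl⟩ := hn
    have hk : n'⁻¹ * h ∈ (stabilizer G ω).comap H.subtype := by
      rw [Subgroup.mem_comap, mem_stabilizer_iff]
      have hne' : (n' : G) • ω = (h : G) • ω := hne
      show ((n' : G)⁻¹ * (h : G)) • ω = ω
      rw [mul_smul, ← hne', inv_smul_smul]
    have : h = n' * (n'⁻¹ * h) := by group
    rw [this]
    exact mul_mem (mem_sup_left hn') (mem_sup_right hk)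
  -- hence H acts trivially, so H = ⊥ by faithfulness, contradiction
  have hHbot : ∀ h : H, h = 1 := by
    intro h
    have : ∀ ω : Ω, (h : G) • ω = (1 : G) • ω := by
      intro ω
      rw [one_smul]
      have := hstab ω ▸ Subgroup.mem_top h
      rw [Subgroup.mem_comap, mem_stabilizer_iff] at this
      exact this
    ext
    exact eq_of_smul_eq_smul this
  apply hne
  have : Subsingleton H := ⟨fun a b => by rw [hHbot a, hHbot b]⟩
  exact Subsingleton.elim _ _
end
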